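/- arXiv:1810.01634 — 10 statements merged into one kernel-verified Lean document; each statement's English description precedes it below -/
import Mathlib

section
/- Let a, b, c be elements of ℤ[α] with integer coefficient vectors (a_0,…,a_{m−1}), (b_0,…,b_{m−1}), (c_0,…,c_{m−1}) such that c = a·b, i.e. Σ_{l=0}^{m−1} c_l α^l = (Σ_{i=0}^{m−1} a_i α^i)·(Σ_{j=0}^{m−1} b_j α^j). Then opc(a·b) ≤ m(1+‖f‖_∞)^{m−1}·opc(a)·opc(b), i.e. max_l |c_l| ≤ m(1+‖f‖_∞)^{m−1}·(max_i |a_i|)·(max_j |b_j|). -/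
open Polynomial Finset

/-- `opc a` is the maximum of the absolute values of the integer coefficients of
an element of `ℤ[α]` represented by its coefficient vector `a`. -/
def opc {m : ℕ} (a : Fin m → ℤ) : ℤ :=
  ((Finset.univ.sup fun i => (a i).natAbs : ℕ) : ℤ)

/-- `fninf m f = ‖f‖_∞`, the maximum absolute value of the coefficients
`f_0, …, f_{m-1}` of `f`. -/
def fninf (m : ℕ) (f : Polynomial ℤ) : ℤ :=
  ((Finset.univ.sup fun i : Fin m => (f.coeff (i : ℕ)).natAbs : ℕ) : ℤ)

/-- The reduction sequence: `redSeq m f A j` represents `α^j * A` reduced mod `f`. -/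
noncomputable def redSeq (m : ℕ) (f A : Polynomial ℤ) : ℕ → Polynomial ℤ
  | 0 => A
  | (j+1) => redSeq m f A j * Polynomial.X
      - Polynomial.C ((redSeq m f A j).coeff (m-1)) * f

lemma redSeq_spec (m : ℕ) (hm : 1 ≤ m) (f : Polynomial ℤ)
    (hmonic : f.Monic) (hdeg : f.natDegree = m)
    (α : ℝ) (hroot : Polynomial.aeval α f = 0)
    (F : ℤ) (hF0 : 0 ≤ F) (hF : ∀ i, i < m → |f.coeff i| ≤ F)
    (A : Polynomial ℤ) (K : ℤ) (hK : 0 ≤ K)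
    (hA0 : ∀ i, m ≤ i → A.coeff i = 0)
    (hAc : ∀ i, |A.coeff i| ≤ K) :
    ∀ j, (∀ i, m ≤ i → (redSeq m f A j).coeff i = 0)
      ∧ (∀ i, |(redSeq m f A j).coeff i| ≤ (1+F)^j * K)
      ∧ Polynomial.aeval α (redSeq m f A j) = α ^ j * Polynomial.aeval α A := by
  intro j
  induction j with
  | zero => exact ⟨hA0, by simpa [redSeq] using hAc, by simp [redSeq]⟩
  | succ j ih =>
    obtain ⟨h0, hcoef, hev⟩ := ih
    have hfm : f.coeff m = 1 := by
      have := hmonic.coeff_natDegree; rwa [hdeg] at this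
    have hstep : redSeq m f A (j+1) = redSeq m f A j * Polynomial.X
        - Polynomial.C ((redSeq m f A j).coeff (m-1)) * f := by
      rw [redSeq]
    have hco : ∀ i : ℕ, (redSeq m f A (j+1)).coeff i
        = (redSeq m f A j * Polynomial.X).coeff i
          - (redSeq m f A j).coeff (m-1) * f.coeff i := by
      intro i; rw [hstep, coeff_sub, coeff_C_mul]
    have hP : (0:ℤ) ≤ (1+F)^j := pow_nonneg (by linarith) j
    have hKj : (0:ℤ) ≤ (1+F)^j * K := mul_nonneg hP hK
    have hKj1 : (0:ℤ) ≤ (1+F)^(j+1) * K :=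
      mul_nonneg (pow_nonneg (by linarith) _) hK
    have hgm : |(redSeq m f A j).coeff (m-1)| ≤ (1+F)^j * K := hcoef _
    have h0' : ∀ i, m ≤ i → (redSeq m f A (j+1)).coeff i = 0 := by
      intro i hi
      rcases Nat.lt_or_ge m i with hlt | hge
      · obtain ⟨k, rfl⟩ : ∃ k, i = k + 1 := ⟨i - 1, by omega⟩
        rw [hco, coeff_mul_X, h0 k (by omega),
          coeff_eq_zero_of_natDegree_lt (by omega : f.natDegree < k+1)]
        ring
      · have hi' : i = m := le_antisymm hge hi
        obtain ⟨k, hk⟩ : ∃ k, i = k + 1 := ⟨m - 1, by omega⟩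
        have hf1 : f.coeff i = 1 := by rw [hi', hfm]
        have hmk : m - 1 = k := by omega
        rw [hco, hf1, hk, coeff_mul_X, hmk, mul_one, sub_self]
    refine ⟨h0', ?_, ?_⟩
    · intro i
      rcases Nat.lt_or_ge i m with him | him
      · rw [hco]
        have hfi : |f.coeff i| ≤ F := hF i him
        cases i with
        | zero =>
          rw [Polynomial.mul_coeff_zero, Polynomial.coeff_X_zero, mul_zero,
            zero_sub, abs_neg, abs_mul]
          have h1 : |(redSeq m f A j).coeff (m-1)| * |f.coeff 0| ≤ ((1+F)^j*K) * F :=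
            mul_le_mul hgm hfi (abs_nonneg _) hKj
          have h2 : ((1+F)^j*K) * F ≤ (1+F)^(j+1) * K := by
            rw [pow_succ]; nlinarith
          linarith
        | succ k =>
          rw [coeff_mul_X]
          have h1 : |(redSeq m f A j).coeff k - (redSeq m f A j).coeff (m-1) * f.coeff (k+1)|
              ≤ |(redSeq m f A j).coeff k| + |(redSeq m f A j).coeff (m-1) * f.coeff (k+1)| :=
            abs_sub _ _
          have h2 : |(redSeq m f A j).coeff (m-1) * f.coeff (k+1)| ≤ ((1+F)^j*K) * F := by
            rw [abs_mul]; exact mul_le_mul hgm hfi (abs_nonneg _) hKj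
          have h3 := hcoef k
          have h4 : (1+F)^j*K + ((1+F)^j*K) * F = (1+F)^(j+1) * K := by
            rw [pow_succ]; ring
          linarith
      · rw [h0' i him, abs_zero]; exact hKj1
    · rw [hstep, map_sub, map_mul, map_mul, aeval_X, hroot, mul_zero, sub_zero,
        hev, pow_succ]
      ring

lemma vec_coeff (m : ℕ) (v : Fin m → ℤ) (n : ℕ) :
    (∑ i : Fin m, Polynomial.C (v i) * Polynomial.X ^ (i:ℕ)).coeff n
      = if h : n < m then v ⟨n, h⟩ else 0 := by
  rw [finset_sum_coeff]
  simp only [coeff_C_mul, coeff_X_pow, mul_ite, mul_one, mul_zero]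
  by_cases h : n < m
  · rw [dif_pos h, Finset.sum_eq_single (⟨n, h⟩ : Fin m)]
    · simp
    · intro i _ hne
      rw [if_neg]
      intro hni
      exact hne (Fin.ext hni.symm)
    · simp
  · rw [dif_neg h, Finset.sum_eq_zero]
    intro i _
    rw [if_neg]
    intro hni
    exact h (hni ▸ i.isLt)

lemma vec_aeval (m : ℕ) (v : Fin m → ℤ) (α : ℝ) :
    Polynomial.aeval α (∑ i : Fin m, Polynomial.C (v i) * Polynomial.X ^ (i:ℕ))
      = ∑ i : Fin m, (v i : ℝ) * α ^ (i:ℕ) := by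
  rw [map_sum]
  apply Finset.sum_congr rfl
  intro i _
  rw [map_mul, map_pow, aeval_X, aeval_C]
  simp

lemma poly_eq_zero (m : ℕ) (f : Polynomial ℤ) (hmonic : f.Monic) (hdeg : f.natDegree = m)
    (hirr : Irreducible (f.map (Int.castRingHom ℚ)))
    (α : ℝ) (hroot : Polynomial.aeval α f = 0)
    (D : Polynomial ℤ) (hD : D.degree < (m : WithBot ℕ))
    (h0 : Polynomial.aeval α D = 0) : D = 0 := by
  by_contra hne
  have hQmonic : (f.map (Int.castRingHom ℚ)).Monic := hmonic.map _
  have hfQ0 : Polynomial.aeval α (f.map (Int.castRingHom ℚ)) = 0 := by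
    rw [← algebraMap_int_eq, aeval_map_algebraMap]; exact hroot
  have hDQ : D.map (Int.castRingHom ℚ) ≠ 0 := by
    intro h
    exact hne (Polynomial.map_injective _ Int.cast_injective (by simpa using h))
  have hDQ0 : Polynomial.aeval α (D.map (Int.castRingHom ℚ)) = 0 := by
    rw [← algebraMap_int_eq, aeval_map_algebraMap]; exact h0
  have hle := minpoly.degree_le_of_ne_zero ℚ α hDQ hDQ0
  rw [← minpoly.eq_of_irreducible_of_monic hirr hfQ0 hQmonic] at hle
  have h1 : (f.map (Int.castRingHom ℚ)).degree = (m : WithBot ℕ) := by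
    rw [hmonic.degree_map, degree_eq_natDegree hmonic.ne_zero, hdeg]
  have h2 : (D.map (Int.castRingHom ℚ)).degree < (m : WithBot ℕ) :=
    lt_of_le_of_lt degree_map_le hD
  rw [h1] at hle
  exact absurd hle (not_le.mpr h2)

theorem stmt_0 (m : ℕ) (hm : 1 ≤ m) (f : Polynomial ℤ)
    (hmonic : f.Monic) (hdeg : f.natDegree = m)
    (hirr : Irreducible (f.map (Int.castRingHom ℚ)))
    (α : ℝ) (hroot : Polynomial.aeval α f = 0)
    (a b c : Fin m → ℤ)
    (hc : (∑ l, (c l : ℝ) * α ^ (l : ℕ)) =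
        (∑ i, (a i : ℝ) * α ^ (i : ℕ)) * ∑ j, (b j : ℝ) * α ^ (j : ℕ)) :
    opc c ≤ (m : ℤ) * (1 + fninf m f) ^ (m - 1) * opc a * opc b := by
  have hF0 : (0:ℤ) ≤ fninf m f := Int.natCast_nonneg _
  have hKa : (0:ℤ) ≤ opc a := Int.natCast_nonneg _
  have hKb : (0:ℤ) ≤ opc b := Int.natCast_nonneg _
  have hFb : ∀ i, i < m → |f.coeff i| ≤ fninf m f := by
    intro i hi
    have h := Finset.le_sup (f := fun i : Fin m => (f.coeff (i:ℕ)).natAbs)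
      (Finset.mem_univ (⟨i, hi⟩ : Fin m))
    simp only at h
    rw [Int.abs_eq_natAbs]
    unfold fninf
    exact_mod_cast h
  have habsa : ∀ i : Fin m, |a i| ≤ opc a := by
    intro i
    have h := Finset.le_sup (f := fun i => (a i).natAbs) (Finset.mem_univ i)
    rw [Int.abs_eq_natAbs]
    unfold opc
    exact_mod_cast h
  have habsb : ∀ i : Fin m, |b i| ≤ opc b := by
    intro i
    have h := Finset.le_sup (f := fun i => (b i).natAbs) (Finset.mem_univ i)
    rw [Int.abs_eq_natAbs]
    unfold opc
    exact_mod_cast h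
  set A : Polynomial ℤ := ∑ i : Fin m, Polynomial.C (a i) * Polynomial.X ^ (i:ℕ) with hAdef
  have hA0 : ∀ i, m ≤ i → A.coeff i = 0 := by
    intro i hi; rw [hAdef, vec_coeff, dif_neg (by omega)]
  have hAc : ∀ i, |A.coeff i| ≤ opc a := by
    intro i; rw [hAdef, vec_coeff]
    split
    · exact habsa _
    · simpa using hKa
  have spec := redSeq_spec m hm f hmonic hdeg α hroot (fninf m f) hF0 hFb A (opc a)
    hKa hA0 hAc
  set C' : Polynomial ℤ := ∑ j : Fin m, Polynomial.C (b j) * redSeq m f A (j:ℕ) with hC'def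
  have hAev : Polynomial.aeval α A = ∑ i : Fin m, (a i : ℝ) * α ^ (i : ℕ) :=
    vec_aeval m a α
  have hC'ev : Polynomial.aeval α C'
      = (∑ i, (a i:ℝ)*α^(i:ℕ)) * ∑ j, (b j:ℝ)*α^(j:ℕ) := by
    rw [hC'def, map_sum]
    calc ∑ j : Fin m, Polynomial.aeval α (Polynomial.C (b j) * redSeq m f A (j:ℕ))
        = ∑ j : Fin m, (b j:ℝ) * α^(j:ℕ) * Polynomial.aeval α A :=
          Finset.sum_congr rfl (fun j _ => by
            rw [map_mul, aeval_C, (spec (j:ℕ)).2.2]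
            simp only [eq_intCast]
            ring)
      _ = (∑ j : Fin m, (b j:ℝ) * α^(j:ℕ)) * Polynomial.aeval α A := by
          rw [Finset.sum_mul]
      _ = _ := by rw [hAev, mul_comm]
  have hDdeg : ((∑ l : Fin m, Polynomial.C (c l) * Polynomial.X ^ (l:ℕ)) - C').degree
      < (m : WithBot ℕ) := by
    rw [Polynomial.degree_lt_iff_coeff_zero]
    intro i hi
    rw [coeff_sub, vec_coeff, dif_neg (by omega), hC'def, finset_sum_coeff]
    simp only [coeff_C_mul]
    rw [Finset.sum_eq_zero (fun j _ => by rw [(spec (j:ℕ)).1 i hi, mul_zero])]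
    ring
  have hDev : Polynomial.aeval α
      ((∑ l : Fin m, Polynomial.C (c l) * Polynomial.X ^ (l:ℕ)) - C') = 0 := by
    rw [map_sub, vec_aeval, hC'ev, hc, sub_self]
  have hD0 := poly_eq_zero m f hmonic hdeg hirr α hroot _ hDdeg hDev
  have hed : (∑ l : Fin m, Polynomial.C (c l) * Polynomial.X ^ (l:ℕ)) = C' :=
    sub_eq_zero.mp hD0
  have hceq : ∀ l : Fin m, c l = C'.coeff (l:ℕ) := by
    intro l
    have h2 := congrArg (fun p => Polynomial.coeff p (l:ℕ)) hed
    rw [vec_coeff, dif_pos l.isLt] at h2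
    simpa using h2
  have hbound : ∀ l : Fin m, |c l| ≤ (m:ℤ)*(1+fninf m f)^(m-1)*opc a*opc b := by
    intro l
    rw [hceq l, hC'def, finset_sum_coeff]
    simp only [coeff_C_mul]
    calc |∑ j : Fin m, b j * (redSeq m f A (j:ℕ)).coeff (l:ℕ)|
        ≤ ∑ j : Fin m, |b j * (redSeq m f A (j:ℕ)).coeff (l:ℕ)| :=
          Finset.abs_sum_le_sum_abs _ _
      _ ≤ ∑ _j : Fin m, opc b * ((1+fninf m f)^(m-1) * opc a) := by
          apply Finset.sum_le_sum
          intro j _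
          rw [abs_mul]
          have h1 := (spec (j:ℕ)).2.1 (l:ℕ)
          have h2 : (1+fninf m f)^(j:ℕ) * opc a ≤ (1+fninf m f)^(m-1) * opc a :=
            mul_le_mul_of_nonneg_right
              (pow_le_pow_right₀ (by linarith) (by omega)) hKa
          exact mul_le_mul (habsb j) (h1.trans h2) (abs_nonneg _) hKb
      _ = (m:ℤ)*(1+fninf m f)^(m-1)*opc a*opc b := by
          rw [Finset.sum_const, Finset.card_univ, Fintype.card_fin, nsmul_eq_mul]
          ring
  have hR0 : (0:ℤ) ≤ (m:ℤ)*(1+fninf m f)^(m-1)*opc a*opc b :=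
    mul_nonneg (mul_nonneg (mul_nonneg (Int.natCast_nonneg m)
      (pow_nonneg (by linarith) _)) hKa) hKb
  show ((Finset.univ.sup fun i => (c i).natAbs : ℕ) : ℤ) ≤ _
  rw [← Int.toNat_of_nonneg hR0, Nat.cast_le]
  apply Finset.sup_le
  intro i _
  have h := hbound i
  rw [Int.abs_eq_natAbs] at h
  omega
end

section
/- Let b = g(α) be a nonzero element of ℤ[α], where g is a polynomial with integer coefficients of degree less than m, and let N(b) := ∏_β g(β), the product taken over all m complex roots β of f (the norm of b, which is a rational integer). Then |N(b)| ≤ m^{m/2}·‖f‖₂^{m−1}·opc(b)^m. -/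
open Polynomial Finset

/-- The Euclidean norm of the coefficient vector `(p_0, …, p_{d-1})` of a polynomial. -/
noncomputable def normTwo (d : ℕ) (p : Polynomial ℤ) : ℝ :=
  Real.sqrt (∑ i ∈ Finset.range d, ((p.coeff i : ℝ)) ^ 2)

/-- `opc` of the element `g(α)` of `ℤ[α]`: the maximum absolute value of the
coefficients `g_0, …, g_{m-1}` of `g` (here `deg g < m`). -/
def opcPoly (m : ℕ) (g : Polynomial ℤ) : ℤ :=
  ((Finset.univ.sup fun i : Fin m => (g.coeff (i : ℕ)).natAbs : ℕ) : ℤ)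

/-- **Hadamard's inequality** for complex matrices, rows version. -/
lemma hadamard_ineq {N : ℕ} (A : Matrix (Fin N) (Fin N) ℂ) :
    ‖A.det‖ ≤ ∏ i, Real.sqrt (∑ j, ‖A i j‖ ^ 2) := by
  classical
  set v : Fin N → EuclideanSpace ℂ (Fin N) := fun i => (WithLp.equiv 2 (Fin N → ℂ)).symm (A i) with hv
  have hcard : Module.finrank ℂ (EuclideanSpace ℂ (Fin N)) = Fintype.card (Fin N) := by
    simp [finrank_euclideanSpace_fin]
  have iw : WellFoundedLT (Fin N) := inferInstance
  set b : OrthonormalBasis (Fin N) ℂ (EuclideanSpace ℂ (Fin N)) :=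
    InnerProductSpace.gramSchmidtOrthonormalBasis hcard v with hb
  have hdet : b.toBasis.det v = ∏ i, (inner ℂ (b i) (v i) : ℂ) :=
    InnerProductSpace.gramSchmidtOrthonormalBasis_det hcard v
  set std := EuclideanSpace.basisFun (Fin N) ℂ with hstd
  have h1 : std.toBasis.det v = A.det := by
    rw [Module.Basis.det_apply, ← Matrix.det_transpose]
    congr 1
  have h2 : std.toBasis.toMatrix b.toBasis * b.toBasis.toMatrix v
      = std.toBasis.toMatrix v := Module.Basis.toMatrix_mul_toMatrix _ _ _
  have h3 : ‖A.det‖ = ‖(std.toBasis.toMatrix b.toBasis).det‖ * ‖(b.toBasis.toMatrix v).det‖ := by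
    rw [← h1, Module.Basis.det_apply, ← h2, Matrix.det_mul, norm_mul]
  have h4 : ‖(std.toBasis.toMatrix b.toBasis).det‖ = 1 := by
    have := std.det_to_matrix_orthonormalBasis b
    rwa [Module.Basis.det_apply] at this
  have h5 : ‖(b.toBasis.toMatrix v).det‖ = ‖∏ i, (inner ℂ (b i) (v i) : ℂ)‖ := by
    rw [← Module.Basis.det_apply, hdet]
  have h6 : ‖∏ i, (inner ℂ (b i) (v i) : ℂ)‖ ≤ ∏ i, ‖v i‖ := by
    rw [norm_prod]
    apply Finset.prod_le_prod (fun _ _ => norm_nonneg _)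
    intro i _
    calc ‖(inner ℂ (b i) (v i) : ℂ)‖ ≤ ‖b i‖ * ‖v i‖ := norm_inner_le_norm _ _
      _ = ‖v i‖ := by rw [b.orthonormal.1 i, one_mul]
  have h7 : ∀ i, ‖v i‖ = Real.sqrt (∑ j, ‖A i j‖ ^ 2) := by
    intro i
    rw [EuclideanSpace.norm_eq]
    rfl
  calc ‖A.det‖ = ‖A.det‖ := rfl
    _ = ‖∏ i, (inner ℂ (b i) (v i) : ℂ)‖ := by rw [h3, h4, one_mul, h5]
    _ ≤ ∏ i, ‖v i‖ := h6
    _ = ∏ i, Real.sqrt (∑ j, ‖A i j‖ ^ 2) := by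
        exact Finset.prod_congr rfl (fun i _ => h7 i)

lemma abs_det_submatrix {ι κ : Type*} [DecidableEq ι] [DecidableEq κ] [Fintype ι] [Fintype κ]
    (M : Matrix κ κ ℂ) (ρ σ : ι ≃ κ) :
    ‖(M.submatrix ρ σ).det‖ = ‖M.det‖ := by
  have h : M.submatrix ⇑ρ ⇑σ = (M.submatrix σ σ).submatrix ⇑(ρ.trans σ.symm) id := by
    ext i j
    simp [Matrix.submatrix_apply]
  rw [h, Matrix.det_permute, norm_mul, Matrix.det_submatrix_equiv_self]
  rcases Int.units_eq_one_or (Equiv.Perm.sign (ρ.trans σ.symm)) with h1 | h1 <;>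
    rw [h1] <;> simp

lemma eval_fin_sum {N : ℕ} (q : Polynomial ℤ) (hq : q.natDegree < N) (z : ℂ) :
    ∑ k : Fin N, (q.coeff (k : ℕ) : ℂ) * z ^ (k : ℕ)
      = (q.map (Int.castRingHom ℂ)).eval z := by
  rw [Fin.sum_univ_eq_sum_range (fun k => (q.coeff k : ℂ) * z ^ k) N]
  rw [Polynomial.eval_eq_sum_range' (lt_of_le_of_lt Polynomial.natDegree_map_le hq)]
  apply Finset.sum_congr rfl
  intro k _
  rw [Polynomial.coeff_map]
  rfl

lemma row_sum_eq {N d i : ℕ} (q : Polynomial ℤ) (hqd : q.natDegree < d) (hiN : i + d ≤ N) :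
    ∑ k : Fin N, ((q * Polynomial.X ^ i).coeff (k : ℕ) : ℝ) ^ 2
      = ∑ l ∈ Finset.range d, (q.coeff l : ℝ) ^ 2 := by
  calc ∑ k : Fin N, ((q * Polynomial.X ^ i).coeff (k : ℕ) : ℝ) ^ 2
      = ∑ k ∈ range N, ((q * Polynomial.X ^ i).coeff k : ℝ) ^ 2 :=
        Fin.sum_univ_eq_sum_range (fun k => ((q * Polynomial.X ^ i).coeff k : ℝ) ^ 2) N
    _
      = ∑ k ∈ range N, (if i ≤ k then (q.coeff (k - i) : ℝ) ^ 2 else 0) := by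
        apply Finset.sum_congr rfl
        intro k _
        rw [Polynomial.coeff_mul_X_pow']
        split <;> simp
    _ = ∑ k ∈ Finset.filter (fun k => i ≤ k) (range N), (q.coeff (k - i) : ℝ) ^ 2 := by
        rw [Finset.sum_filter]
    _ = ∑ k ∈ Finset.Ico i N, (q.coeff (k - i) : ℝ) ^ 2 := by
        congr 1
        ext k
        simp only [Finset.mem_filter, Finset.mem_range, Finset.mem_Ico]
        omega
    _ = ∑ l ∈ range (N - i), (q.coeff (i + l - i) : ℝ) ^ 2 :=
        Finset.sum_Ico_eq_sum_range (fun k => (q.coeff (k - i) : ℝ) ^ 2) i N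
    _ = ∑ l ∈ range (N - i), (q.coeff l : ℝ) ^ 2 := by
        apply Finset.sum_congr rfl; intro l _
        rw [show i + l - i = l by omega]
    _ = ∑ l ∈ range d, (q.coeff l : ℝ) ^ 2 := by
        symm
        apply Finset.sum_subset (Finset.range_subset_range.mpr (by omega))
        intro x _ hx
        rw [Polynomial.coeff_eq_zero_of_natDegree_lt (by simp only [Finset.mem_range] at hx ⊢; omega)]
        simp

lemma key_bound (m : ℕ) (hm : 1 ≤ m) (f g : Polynomial ℤ)
    (hmonic : f.Monic) (hdeg : f.natDegree = m) (hg : g.degree < (m : ℕ))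
    (β : Fin m → ℂ) (hβ : Function.Injective β)
    (hroot : ∀ j, (f.map (Int.castRingHom ℂ)).eval (β j) = 0) :
    ‖∏ j, (g.map (Int.castRingHom ℂ)).eval (β j)‖ ≤
      Real.sqrt m ^ m * normTwo (m + 1) f ^ (m - 1) * ((opcPoly m g : ℤ) : ℝ) ^ m := by
  classical
  set n := m - 1 with hn
  have hgnat : g.natDegree < m := by
    by_cases h0 : g = 0
    · simpa [h0] using Nat.lt_of_lt_of_le Nat.zero_lt_one hm
    · exact (Polynomial.natDegree_lt_iff_degree_lt h0).mpr hg
  set q : Fin n ⊕ Fin m → Polynomial ℤ :=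
    Sum.elim (fun i => f * Polynomial.X ^ (i : ℕ)) (fun j => g * Polynomial.X ^ (j : ℕ)) with hq
  have hqdeg : ∀ r, (q r).natDegree < n + m := by
    rintro (i | j)
    · refine lt_of_le_of_lt Polynomial.natDegree_mul_le ?_
      rw [hdeg, Polynomial.natDegree_X_pow]
      have := i.isLt; omega
    · refine lt_of_le_of_lt Polynomial.natDegree_mul_le ?_
      rw [Polynomial.natDegree_X_pow]
      have := j.isLt; omega
  set S : Matrix (Fin n ⊕ Fin m) (Fin (n + m)) ℂ :=
    Matrix.of (fun r k => ((q r).coeff (k : ℕ) : ℂ)) with hS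
  set Xm : Matrix (Fin (n + m)) (Fin n ⊕ Fin m) ℂ :=
    Matrix.of (fun k c => Sum.elim
      (fun i : Fin n => if (k : ℕ) = m + i then (1 : ℂ) else 0)
      (fun j : Fin m => β j ^ (k : ℕ)) c) with hXm
  set gC := g.map (Int.castRingHom ℂ) with hgC
  set T : Matrix (Fin n) (Fin n) ℂ :=
    Matrix.of (fun i i' => (f.coeff (m + i' - i) : ℂ)) with hT
  set B : Matrix (Fin m) (Fin n) ℂ :=
    Matrix.of (fun j' i' => ((g * Polynomial.X ^ (j' : ℕ)).coeff (m + i') : ℂ)) with hB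
  set C : Matrix (Fin m) (Fin m) ℂ :=
    Matrix.of (fun j' j => β j ^ (j' : ℕ) * gC.eval (β j)) with hC
  -- column sums
  have colsum : ∀ (r : Fin n ⊕ Fin m) (i' : Fin n),
      (S * Xm) r (Sum.inl i') = ((q r).coeff (m + i') : ℂ) := by
    intro r i'
    have hK : m + (i' : ℕ) < n + m := by have := i'.isLt; omega
    rw [Matrix.mul_apply]
    calc ∑ k, S r k * Xm k (Sum.inl i')
        = ∑ k : Fin (n + m), (if k = (⟨m + i', hK⟩ : Fin (n + m))
            then ((q r).coeff (k : ℕ) : ℂ) else 0) := by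
          apply Finset.sum_congr rfl
          intro k _
          simp only [hS, hXm, Matrix.of_apply, Sum.elim_inl]
          by_cases hk : (k : ℕ) = m + (i' : ℕ)
          · rw [if_pos hk, if_pos (Fin.eq_of_val_eq hk), mul_one]
          · rw [if_neg hk, if_neg (fun h => hk (by rw [h])), mul_zero]
      _ = ((q r).coeff (m + i') : ℂ) := by
          rw [Finset.sum_ite_eq' Finset.univ (⟨m + i', hK⟩ : Fin (n + m))
            (fun k => ((q r).coeff (k : ℕ) : ℂ))]
          simp
  have rootsum : ∀ (r : Fin n ⊕ Fin m) (j : Fin m),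
      (S * Xm) r (Sum.inr j) = ((q r).map (Int.castRingHom ℂ)).eval (β j) := by
    intro r j
    rw [Matrix.mul_apply, ← eval_fin_sum (q r) (hqdeg r) (β j)]
    apply Finset.sum_congr rfl
    intro k _
    simp only [hS, hXm, Matrix.of_apply, Sum.elim_inr]
  have hprod : S * Xm = Matrix.fromBlocks T 0 B C := by
    ext r c
    rcases r with i | j' <;> rcases c with i' | j
    · rw [colsum, Matrix.fromBlocks_apply₁₁]
      simp only [hq, Sum.elim_inl, hT, Matrix.of_apply]
      rw [Polynomial.coeff_mul_X_pow', if_pos (by omega : (i : ℕ) ≤ m + (i' : ℕ))]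
    · rw [rootsum, Matrix.fromBlocks_apply₁₂]
      simp only [hq, Sum.elim_inl, Polynomial.map_mul, Polynomial.map_pow, Polynomial.map_X]
      rw [Polynomial.eval_mul, hroot j, zero_mul, Matrix.zero_apply]
    · rw [colsum, Matrix.fromBlocks_apply₂₁]
      simp only [hq, Sum.elim_inr, hB, Matrix.of_apply]
    · rw [rootsum, Matrix.fromBlocks_apply₂₂]
      simp only [hq, Sum.elim_inr, Polynomial.map_mul, Polynomial.map_pow, Polynomial.map_X,
        hC, Matrix.of_apply, hgC]
      rw [Polynomial.eval_mul, Polynomial.eval_pow, Polynomial.eval_X, mul_comm]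
  -- determinant of T
  have hTdet : T.det = 1 := by
    have hTtri : T.BlockTriangular OrderDual.toDual := by
      intro a b hab
      have hab' : a < b := hab
      simp only [hT, Matrix.of_apply]
      rw [Polynomial.coeff_eq_zero_of_natDegree_lt (by rw [hdeg]; have := Fin.lt_iff_val_lt_val.mp hab'; omega)]
      simp
    rw [Matrix.det_of_lowerTriangular T hTtri]
    have : ∀ i : Fin n, T i i = 1 := by
      intro i
      simp only [hT, Matrix.of_apply]
      rw [show m + (i : ℕ) - (i : ℕ) = m by omega, ← hdeg, hmonic.coeff_natDegree]
      simp
    rw [Finset.prod_congr rfl (fun i _ => this i), Finset.prod_const_one]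
  have hCdet : C.det = (Matrix.vandermonde β).det * ∏ j, gC.eval (β j) := by
    have hfac : C = (Matrix.vandermonde β).transpose * Matrix.diagonal (fun j => gC.eval (β j)) := by
      ext j' j
      rw [Matrix.mul_diagonal]
      simp [hC, Matrix.vandermonde, mul_comm]
    rw [hfac, Matrix.det_mul, Matrix.det_transpose, Matrix.det_diagonal]
  set eR : (Fin n ⊕ Fin m) ≃ Fin (n + m) := finSumFinEquiv with heR
  set SD := S.submatrix ⇑eR.symm id with hSD
  set XD := Xm.submatrix id ⇑eR.symm with hXD
  have hsplit : SD * XD = (S * Xm).submatrix ⇑eR.symm ⇑eR.symm := by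
    have h := Matrix.submatrix_mul_equiv S Xm (⇑eR.symm) (Equiv.refl (Fin (n + m))) (⇑eR.symm)
    simpa [hSD, hXD] using h
  have hdets : SD.det * XD.det = T.det * C.det := by
    rw [← Matrix.det_mul, hsplit, Matrix.det_submatrix_equiv_self, hprod,
      Matrix.det_fromBlocks_zero₁₂]
  -- |det XD| = |det vandermonde|
  have hXDdet : ‖XD.det‖ = ‖(Matrix.vandermonde β).det‖ := by
    set ρ : (Fin m ⊕ Fin n) ≃ Fin (n + m) := finSumFinEquiv.trans (finCongr (by omega)) with hρ
    have hρl : ∀ k : Fin m, ((ρ (Sum.inl k)) : ℕ) = (k : ℕ) := by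
      intro k; simp [hρ, finSumFinEquiv_apply_left]
    have hρr : ∀ k : Fin n, ((ρ (Sum.inr k)) : ℕ) = m + (k : ℕ) := by
      intro k; simp [hρ, finSumFinEquiv_apply_right]; omega
    set Y : Matrix (Fin m ⊕ Fin n) (Fin m ⊕ Fin n) ℂ :=
      Xm.submatrix ⇑ρ ⇑(Equiv.sumComm (Fin m) (Fin n)) with hYdef
    have hXDY : XD = Y.submatrix ⇑ρ.symm ⇑(eR.symm.trans (Equiv.sumComm (Fin n) (Fin m))) := by
      ext k c
      simp [hYdef, hXD, Matrix.submatrix_apply, Equiv.apply_symm_apply]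
    have hY : Y = Matrix.fromBlocks (Matrix.vandermonde β).transpose 0
        (Matrix.of fun (k : Fin n) (j : Fin m) => β j ^ (m + (k : ℕ))) 1 := by
      ext r c
      rcases r with k | k <;> rcases c with j | i
      · rw [Matrix.fromBlocks_apply₁₁]
        simp only [hYdef, Matrix.submatrix_apply, Equiv.sumComm_apply, Sum.swap_inl,
          hXm, Matrix.of_apply, Sum.elim_inr, hρl]
        simp [Matrix.vandermonde]
      · rw [Matrix.fromBlocks_apply₁₂]
        simp only [hYdef, Matrix.submatrix_apply, Equiv.sumComm_apply, Sum.swap_inr,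
          hXm, Matrix.of_apply, Sum.elim_inl, hρl]
        rw [if_neg (by have := k.isLt; omega), Matrix.zero_apply]
      · rw [Matrix.fromBlocks_apply₂₁]
        simp only [hYdef, Matrix.submatrix_apply, Equiv.sumComm_apply, Sum.swap_inl,
          hXm, Matrix.of_apply, Sum.elim_inr, hρr, Matrix.of_apply]
      · rw [Matrix.fromBlocks_apply₂₂]
        simp only [hYdef, Matrix.submatrix_apply, Equiv.sumComm_apply, Sum.swap_inr,
          hXm, Matrix.of_apply, Sum.elim_inl, hρr, Matrix.one_apply]
        by_cases hki : k = i
        · rw [if_pos (by rw [hki]), if_pos hki]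
        · rw [if_neg (fun h => hki (by
            apply Fin.eq_of_val_eq; omega)), if_neg hki]
    have hYdet : Y.det = (Matrix.vandermonde β).det := by
      rw [hY, Matrix.det_fromBlocks_zero₁₂, Matrix.det_transpose, Matrix.det_one, mul_one]
    rw [hXDY, abs_det_submatrix, hYdet]
  have hVne : ‖(Matrix.vandermonde β).det‖ ≠ 0 := by
    simpa using Matrix.det_vandermonde_ne_zero_iff.mpr hβ
  -- |∏ g(β j)| = |det SD|
  have habs : ‖∏ j, gC.eval (β j)‖ = ‖SD.det‖ := by
    have h2 : ‖SD.det‖ * ‖(Matrix.vandermonde β).det‖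
        = ‖∏ j, gC.eval (β j)‖ * ‖(Matrix.vandermonde β).det‖ := by
      calc ‖SD.det‖ * ‖(Matrix.vandermonde β).det‖
          = ‖SD.det‖ * ‖XD.det‖ := by rw [hXDdet]
        _ = ‖SD.det * XD.det‖ := (norm_mul _ _).symm
        _ = ‖T.det * C.det‖ := by rw [hdets]
        _ = ‖∏ j, gC.eval (β j)‖ * ‖(Matrix.vandermonde β).det‖ := by
            rw [hTdet, one_mul, hCdet, norm_mul, mul_comm]
    exact (mul_right_cancel₀ hVne h2).symm
  -- Hadamard bound
  set G : Fin n ⊕ Fin m → ℝ :=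
    fun r => Real.sqrt (∑ k : Fin (n + m), ‖S r k‖ ^ 2) with hG
  have hHad : ‖SD.det‖ ≤ ∏ r : Fin n ⊕ Fin m, G r := by
    calc ‖SD.det‖ ≤ ∏ i, Real.sqrt (∑ j, ‖SD i j‖ ^ 2) :=
          hadamard_ineq SD
      _ = ∏ i : Fin (n + m), G (eR.symm i) := by
          apply Finset.prod_congr rfl
          intro i _
          rfl
      _ = ∏ r : Fin n ⊕ Fin m, G r := Equiv.prod_comp eR.symm G
  have habs_coeff : ∀ (p : Polynomial ℤ) (k : ℕ),
      ‖((p.coeff k : ℤ) : ℂ)‖ ^ 2 = ((p.coeff k : ℝ)) ^ 2 := by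
    intro p k
    rw [Complex.norm_intCast, sq_abs]
  set c : ℝ := ((opcPoly m g : ℤ) : ℝ) with hc
  have hc0 : (0 : ℝ) ≤ c := by
    rw [hc]
    unfold opcPoly
    positivity
  have hGf : ∀ i : Fin n, G (Sum.inl i) = normTwo (m + 1) f := by
    intro i
    rw [hG]
    simp only
    rw [show (∑ k : Fin (n + m), ‖S (Sum.inl i) k‖ ^ 2)
        = ∑ k : Fin (n + m), ((f * Polynomial.X ^ (i : ℕ)).coeff (k : ℕ) : ℝ) ^ 2 by
      apply Finset.sum_congr rfl
      intro k _
      simp only [hS, Matrix.of_apply, hq, Sum.elim_inl]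
      exact habs_coeff _ _]
    rw [row_sum_eq (d := m + 1) (N := n + m) f (by omega) (by have := i.isLt; omega)]
    rfl
  have hGg : ∀ j : Fin m, G (Sum.inr j) ≤ Real.sqrt m * c := by
    intro j
    rw [hG]
    simp only
    rw [show (∑ k : Fin (n + m), ‖S (Sum.inr j) k‖ ^ 2)
        = ∑ k : Fin (n + m), ((g * Polynomial.X ^ (j : ℕ)).coeff (k : ℕ) : ℝ) ^ 2 by
      apply Finset.sum_congr rfl
      intro k _
      simp only [hS, Matrix.of_apply, hq, Sum.elim_inr]
      exact habs_coeff _ _]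
    rw [row_sum_eq (d := m) (N := n + m) g hgnat (by have := j.isLt; omega)]
    have hsum : (∑ l ∈ Finset.range m, (g.coeff l : ℝ) ^ 2) ≤ (m : ℝ) * c ^ 2 := by
      calc (∑ l ∈ Finset.range m, (g.coeff l : ℝ) ^ 2)
          ≤ ∑ _l ∈ Finset.range m, c ^ 2 := by
            apply Finset.sum_le_sum
            intro l hl
            have hl' : l < m := Finset.mem_range.mp hl
            have hbound : |(g.coeff l : ℝ)| ≤ c := by
              rw [hc]
              unfold opcPoly
              rw [show |(g.coeff l : ℝ)| = (((g.coeff l).natAbs : ℤ) : ℝ) by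
                rw [Int.cast_natCast, Nat.cast_natAbs, Int.cast_abs]]
              have hle : (g.coeff l).natAbs
                  ≤ (Finset.univ.sup fun i : Fin m => (g.coeff (i : ℕ)).natAbs) := by
                have := Finset.le_sup (f := fun i : Fin m => (g.coeff (i : ℕ)).natAbs)
                  (Finset.mem_univ (⟨l, hl'⟩ : Fin m))
                simpa using this
              exact_mod_cast hle
            have := abs_le.mp hbound
            nlinarith [this.1, this.2]
      _ = (m : ℝ) * c ^ 2 := by
            rw [Finset.sum_const, Finset.card_range, nsmul_eq_mul]
    calc Real.sqrt (∑ l ∈ Finset.range m, (g.coeff l : ℝ) ^ 2)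
        ≤ Real.sqrt ((m : ℝ) * c ^ 2) := Real.sqrt_le_sqrt hsum
      _ = Real.sqrt m * c := by
          rw [Real.sqrt_mul (by positivity), Real.sqrt_sq hc0]
  have hfinal : (∏ r : Fin n ⊕ Fin m, G r)
      ≤ normTwo (m + 1) f ^ n * (Real.sqrt m * c) ^ m := by
    rw [Fintype.prod_sum_type]
    have h1 : (∏ i : Fin n, G (Sum.inl i)) = normTwo (m + 1) f ^ n := by
      rw [Finset.prod_congr rfl (fun i _ => hGf i), Finset.prod_const, Finset.card_univ,
        Fintype.card_fin]
    have h2 : (∏ j : Fin m, G (Sum.inr j)) ≤ (Real.sqrt m * c) ^ m := by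
      calc (∏ j : Fin m, G (Sum.inr j)) ≤ ∏ _j : Fin m, (Real.sqrt m * c) := by
            apply Finset.prod_le_prod
            · intro j _; rw [hG]; exact Real.sqrt_nonneg _
            · intro j _; exact hGg j
        _ = (Real.sqrt m * c) ^ m := by
            rw [Finset.prod_const, Finset.card_univ, Fintype.card_fin]
    rw [h1]
    have hnt : (0 : ℝ) ≤ normTwo (m + 1) f ^ n := by
      apply pow_nonneg
      exact Real.sqrt_nonneg _
    exact mul_le_mul_of_nonneg_left h2 hnt
  calc ‖∏ j, gC.eval (β j)‖ = ‖SD.det‖ := habs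
    _ ≤ ∏ r : Fin n ⊕ Fin m, G r := hHad
    _ ≤ normTwo (m + 1) f ^ n * (Real.sqrt m * c) ^ m := hfinal
    _ = Real.sqrt m ^ m * normTwo (m + 1) f ^ n * c ^ m := by
        rw [mul_pow]
        ring

theorem stmt_3 (m : ℕ) (hm : 1 ≤ m) (f : Polynomial ℤ)
    (hmonic : f.Monic) (hdeg : f.natDegree = m)
    (hirr : Irreducible (f.map (Int.castRingHom ℚ)))
    (α : ℝ) (hroot : Polynomial.aeval α f = 0)
    (g : Polynomial ℤ) (hg : g.degree < m)
    (hb : Polynomial.aeval α g ≠ 0) :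
    ‖((f.map (Int.castRingHom ℂ)).roots.map
        (fun β => Polynomial.aeval β g)).prod‖ ≤
      Real.sqrt m ^ m * normTwo (m + 1) f ^ (m - 1) * ((opcPoly m g : ℤ) : ℝ) ^ m := by
  classical
  set fC := f.map (Int.castRingHom ℂ) with hfC
  have hfCmonic : fC.Monic := hmonic.map _
  have hfC0 : fC ≠ 0 := hfCmonic.ne_zero
  have hfCdeg : fC.natDegree = m := by
    rw [hfC, hmonic.natDegree_map, hdeg]
  have hcard : Multiset.card fC.roots = m := by
    rw [← hfCdeg]
    exact (Polynomial.splits_iff_card_roots.mp (IsAlgClosed.splits fC))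
  have hsep : fC.Separable := by
    have h1 : (f.map (Int.castRingHom ℚ)).Separable := hirr.separable
    have h2 : fC = (f.map (Int.castRingHom ℚ)).map (algebraMap ℚ ℂ) := by
      rw [hfC, Polynomial.map_map]
      congr 1
    rw [h2]
    exact h1.map
  have hnodup : fC.roots.Nodup := Polynomial.nodup_roots hsep
  set s : Finset ℂ := fC.roots.toFinset with hs
  have hsval : s.val = fC.roots := Multiset.toFinset_val fC.roots ▸ Multiset.dedup_eq_self.mpr hnodup
  have hscard : s.card = m := by
    rw [Finset.card, hsval, hcard]
  set β : Fin m → ℂ := fun j => ((s.equivFin.symm (finCongr hscard.symm j)) : ℂ) with hβdef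
  have hβinj : Function.Injective β := by
    intro a b hab
    have h1 := Subtype.coe_injective hab
    have h2 := s.equivFin.symm.injective h1
    exact (finCongr hscard.symm).injective h2
  have hβroot : ∀ j, fC.eval (β j) = 0 := by
    intro j
    have hmem : β j ∈ s := (s.equivFin.symm (finCongr hscard.symm j)).prop
    rw [hs, Multiset.mem_toFinset] at hmem
    exact (Polynomial.mem_roots hfC0).mp hmem
  have halg : (Int.castRingHom ℂ) = algebraMap ℤ ℂ := Subsingleton.elim _ _
  have haeval : ∀ z : ℂ, Polynomial.aeval z g = (g.map (Int.castRingHom ℂ)).eval z := by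
    intro z
    rw [Polynomial.aeval_def, ← halg, Polynomial.eval_map]
  have hprodeq : ((fC.roots.map (fun z => Polynomial.aeval z g)).prod : ℂ)
      = ∏ j, (g.map (Int.castRingHom ℂ)).eval (β j) := by
    have h1 : fC.roots = s.val := hsval.symm
    rw [h1]
    have h2 : ((s.val.map (fun z => Polynomial.aeval z g)).prod : ℂ)
        = ∏ z ∈ s, Polynomial.aeval z g := (Finset.prod_eq_multiset_prod _ _).symm
    rw [h2]
    have h3 : (∏ z ∈ s, Polynomial.aeval z g) = ∏ x : s, Polynomial.aeval (x : ℂ) g :=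
      (Finset.prod_coe_sort s (fun z => Polynomial.aeval z g)).symm
    rw [h3]
    have h4 : ∏ j : Fin m, (g.map (Int.castRingHom ℂ)).eval (β j)
        = ∏ j : Fin m, Polynomial.aeval (β j) g := by
      exact Finset.prod_congr rfl (fun j _ => (haeval (β j)).symm)
    rw [h4, hβdef]
    exact (Equiv.prod_comp ((finCongr hscard.symm).trans s.equivFin.symm)
      (fun x : s => Polynomial.aeval (x : ℂ) g)).symm
  rw [hprodeq]
  exact key_bound m hm f g hmonic hdeg hg β hβinj hβroot
end

section
/- Let a be a nonzero element of ℤ[α]. Then |a| ≥ 1/(P_α·S_α·opc(a)^{m−1}), where S_α := 1 + |α| + |α|² + ⋯ + |α|^{m−1}, P_α := m·‖f‖₂^{m−1}·(M_α + √m)^{m−1}, and M_α := m(1+‖f‖_∞)^{m−1}. -/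
open Polynomial Finset IntermediateField Module

noncomputable def Malpha (m : ℕ) (f : Polynomial ℤ) : ℝ :=
  (m : ℝ) * (1 + (fninf m f : ℝ)) ^ (m - 1)

noncomputable def Palpha (m : ℕ) (f : Polynomial ℤ) : ℝ :=
  (m : ℝ) * normTwo (m + 1) f ^ (m - 1) * (Malpha m f + Real.sqrt m) ^ (m - 1)

noncomputable def Salpha (m : ℕ) (α : ℝ) : ℝ := ∑ k ∈ Finset.range m, |α| ^ k

set_option maxHeartbeats 1000000 in
theorem stmt_5 (m : ℕ) (hm : 1 ≤ m) (f : Polynomial ℤ)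
    (hmonic : f.Monic) (hdeg : f.natDegree = m)
    (hirr : Irreducible (f.map (Int.castRingHom ℚ)))
    (α : ℝ) (hroot : Polynomial.aeval α f = 0)
    (a : Fin m → ℤ) (ha : (∑ i, (a i : ℝ) * α ^ (i : ℕ)) ≠ 0) :
    |∑ i, (a i : ℝ) * α ^ (i : ℕ)| ≥
      1 / (Palpha m f * Salpha m α * ((opc a : ℤ) : ℝ) ^ (m - 1)) := by
  classical
  set x : ℝ := ∑ i, (a i : ℝ) * α ^ (i : ℕ) with hxdef
  -- basic facts about opc and fninf
  set B : ℝ := (fninf m f : ℝ) with hB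
  have hB0 : 0 ≤ B := by rw [hB]; unfold fninf; positivity
  have hcoeffB : ∀ i < m, |(f.coeff i : ℝ)| ≤ B := by
    intro i hi
    rw [hB]; unfold fninf
    have : (f.coeff i).natAbs ≤ (Finset.univ.sup fun j : Fin m => (f.coeff (j : ℕ)).natAbs) :=
      Finset.le_sup (f := fun j : Fin m => (f.coeff (j : ℕ)).natAbs) (Finset.mem_univ ⟨i, hi⟩)
    have h2 : |f.coeff i| ≤ ((Finset.univ.sup fun j : Fin m => (f.coeff (j : ℕ)).natAbs : ℕ) : ℤ) := by
      rw [← Int.natCast_natAbs]; exact_mod_cast this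
    rw [← Int.cast_abs]
    exact_mod_cast h2
  have hopc1 : (1:ℤ) ≤ opc a := by
    obtain ⟨i, hi⟩ : ∃ i, a i ≠ 0 := by
      by_contra h
      push_neg at h
      apply ha; simp [hxdef, h]
    unfold opc
    have h1 : 1 ≤ (a i).natAbs := Int.natAbs_pos.mpr hi
    have h2 : (a i).natAbs ≤ (Finset.univ.sup fun j => (a j).natAbs) :=
      Finset.le_sup (f := fun j => (a j).natAbs) (Finset.mem_univ i)
    exact_mod_cast le_trans h1 h2
  have hopcle : ∀ i, |(a i : ℝ)| ≤ (opc a : ℝ) := by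
    intro i
    unfold opc
    have h1 : (a i).natAbs ≤ (Finset.univ.sup fun j => (a j).natAbs) :=
      Finset.le_sup (f := fun j => (a j).natAbs) (Finset.mem_univ i)
    have h2 : |a i| ≤ ((Finset.univ.sup fun j => (a j).natAbs : ℕ) : ℤ) := by rw [← Int.natCast_natAbs]; exact_mod_cast h1
    rw [← Int.cast_abs]
    exact_mod_cast h2
  -- minimal polynomial facts
  have hαint : IsIntegral ℤ α := ⟨f, hmonic, hroot⟩
  have hαQ : IsIntegral ℚ α := hαint.tower_top
  have hfQ0 : Polynomial.aeval α (f.map (Int.castRingHom ℚ)) = 0 := by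
    rw [show (Int.castRingHom ℚ) = algebraMap ℤ ℚ from rfl, aeval_map_algebraMap]; exact hroot
  have hminpoly : minpoly ℚ α = f.map (Int.castRingHom ℚ) :=
    (minpoly.eq_of_irreducible_of_monic hirr hfQ0 (hmonic.map _)).symm
  haveI : FiniteDimensional ℚ ℚ⟮α⟯ := IntermediateField.adjoin.finiteDimensional hαQ
  set θ : ℚ⟮α⟯ := IntermediateField.AdjoinSimple.gen ℚ α with hθ
  have hθmap : algebraMap ℚ⟮α⟯ ℝ θ = α := IntermediateField.AdjoinSimple.algebraMap_gen ℚ α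
  set y : ℚ⟮α⟯ := ∑ i, (a i : ℚ⟮α⟯) * θ ^ (i : ℕ) with hy
  have hymap : algebraMap ℚ⟮α⟯ ℝ y = x := by
    rw [hy, map_sum, hxdef]
    refine Finset.sum_congr rfl fun i _ => ?_
    rw [map_mul, map_pow, hθmap, map_intCast]
  have hy0 : y ≠ 0 := by
    intro h
    rw [h, map_zero] at hymap
    exact ha hymap.symm
  have hθf : Polynomial.aeval θ f = 0 := by
    apply (algebraMap ℚ⟮α⟯ ℝ).injective
    rw [map_zero, ← Polynomial.aeval_algebraMap_apply, hθmap, hroot]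
  have hyint : IsIntegral ℤ y := by
    rw [hy]
    refine IsIntegral.sum _ fun i _ => IsIntegral.mul ?_ (IsIntegral.pow ⟨f, hmonic, hθf⟩ _)
    simpa using (isIntegral_algebraMap : IsIntegral ℤ (algebraMap ℤ ℚ⟮α⟯ (a i)))
  -- the norm
  set N : ℚ := Algebra.norm ℚ y with hN
  have hN0 : N ≠ 0 := by
    rw [hN]
    exact (Algebra.norm_ne_zero_iff).mpr hy0
  have hNint : IsIntegral ℤ N := Algebra.isIntegral_norm ℚ hyint
  obtain ⟨z, hz⟩ := IsIntegrallyClosed.isIntegral_iff.mp hNint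
  have hz0 : z ≠ 0 := by rintro rfl; apply hN0; rw [← hz]; simp
  have hN1 : (1:ℝ) ≤ |(N:ℝ)| := by
    have : (1:ℤ) ≤ |z| := Int.one_le_abs hz0
    have hzN : (N:ℝ) = (z:ℝ) := by rw [← hz]; norm_cast
    rw [hzN, ← Int.cast_abs]
    exact_mod_cast this
  -- embeddings
  have hprod : (algebraMap ℚ ℂ) N = ∏ σ : ℚ⟮α⟯ →ₐ[ℚ] ℂ, σ y :=
    Algebra.norm_eq_prod_embeddings ℚ ℂ y
  set σ₀ : ℚ⟮α⟯ →ₐ[ℚ] ℂ := (Complex.ofRealHom.comp (algebraMap ℚ⟮α⟯ ℝ)).toRatAlgHom with hσ₀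
  have hσ₀y : σ₀ y = (x : ℂ) := by
    rw [hσ₀]
    show Complex.ofRealHom (algebraMap ℚ⟮α⟯ ℝ y) = _
    rw [hymap]; rfl
  have hcard : Fintype.card (ℚ⟮α⟯ →ₐ[ℚ] ℂ) = m := by
    rw [AlgHom.card, IntermediateField.adjoin.finrank hαQ, hminpoly,
      hmonic.natDegree_map, hdeg]
  have hB1 : (1:ℝ) ≤ 1 + B := by linarith
  -- per-embedding bound
  have hbound : ∀ σ : ℚ⟮α⟯ →ₐ[ℚ] ℂ, ‖σ y‖ ≤ (opc a : ℝ) * Malpha m f := by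
    intro σ
    have h1 : Polynomial.aeval (σ θ) f = 0 := by
      have h := Polynomial.hom_eval₂ f (algebraMap ℤ ℚ⟮α⟯) (σ : ℚ⟮α⟯ →+* ℂ) θ
      rw [← Polynomial.aeval_def, hθf, map_zero] at h
      have e : ((σ : ℚ⟮α⟯ →+* ℂ).comp (algebraMap ℤ ℚ⟮α⟯)) = algebraMap ℤ ℂ :=
        RingHom.ext_int _ _
      rw [e] at h
      rw [Polynomial.aeval_def]
      exact h.symm
    have hpne : f.map (Int.castRingHom ℂ) ≠ 0 := (hmonic.map (Int.castRingHom ℂ)).ne_zero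
    have hσθroot : (f.map (Int.castRingHom ℂ)).IsRoot (σ θ) := by
      rw [Polynomial.IsRoot.def, Polynomial.eval_map]
      exact h1
    have hlt := Polynomial.IsRoot.norm_lt_cauchyBound hpne hσθroot
    have hcble : Polynomial.cauchyBound (f.map (Int.castRingHom ℂ)) ≤ B.toNNReal + 1 := by
      unfold Polynomial.cauchyBound
      rw [(hmonic.map (Int.castRingHom ℂ)).leadingCoeff, nnnorm_one, div_one]
      apply add_le_add_left
      apply Finset.sup_le
      intro i hi
      rw [hmonic.natDegree_map, hdeg] at hi
      rw [Finset.mem_range] at hi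
      rw [← NNReal.coe_le_coe, Real.coe_toNNReal _ hB0, coe_nnnorm]
      rw [Polynomial.coeff_map]
      show ‖((f.coeff i : ℤ) : ℂ)‖ ≤ B
      rw [Complex.norm_intCast]
      exact hcoeffB i hi
    have hσθ : ‖σ θ‖ ≤ 1 + B := by
      have h2 : (‖σ θ‖₊ : ℝ) ≤ ((B.toNNReal + 1 : NNReal) : ℝ) :=
        NNReal.coe_le_coe.mpr (le_of_lt (lt_of_lt_of_le hlt hcble))
      rw [NNReal.coe_add, Real.coe_toNNReal _ hB0, NNReal.coe_one, coe_nnnorm] at h2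
      linarith
    have hσy : σ y = ∑ i, (a i : ℂ) * (σ θ) ^ (i : ℕ) := by
      rw [hy, map_sum]
      refine Finset.sum_congr rfl fun i _ => ?_
      rw [map_mul, map_pow, map_intCast]
    calc ‖σ y‖ ≤ ∑ i, ‖(a i : ℂ) * (σ θ) ^ (i : ℕ)‖ := by
          rw [hσy]; exact norm_sum_le _ _
      _ ≤ ∑ _i : Fin m, (opc a : ℝ) * (1 + B) ^ (m - 1) := by
          apply Finset.sum_le_sum
          intro i _
          rw [norm_mul, norm_pow]
          have ha1 : ‖((a i : ℂ))‖ = |(a i : ℝ)| := by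
            rw [Complex.norm_intCast]
          rw [ha1]
          have hp1 : ‖σ θ‖ ^ (i : ℕ) ≤ (1 + B) ^ (i : ℕ) :=
            pow_le_pow_left₀ (norm_nonneg _) hσθ _
          have hp2 : (1 + B) ^ (i : ℕ) ≤ (1 + B) ^ (m - 1) :=
            pow_le_pow_right₀ hB1 (Nat.le_pred_of_lt i.isLt)
          have hopcnn : (0:ℝ) ≤ (opc a : ℝ) := by
            have := hopc1; exact_mod_cast le_trans (by norm_num) this
          exact mul_le_mul (hopcle i) (le_trans hp1 hp2) (pow_nonneg (norm_nonneg _) _) hopcnn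
      _ = (opc a : ℝ) * Malpha m f := by
          rw [Finset.sum_const, Finset.card_univ, Fintype.card_fin]
          unfold Malpha
          rw [hB]
          push_cast
          ring
  -- combine
  have hopcR : (1:ℝ) ≤ (opc a : ℝ) := by exact_mod_cast hopc1
  have hM1 : (1:ℝ) ≤ Malpha m f := by
    unfold Malpha
    have hbase : (0:ℝ) ≤ (fninf m f : ℝ) := by unfold fninf; positivity
    have h1 : (1:ℝ) ≤ (1 + (fninf m f : ℝ)) ^ (m - 1) := one_le_pow₀ (by linarith)
    have hm' : (1:ℝ) ≤ (m:ℝ) := by exact_mod_cast hm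
    nlinarith
  have hC1 : (1:ℝ) ≤ (opc a : ℝ) * Malpha m f := by nlinarith
  have hCpos : (0:ℝ) < ((opc a : ℝ) * Malpha m f) ^ (m - 1) := by positivity
  have key : 1 ≤ |x| * ((opc a : ℝ) * Malpha m f) ^ (m - 1) := by
    have hNC : ‖(algebraMap ℚ ℂ) N‖ = |(N:ℝ)| := by
      rw [show (algebraMap ℚ ℂ) N = (((N:ℝ)) : ℂ) from by norm_cast, Complex.norm_real, Real.norm_eq_abs]
    have hxabs : ‖σ₀ y‖ = |x| := by rw [hσ₀y, Complex.norm_real, Real.norm_eq_abs]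
    have herase : ∏ σ ∈ Finset.univ.erase σ₀, ‖σ y‖ ≤
        ((opc a : ℝ) * Malpha m f) ^ (m - 1) := by
      calc ∏ σ ∈ Finset.univ.erase σ₀, ‖σ y‖
          ≤ ∏ _σ ∈ Finset.univ.erase σ₀, ((opc a : ℝ) * Malpha m f) :=
            Finset.prod_le_prod (fun σ _ => norm_nonneg _) (fun σ _ => hbound σ)
        _ = ((opc a : ℝ) * Malpha m f) ^ (m - 1) := by
            rw [Finset.prod_const, Finset.card_erase_of_mem (Finset.mem_univ _),
              Finset.card_univ, hcard]
    calc (1:ℝ) ≤ |(N:ℝ)| := hN1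
      _ = ‖(algebraMap ℚ ℂ) N‖ := hNC.symm
      _ = ∏ σ : ℚ⟮α⟯ →ₐ[ℚ] ℂ, ‖σ y‖ := by rw [hprod, norm_prod]
      _ = ‖σ₀ y‖ * ∏ σ ∈ Finset.univ.erase σ₀, ‖σ y‖ :=
          (Finset.mul_prod_erase _ _ (Finset.mem_univ σ₀)).symm
      _ ≤ |x| * ((opc a : ℝ) * Malpha m f) ^ (m - 1) := by
          rw [hxabs]
          exact mul_le_mul_of_nonneg_left herase (abs_nonneg x)
  have hxlb : 1 / (((opc a : ℝ) * Malpha m f) ^ (m - 1)) ≤ |x| := by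
    rw [div_le_iff₀ hCpos]
    linarith
  -- denominator comparison
  have hn2 : (1:ℝ) ≤ normTwo (m+1) f := by
    unfold normTwo
    rw [show (1:ℝ) = Real.sqrt 1 from (Real.sqrt_one).symm]
    apply Real.sqrt_le_sqrt
    have hmem : m ∈ Finset.range (m+1) := Finset.mem_range.mpr (lt_add_one m)
    have h1 : (1:ℝ) ≤ ((f.coeff m : ℝ))^2 := by
      rw [show f.coeff m = 1 from by rw [← hdeg]; exact hmonic.coeff_natDegree]
      norm_num
    exact le_trans h1 (Finset.single_le_sum (f := fun i => ((f.coeff i : ℝ))^2)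
      (fun i _ => sq_nonneg _) hmem)
  have hS1 : (1:ℝ) ≤ Salpha m α := by
    unfold Salpha
    have hmem : 0 ∈ Finset.range m := Finset.mem_range.mpr hm
    have := Finset.single_le_sum (f := fun k => |α|^k)
      (fun i _ => pow_nonneg (abs_nonneg α) i) hmem
    simpa using this
  have hMnn : (0:ℝ) ≤ Malpha m f := le_trans zero_le_one hM1
  have hPpos : Malpha m f ^ (m-1) ≤ Palpha m f * Salpha m α := by
    have hm' : (1:ℝ) ≤ (m:ℝ) := by exact_mod_cast hm
    have h1 : Malpha m f ^ (m-1) ≤ (Malpha m f + Real.sqrt m) ^ (m-1) :=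
      pow_le_pow_left₀ hMnn (le_add_of_nonneg_right (Real.sqrt_nonneg m)) _
    have h2 : (1:ℝ) ≤ normTwo (m+1) f ^ (m-1) := one_le_pow₀ hn2
    calc Malpha m f ^ (m-1) ≤ (Malpha m f + Real.sqrt m) ^ (m-1) := h1
      _ = 1 * 1 * ((Malpha m f + Real.sqrt m) ^ (m-1)) * 1 := by ring
      _ ≤ (m:ℝ) * normTwo (m+1) f ^ (m-1) * ((Malpha m f + Real.sqrt m) ^ (m-1)) * Salpha m α := by
          gcongr <;> first | positivity | linarith
      _ = Palpha m f * Salpha m α := by unfold Palpha; ring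
  have hden : ((opc a : ℝ) * Malpha m f) ^ (m - 1) ≤
      Palpha m f * Salpha m α * ((opc a : ℝ)) ^ (m - 1) := by
    rw [mul_pow]
    calc (opc a : ℝ)^(m-1) * Malpha m f ^ (m-1)
        ≤ (opc a : ℝ)^(m-1) * (Palpha m f * Salpha m α) :=
          mul_le_mul_of_nonneg_left hPpos (by positivity)
      _ = Palpha m f * Salpha m α * ((opc a : ℝ)) ^ (m - 1) := by ring
  calc 1 / (Palpha m f * Salpha m α * ((opc a : ℤ) : ℝ) ^ (m - 1))
      ≤ 1 / (((opc a : ℝ) * Malpha m f) ^ (m - 1)) :=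
        one_div_le_one_div_of_le hCpos hden
    _ ≤ |x| := hxlb
end

section
/- Let a = g(α) be a nonzero element of ℤ[α], where g(x) = a_0 + a_1 x + ⋯ + a_{m−1}x^{m−1} has integer coefficients, and let d be a positive real number with d ≥ (m−1)(1 + opc(a)^m·P_α·S_α²). Then for every ε with 0 < ε ≤ 1/d one has |g(α+ε) − g(α)| < |g(α)| and |g(α−ε) − g(α)| < |g(α)| (so the sign of g is constant on [α−ε, α+ε]). -/
open Polynomial Finset

theorem cauchyBound' (m : ℕ) (f : Polynomial ℤ) (hmonic : f.Monic) (hdeg : f.natDegree = m)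
    (B : ℝ) (hB : 0 ≤ B) (hcoeff : ∀ i < m, |(f.coeff i : ℝ)| ≤ B)
    (z : ℂ) (hz : Polynomial.aeval z f = 0) : ‖z‖ ≤ 1 + B := by
  set r := ‖z‖ with hr
  have hr0 : 0 ≤ r := norm_nonneg z
  by_cases hr1 : r ≤ 1
  · linarith
  push_neg at hr1
  have hexp : z ^ m = -∑ i ∈ range m, (f.coeff i : ℂ) * z ^ i := by
    have h0 : (0:ℂ) = ∑ i ∈ range (m+1), (f.coeff i : ℂ) * z ^ i := by
      rw [← hz, Polynomial.aeval_eq_sum_range, hdeg]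
      simp [zsmul_eq_mul]
    rw [Finset.sum_range_succ] at h0
    have hc : f.coeff m = 1 := by rw [← hdeg]; exact hmonic.coeff_natDegree
    rw [hc] at h0
    push_cast at h0
    linear_combination -h0
  have habs : r ^ m ≤ B * ∑ i ∈ range m, r ^ i := by
    calc r ^ m = ‖z ^ m‖ := by rw [norm_pow]
    _ = ‖∑ i ∈ range m, (f.coeff i : ℂ) * z ^ i‖ := by
        rw [hexp, norm_neg]
    _ ≤ ∑ i ∈ range m, ‖(f.coeff i : ℂ) * z ^ i‖ :=
        norm_sum_le _ _
    _ ≤ ∑ i ∈ range m, B * r ^ i := by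
        refine Finset.sum_le_sum fun i hi => ?_
        rw [norm_mul, norm_pow]
        have : ‖(f.coeff i : ℂ)‖ = |(f.coeff i : ℝ)| := by
          rw [show ((f.coeff i : ℂ)) = ((f.coeff i : ℝ) : ℂ) by push_cast; ring, Complex.norm_real, Real.norm_eq_abs]
        rw [this]
        exact mul_le_mul_of_nonneg_right (hcoeff i (Finset.mem_range.mp hi)) (by positivity)
    _ = B * ∑ i ∈ range m, r ^ i := by rw [Finset.mul_sum]
  have hgeo : (∑ i ∈ range m, r ^ i) * (r - 1) = r ^ m - 1 := geom_sum_mul r m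
  have hrm : 0 < r ^ m := by positivity
  nlinarith [habs, hgeo, hrm, sub_pos.mpr hr1]

theorem lowerBound' (m : ℕ) (hm : 2 ≤ m) (f : Polynomial ℤ)
    (hmonic : f.Monic) (hdeg : f.natDegree = m)
    (hirr : Irreducible (f.map (Int.castRingHom ℚ)))
    (α : ℝ) (hroot : Polynomial.aeval α f = 0)
    (a : Fin m → ℤ) (ha : (∑ i, (a i : ℝ) * α ^ (i : ℕ)) ≠ 0) :
    1 ≤ |∑ i, (a i : ℝ) * α ^ (i : ℕ)| * (((opc a : ℤ) : ℝ) * Malpha m f) ^ (m - 1) := by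
  set F : Polynomial ℚ := f.map (Int.castRingHom ℚ) with hF
  haveI : Fact (Irreducible F) := ⟨hirr⟩
  have hFmonic : F.Monic := hmonic.map _
  have hFdeg : F.natDegree = m := by rw [hF, natDegree_map_eq_of_injective (Int.cast_injective) f, hdeg]
  set K := AdjoinRoot F with hK
  haveI : FiniteDimensional ℚ K := PowerBasis.finite (AdjoinRoot.powerBasis hFmonic.ne_zero)
  haveI : Algebra.IsSeparable ℚ K := Algebra.IsAlgebraic.isSeparable_of_perfectField
  have hrank : Module.finrank ℚ K = m := by
    rw [PowerBasis.finrank (AdjoinRoot.powerBasis hFmonic.ne_zero)]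
    simpa [AdjoinRoot.powerBasis] using hFdeg
  have hFα : Polynomial.aeval α F = 0 := by
    rw [hF, show (Int.castRingHom ℚ) = algebraMap ℤ ℚ from rfl, Polynomial.aeval_map_algebraMap]
    exact hroot
  set φ : K →ₐ[ℚ] ℝ := AdjoinRoot.liftAlgHom F (Algebra.ofId ℚ ℝ) α hFα with hφ
  set θ : K := AdjoinRoot.root F with hθ
  have hφθ : φ θ = α := AdjoinRoot.liftAlgHom_root _ _ _ _
  set aK : K := ∑ i : Fin m, (a i : K) * θ ^ (i : ℕ) with haK
  have hφa : φ aK = ∑ i, (a i : ℝ) * α ^ (i : ℕ) := by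
    rw [haK, map_sum]
    congr 1; ext i
    rw [map_mul, map_pow, hφθ, map_intCast]
  have haK0 : aK ≠ 0 := fun h => ha (by rw [← hφa, h, map_zero])
  set N : ℚ := Algebra.norm ℚ aK with hN
  have hN0 : N ≠ 0 := by rw [hN]; exact (Algebra.norm_ne_zero_iff).mpr haK0
  have hθF : Polynomial.aeval θ F = 0 := by
    rw [Polynomial.aeval_def]; exact AdjoinRoot.eval₂_root F
  have hθf : Polynomial.aeval θ f = 0 := by
    have h2 : Polynomial.aeval θ (f.map (algebraMap ℤ ℚ)) = 0 := hθF
    rwa [Polynomial.aeval_map_algebraMap] at h2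
  have hθint : IsIntegral ℤ θ := ⟨f, hmonic, by rw [← Polynomial.aeval_def]; exact hθf⟩
  have haKint : IsIntegral ℤ aK := by
    refine IsIntegral.sum _ (fun i _ => ?_)
    exact (isIntegral_algebraMap (x := a i)).mul (hθint.pow _)
  have hNint : IsIntegral ℤ N := Algebra.isIntegral_norm ℚ haKint
  obtain ⟨z, hz⟩ := IsIntegrallyClosed.isIntegral_iff.mp hNint
  have hz0 : z ≠ 0 := by rintro rfl; rw [map_zero] at hz; exact hN0 hz.symm
  have hone : (1:ℝ) ≤ |(N : ℝ)| := by
    have h1 : (1:ℤ) ≤ |z| := Int.one_le_abs hz0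
    have h2 : ((N:ℝ)) = ((z:ℤ):ℝ) := by rw [← hz]; simp
    rw [h2, ← Int.cast_abs]
    exact_mod_cast h1
  have hprod : (algebraMap ℚ ℂ) N = ∏ σ : K →ₐ[ℚ] ℂ, σ aK :=
    Algebra.norm_eq_prod_embeddings ℚ ℂ aK
  set H : ℝ := ((opc a : ℤ) : ℝ) with hH
  have hHa : ∀ i : Fin m, |(a i : ℝ)| ≤ H := by
    intro i
    have hint : |a i| ≤ opc a := by
      rw [opc, Int.abs_eq_natAbs]
      exact_mod_cast Finset.le_sup (f := fun i => (a i).natAbs) (Finset.mem_univ i)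
    rw [hH, ← Int.cast_abs]
    exact_mod_cast hint
  set U : ℝ := 1 + (fninf m f : ℝ) with hU
  have hfn0 : (0:ℤ) ≤ fninf m f := by rw [fninf]; exact Int.natCast_nonneg _
  have hfn0' : (0:ℝ) ≤ (fninf m f : ℝ) := by exact_mod_cast hfn0
  have hU1 : 1 ≤ U := by rw [hU]; linarith
  have hfB : ∀ i < m, |(f.coeff i : ℝ)| ≤ (fninf m f : ℝ) := by
    intro i hi
    have hint : |f.coeff i| ≤ fninf m f := by
      rw [fninf, Int.abs_eq_natAbs]
      exact_mod_cast Finset.le_sup (f := fun j : Fin m => (f.coeff (j:ℕ)).natAbs)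
        (Finset.mem_univ (⟨i, hi⟩ : Fin m))
    rw [← Int.cast_abs]
    exact_mod_cast hint
  have hσbound : ∀ σ : K →ₐ[ℚ] ℂ, ‖σ aK‖ ≤ H * Malpha m f := by
    intro σ
    have hzroot : Polynomial.aeval (σ θ) f = 0 := by
      have : Polynomial.aeval (σ θ) F = 0 := by
        rw [Polynomial.aeval_algHom_apply, hθF, map_zero]
      have h2 : Polynomial.aeval (σ θ) (f.map (algebraMap ℤ ℚ)) = 0 := this
      rwa [Polynomial.aeval_map_algebraMap] at h2
    have hzU : ‖σ θ‖ ≤ U :=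
      cauchyBound' m f hmonic hdeg _ hfn0' hfB _ hzroot
    have hH0 : 0 ≤ H := le_trans (abs_nonneg _) (hHa ⟨0, by omega⟩)
    calc ‖σ aK‖ = ‖∑ i : Fin m, (a i : ℂ) * (σ θ) ^ (i:ℕ)‖ := by
          rw [haK, map_sum]
          refine congrArg _ (Finset.sum_congr rfl fun i _ => ?_)
          rw [map_mul, map_pow, map_intCast]
    _ ≤ ∑ i : Fin m, ‖(a i : ℂ) * (σ θ) ^ (i:ℕ)‖ := norm_sum_le _ _
    _ ≤ ∑ _i : Fin m, H * U ^ (m-1) := by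
        refine Finset.sum_le_sum fun i _ => ?_
        rw [norm_mul, norm_pow]
        have h1 : ‖(a i : ℂ)‖ ≤ H := by
          rw [show ((a i : ℂ)) = (((a i : ℝ)) : ℂ) by push_cast; ring, Complex.norm_real, Real.norm_eq_abs]
          exact hHa i
        have h2 : ‖σ θ‖ ^ (i:ℕ) ≤ U ^ (m-1) := by
          calc ‖σ θ‖ ^ (i:ℕ) ≤ U ^ (i:ℕ) :=
                pow_le_pow_left₀ (norm_nonneg _) hzU _
          _ ≤ U ^ (m-1) := pow_le_pow_right₀ hU1 (by omega)
        exact mul_le_mul h1 h2 (by positivity) hH0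
    _ = m * (H * U ^ (m-1)) := by rw [Finset.sum_const, Finset.card_univ, Fintype.card_fin]; ring
    _ = H * Malpha m f := by rw [Malpha, hU]; ring
  haveI := Classical.decEq (K →ₐ[ℚ] ℂ)
  set σ₀ : K →ₐ[ℚ] ℂ := (Complex.ofRealAm.restrictScalars ℚ).comp φ with hσ₀
  have hσ₀a : ‖σ₀ aK‖ = |∑ i, (a i : ℝ) * α ^ (i : ℕ)| := by
    rw [hσ₀]
    simp only [AlgHom.comp_apply, AlgHom.coe_restrictScalars', Complex.ofRealAm_coe]
    rw [hφa, Complex.norm_real, Real.norm_eq_abs]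
  have hcard : Fintype.card (K →ₐ[ℚ] ℂ) = m := by
    rw [AlgHom.card ℚ K ℂ, hrank]
  have hsplit : ∏ σ : K →ₐ[ℚ] ℂ, ‖σ aK‖
      = ‖σ₀ aK‖ * ∏ σ ∈ Finset.univ.erase σ₀, ‖σ aK‖ :=
    (Finset.mul_prod_erase Finset.univ _ (Finset.mem_univ σ₀)).symm
  have hCn : 0 ≤ H * Malpha m f := le_trans (norm_nonneg _) (hσbound σ₀)
  have herase : ∏ σ ∈ Finset.univ.erase σ₀, ‖σ aK‖ ≤ (H * Malpha m f) ^ (m-1) := by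
    have hcard2 : (Finset.univ.erase σ₀).card = m - 1 := by
      rw [Finset.card_erase_of_mem (Finset.mem_univ σ₀), Finset.card_univ, hcard]
    calc ∏ σ ∈ Finset.univ.erase σ₀, ‖σ aK‖
        ≤ ∏ _σ ∈ Finset.univ.erase σ₀, (H * Malpha m f) :=
          Finset.prod_le_prod (fun σ _ => norm_nonneg _) (fun σ _ => hσbound σ)
    _ = (H * Malpha m f) ^ (m-1) := by rw [Finset.prod_const, hcard2]
  calc (1:ℝ) ≤ |(N:ℝ)| := hone
  _ = ‖(N : ℂ)‖ := by
      rw [show ((N:ℂ)) = (((N:ℝ)):ℂ) by push_cast; ring, Complex.norm_real, Real.norm_eq_abs]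
  _ = ‖(algebraMap ℚ ℂ) N‖ := by rw [eq_ratCast (algebraMap ℚ ℂ) N]
  _ = ‖∏ σ : K →ₐ[ℚ] ℂ, σ aK‖ := by rw [hprod]
  _ = ∏ σ : K →ₐ[ℚ] ℂ, ‖σ aK‖ := norm_prod _ _
  _ = ‖σ₀ aK‖ * ∏ σ ∈ Finset.univ.erase σ₀, ‖σ aK‖ := hsplit
  _ ≤ |∑ i, (a i : ℝ) * α ^ (i : ℕ)| * (H * Malpha m f) ^ (m-1) := by
      rw [hσ₀a]
      exact mul_le_mul_of_nonneg_left herase (abs_nonneg _)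

theorem absPowSub (α η ε : ℝ) (hη : |η| ≤ ε) (i : ℕ) :
    |(α + η) ^ i - α ^ i| ≤ (|α| + ε) ^ i - |α| ^ i := by
  have hε0 : 0 ≤ ε := le_trans (abs_nonneg _) hη
  have h1 : (∑ j ∈ range i, (α + η) ^ j * α ^ (i - 1 - j)) * ((α + η) - α)
      = (α + η) ^ i - α ^ i := geom_sum₂_mul _ _ i
  have h2 : (∑ j ∈ range i, (|α| + ε) ^ j * |α| ^ (i - 1 - j)) * ((|α| + ε) - |α|)
      = (|α| + ε) ^ i - |α| ^ i := geom_sum₂_mul _ _ i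
  have hb : |∑ j ∈ range i, (α + η) ^ j * α ^ (i - 1 - j)|
      ≤ ∑ j ∈ range i, (|α| + ε) ^ j * |α| ^ (i - 1 - j) := by
    refine le_trans (Finset.abs_sum_le_sum_abs _ _) (Finset.sum_le_sum fun j _ => ?_)
    rw [abs_mul, abs_pow, abs_pow]
    refine mul_le_mul (pow_le_pow_left₀ (abs_nonneg _) ?_ _) le_rfl (by positivity) (by positivity)
    calc |α + η| ≤ |α| + |η| := abs_add_le _ _
    _ ≤ |α| + ε := by linarith
  calc |(α + η) ^ i - α ^ i|
      = |∑ j ∈ range i, (α + η) ^ j * α ^ (i - 1 - j)| * |η| := by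
        rw [← abs_mul]; congr 1; rw [← h1]; ring
  _ ≤ (∑ j ∈ range i, (|α| + ε) ^ j * |α| ^ (i - 1 - j)) * ε := by
        refine mul_le_mul hb hη (abs_nonneg _) ?_
        refine Finset.sum_nonneg fun j _ => by positivity
  _ = (|α| + ε) ^ i - |α| ^ i := by rw [← h2]; ring

theorem sumDiffLe (b ε : ℝ) (hb : 0 ≤ b) (hε : 0 ≤ ε) (n : ℕ) :
    ∑ i ∈ range n, ((b + ε) ^ i - b ^ i)
      ≤ ε * ((n : ℝ) - 1) * ∑ j ∈ range (n - 1), (b + ε) ^ j := by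
  set c := b + ε with hc
  have hc0 : 0 ≤ c := by positivity
  have hbc : b ≤ c := by rw [hc]; linarith
  have step1 : ∀ i : ℕ, c ^ i - b ^ i ≤ ε * ((i : ℝ) * c ^ (i - 1)) := by
    intro i
    have h2 : (∑ j ∈ range i, c ^ j * b ^ (i - 1 - j)) * (c - b) = c ^ i - b ^ i :=
      geom_sum₂_mul _ _ i
    have hcb : c - b = ε := by rw [hc]; ring
    have hsum : (∑ j ∈ range i, c ^ j * b ^ (i - 1 - j)) ≤ (i : ℝ) * c ^ (i - 1) := by
      calc (∑ j ∈ range i, c ^ j * b ^ (i - 1 - j))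
          ≤ ∑ j ∈ range i, c ^ (i - 1) := by
            refine Finset.sum_le_sum fun j hj => ?_
            have hj' : j < i := Finset.mem_range.mp hj
            calc c ^ j * b ^ (i - 1 - j) ≤ c ^ j * c ^ (i - 1 - j) :=
                  mul_le_mul_of_nonneg_left (pow_le_pow_left₀ hb hbc _) (by positivity)
            _ = c ^ (i - 1) := by rw [← pow_add]; congr 1; omega
      _ = (i : ℝ) * c ^ (i - 1) := by rw [Finset.sum_const, Finset.card_range, nsmul_eq_mul]
    rw [← h2, hcb]
    calc (∑ j ∈ range i, c ^ j * b ^ (i - 1 - j)) * ε ≤ ((i : ℝ) * c ^ (i - 1)) * ε :=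
          mul_le_mul_of_nonneg_right hsum hε
    _ = ε * ((i : ℝ) * c ^ (i - 1)) := by ring
  calc ∑ i ∈ range n, (c ^ i - b ^ i) ≤ ∑ i ∈ range n, ε * ((i : ℝ) * c ^ (i - 1)) :=
        Finset.sum_le_sum fun i _ => step1 i
  _ ≤ ε * ((n : ℝ) - 1) * ∑ j ∈ range (n - 1), c ^ j := by
      cases n with
      | zero => simp
      | succ k =>
        rw [Finset.sum_range_succ']
        simp only [Nat.cast_zero, zero_mul, mul_zero, add_zero, Nat.add_sub_cancel]
        have key : ∀ j ∈ range k, ε * (((j:ℕ)+1 : ℝ) * c ^ ((j+1) - 1)) ≤ ε * ((k:ℝ) * c ^ j) := by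
          intro j hj
          have hj' : j < k := Finset.mem_range.mp hj
          have : ((j:ℕ) + 1 : ℝ) ≤ (k : ℝ) := by exact_mod_cast hj'
          simp only [Nat.add_sub_cancel]
          refine mul_le_mul_of_nonneg_left (mul_le_mul_of_nonneg_right this (by positivity)) hε
        calc ∑ j ∈ range k, ε * ((((j:ℕ) + 1 : ℕ) : ℝ) * c ^ ((j+1) - 1))
            ≤ ∑ j ∈ range k, ε * ((k:ℝ) * c ^ j) := by
              refine Finset.sum_le_sum fun j hj => ?_
              have h := key j hj
              simpa using h
        _ = ε * ((k : ℝ)) * ∑ j ∈ range k, c ^ j := by rw [Finset.mul_sum]; congr 1; ext j; ring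
        _ = ε * (((k+1 : ℕ) : ℝ) - 1) * ∑ j ∈ range k, c ^ j := by push_cast; ring

set_option maxHeartbeats 800000 in
theorem stmt_7 (m : ℕ) (hm : 2 ≤ m) (f : Polynomial ℤ)
    (hmonic : f.Monic) (hdeg : f.natDegree = m)
    (hirr : Irreducible (f.map (Int.castRingHom ℚ)))
    (α : ℝ) (hroot : Polynomial.aeval α f = 0)
    (a : Fin m → ℤ) (ha : (∑ i, (a i : ℝ) * α ^ (i : ℕ)) ≠ 0)
    (d : ℝ) (hd0 : 0 < d)
    (hd : d ≥ ((m : ℝ) - 1) *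
      (1 + ((opc a : ℤ) : ℝ) ^ m * Palpha m f * Salpha m α ^ 2)) :
    ∀ ε : ℝ, 0 < ε → ε ≤ 1 / d →
      |(∑ i, (a i : ℝ) * (α + ε) ^ (i : ℕ)) - ∑ i, (a i : ℝ) * α ^ (i : ℕ)| <
          |∑ i, (a i : ℝ) * α ^ (i : ℕ)| ∧
        |(∑ i, (a i : ℝ) * (α - ε) ^ (i : ℕ)) - ∑ i, (a i : ℝ) * α ^ (i : ℕ)| <
          |∑ i, (a i : ℝ) * α ^ (i : ℕ)| := by
  intro ε hε hεd
  have hmR : (2:ℝ) ≤ (m:ℝ) := by exact_mod_cast hm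
  have hm1R : (1:ℝ) ≤ (m:ℝ) - 1 := by linarith
  set b : ℝ := |α| with hb
  have hb0 : 0 ≤ b := abs_nonneg α
  set S : ℝ := Salpha m α with hS
  set H : ℝ := ((opc a : ℤ) : ℝ) with hH
  set M : ℝ := Malpha m f with hM
  set P : ℝ := Palpha m f with hP
  set G : ℝ := ∑ i, (a i : ℝ) * α ^ (i : ℕ) with hG
  have hSsum : S = ∑ k ∈ range m, b ^ k := rfl
  have hS1 : 1 ≤ S := by
    rw [hSsum]
    have h := Finset.single_le_sum (f := fun k => b ^ k)
      (fun k _ => by positivity) (Finset.mem_range.mpr (show 0 < m by omega))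
    simpa using h
  have hS0 : 0 < S := by linarith
  have hHa : ∀ i : Fin m, |(a i : ℝ)| ≤ H := by
    intro i
    have hint : |a i| ≤ opc a := by
      rw [opc, Int.abs_eq_natAbs]
      exact_mod_cast Finset.le_sup (f := fun i => (a i).natAbs) (Finset.mem_univ i)
    rw [hH, ← Int.cast_abs]
    exact_mod_cast hint
  have hH1 : 1 ≤ H := by
    have hex : ∃ i, a i ≠ 0 := by
      by_contra hc
      push_neg at hc
      refine ha (Finset.sum_eq_zero fun i _ => by rw [hc i]; norm_num)
    obtain ⟨i, hi⟩ := hex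
    have h1 : (1:ℤ) ≤ |a i| := Int.one_le_abs hi
    have h2 : |a i| ≤ opc a := by
      rw [opc, Int.abs_eq_natAbs]
      exact_mod_cast Finset.le_sup (f := fun i => (a i).natAbs) (Finset.mem_univ i)
    rw [hH]
    exact_mod_cast le_trans h1 h2
  have hH0 : 0 ≤ H := by linarith
  -- bounds on M, n2, P
  have hfn0 : (0:ℝ) ≤ (fninf m f : ℝ) := by
    have : (0:ℤ) ≤ fninf m f := by rw [fninf]; exact Int.natCast_nonneg _
    exact_mod_cast this
  have hMm : (m:ℝ) ≤ M := by
    rw [hM, Malpha]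
    have h1 : (1:ℝ) ≤ (1 + (fninf m f : ℝ)) ^ (m-1) := one_le_pow₀ (by linarith)
    calc (m:ℝ) = (m:ℝ) * 1 := by ring
    _ ≤ (m:ℝ) * (1 + (fninf m f : ℝ)) ^ (m-1) := mul_le_mul_of_nonneg_left h1 (by linarith)
  have hM0 : (0:ℝ) < M := by linarith
  have hn2 : (1:ℝ) ≤ normTwo (m+1) f := by
    rw [normTwo]
    have hc : f.coeff m = 1 := by rw [← hdeg]; exact hmonic.coeff_natDegree
    have h1 : (1:ℝ) ≤ ∑ i ∈ range (m+1), ((f.coeff i : ℝ)) ^ 2 := by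
      have h2 := Finset.single_le_sum (f := fun i => ((f.coeff i : ℝ)) ^ 2)
        (fun k _ => by positivity) (Finset.mem_range.mpr (show m < m + 1 by omega))
      simpa [hc] using h2
    calc (1:ℝ) = Real.sqrt 1 := by rw [Real.sqrt_one]
    _ ≤ _ := Real.sqrt_le_sqrt h1
  have hPm : (m:ℝ) * M ^ (m-1) ≤ P := by
    rw [hP, Palpha, ← hM]
    have h1 : M ^ (m-1) ≤ (M + Real.sqrt m) ^ (m-1) :=
      pow_le_pow_left₀ hM0.le (le_add_of_nonneg_right (Real.sqrt_nonneg _)) _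
    have h2 : (1:ℝ) ≤ normTwo (m+1) f ^ (m-1) := one_le_pow₀ hn2
    have h3 : (0:ℝ) ≤ (m:ℝ) := by linarith
    calc (m:ℝ) * M ^ (m-1) = (m:ℝ) * 1 * M ^ (m-1) := by ring
    _ ≤ (m:ℝ) * normTwo (m+1) f ^ (m-1) * (M + Real.sqrt m) ^ (m-1) := by
        refine mul_le_mul (mul_le_mul_of_nonneg_left h2 h3) h1 (by positivity) (by positivity)
  have hP0 : (0:ℝ) < P := lt_of_lt_of_le (by positivity) hPm
  set X : ℝ := H ^ m * P * S ^ 2 with hX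
  have hXP : P ≤ X := by
    rw [hX]
    have h1 : (1:ℝ) ≤ H ^ m := one_le_pow₀ hH1
    have h2 : (1:ℝ) ≤ S ^ 2 := one_le_pow₀ hS1
    have h3 : P * 1 ≤ P * S ^ 2 := mul_le_mul_of_nonneg_left h2 hP0.le
    calc P = 1 * (P * 1) := by ring
    _ ≤ H ^ m * (P * S ^ 2) := mul_le_mul h1 h3 (by positivity) (by positivity)
    _ = H ^ m * P * S ^ 2 := by ring
  have hdX : ((m:ℝ) - 1) * (1 + X) ≤ d := hd
  have h1X : (1:ℝ) ≤ 1 + X := by linarith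
  have hd1 : (1:ℝ) ≤ d := by
    have h := mul_le_mul_of_nonneg_right hm1R (by linarith : (0:ℝ) ≤ 1 + X)
    rw [one_mul] at h
    linarith
  have hεd' : ε * d ≤ 1 := by
    rw [← le_div_iff₀ hd0]; exact hεd
  have hε1 : ε ≤ 1 := by
    calc ε = ε * 1 := by ring
    _ ≤ ε * d := mul_le_mul_of_nonneg_left hd1 hε.le
    _ ≤ 1 := hεd'
  have hHpow : H ^ (m-1) * H = H ^ m := by
    rw [← pow_succ]; congr 1; omega
  have hmpow : (m:ℝ) ^ (m-1) * (m:ℝ) = (m:ℝ) ^ m := by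
    rw [← pow_succ]; congr 1; omega
  have h2m : (2:ℝ) ^ (m-2) ≤ P := by
    calc (2:ℝ) ^ (m-2) ≤ (2:ℝ) ^ m := pow_le_pow_right₀ one_le_two (by omega)
    _ ≤ (m:ℝ) ^ m := pow_le_pow_left₀ (by norm_num) hmR m
    _ = (m:ℝ) * (m:ℝ) ^ (m-1) := by rw [← hmpow]; ring
    _ ≤ (m:ℝ) * M ^ (m-1) := by
        refine mul_le_mul_of_nonneg_left (pow_le_pow_left₀ (by linarith) hMm _) (by linarith)
    _ ≤ P := hPm
  have hεsmall : ε * (((m:ℝ) - 1) * 2 ^ (m-2)) ≤ 1 := by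
    have hQ : ((m:ℝ) - 1) * 2 ^ (m-2) ≤ d := by
      have h1 : ((m:ℝ) - 1) * 2 ^ (m-2) ≤ ((m:ℝ) - 1) * (1 + X) :=
        mul_le_mul_of_nonneg_left (by linarith) (by linarith)
      linarith
    calc ε * (((m:ℝ) - 1) * 2 ^ (m-2)) ≤ ε * d := mul_le_mul_of_nonneg_left hQ hε.le
    _ ≤ 1 := hεd'

  -- lower bound for |G|
  have hlow : 1 ≤ |G| * (H * M) ^ (m - 1) :=
    lowerBound' m hm f hmonic hdeg hirr α hroot a ha
  set R : ℝ := (H * M) ^ (m-1) with hR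
  have hR0 : (0:ℝ) < R := by positivity
  have hGlow : 1 / R ≤ |G| := (div_le_iff₀ hR0).mpr hlow
  -- the main perturbation bound
  set c : ℝ := b + ε with hc
  have hbc : b ≤ c := by rw [hc]; linarith
  have hc0 : 0 ≤ c := by positivity
  -- T bound
  have hmax : ∀ k, k ≤ m - 1 → (max 1 b) ^ k ≤ S := by
    intro k hk
    rcases le_total b 1 with hb1 | hb1
    · rw [max_eq_left hb1, one_pow]; exact hS1
    · rw [max_eq_right hb1]
      calc b ^ k ≤ b ^ (m-1) := pow_le_pow_right₀ hb1 hk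
      _ ≤ S := by
          rw [hSsum]
          exact Finset.single_le_sum (f := fun k => b ^ k) (fun k _ => by positivity)
            (Finset.mem_range.mpr (by omega))
  have hckS : ∀ k ∈ range (m - 1 - 1), c ^ k ≤ 2 ^ (m-2) * S := by
    intro k hk
    have hk' : k < m - 1 - 1 := Finset.mem_range.mp hk
    calc c ^ k ≤ (b + 1) ^ k := pow_le_pow_left₀ hc0 (by rw [hc]; linarith) k
    _ ≤ (2 * max 1 b) ^ k := by
        refine pow_le_pow_left₀ (by positivity) ?_ k
        have h1 := le_max_left (1:ℝ) b
        have h2 := le_max_right (1:ℝ) b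
        linarith
    _ = 2 ^ k * (max 1 b) ^ k := mul_pow _ _ _
    _ ≤ 2 ^ (m-2) * S := by
        refine mul_le_mul (pow_le_pow_right₀ one_le_two (by omega)) (hmax k (by omega))
          (by positivity) (by positivity)
  have hcast1 : (((m - 1 : ℕ)) : ℝ) = (m:ℝ) - 1 := by
    rw [Nat.cast_sub (by omega)]; norm_num
  have hcast2 : (((m - 1 - 1 : ℕ)) : ℝ) = (m:ℝ) - 2 := by
    rw [Nat.sub_sub, Nat.cast_sub (by omega)]; norm_num
  have hT : ∑ j ∈ range (m-1), c ^ j ≤ (m:ℝ) * S := by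
    have h1 : ∑ j ∈ range (m-1), (c ^ j - b ^ j)
        ≤ ε * (((m - 1 : ℕ) : ℝ) - 1) * ∑ j ∈ range (m - 1 - 1), c ^ j :=
      sumDiffLe b ε hb0 hε.le (m-1)
    have h2 : ∑ j ∈ range (m - 1 - 1), c ^ j ≤ (((m - 1 - 1 : ℕ)) : ℝ) * (2 ^ (m-2) * S) := by
      have := Finset.sum_le_card_nsmul (range (m - 1 - 1)) (fun k => c ^ k)
        (2 ^ (m-2) * S) hckS
      rwa [Finset.card_range, nsmul_eq_mul] at this
    have h3 : ∑ j ∈ range (m-1), b ^ j ≤ S := by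
      rw [hSsum]
      refine Finset.sum_le_sum_of_subset_of_nonneg (Finset.range_subset_range.mpr (by omega))
        (fun k _ _ => by positivity)
    have h4 : ε * (((m - 1 : ℕ) : ℝ) - 1) * ∑ j ∈ range (m - 1 - 1), c ^ j
        ≤ ((m:ℝ) - 1) * S := by
      rw [hcast1]
      have hm2 : (0:ℝ) ≤ (m:ℝ) - 1 - 1 := by linarith
      have hnn : (0:ℝ) ≤ ε * ((m:ℝ) - 1 - 1) := mul_nonneg hε.le hm2
      have e0 : (0:ℝ) ≤ ε * 2 ^ (m-2) := by positivity
      have e1 : ((m:ℝ) - 2) ^ 2 ≤ ((m:ℝ) - 1) ^ 2 :=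
        pow_le_pow_left₀ (by linarith) (by linarith) 2
      have e2 : ε * 2 ^ (m-2) * (((m:ℝ) - 2) ^ 2) ≤ ε * 2 ^ (m-2) * (((m:ℝ) - 1) ^ 2) :=
        mul_le_mul_of_nonneg_left e1 e0
      have e4 : (ε * (((m:ℝ) - 1) * 2 ^ (m-2))) * ((m:ℝ) - 1) ≤ 1 * ((m:ℝ) - 1) :=
        mul_le_mul_of_nonneg_right hεsmall (by linarith)
      have e5 : ε * 2 ^ (m-2) * (((m:ℝ) - 2) ^ 2) ≤ (m:ℝ) - 1 := by
        calc ε * 2 ^ (m-2) * (((m:ℝ) - 2) ^ 2) ≤ ε * 2 ^ (m-2) * (((m:ℝ) - 1) ^ 2) := e2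
        _ = (ε * (((m:ℝ) - 1) * 2 ^ (m-2))) * ((m:ℝ) - 1) := by ring
        _ ≤ 1 * ((m:ℝ) - 1) := e4
        _ = (m:ℝ) - 1 := by ring
      calc ε * ((m:ℝ) - 1 - 1) * ∑ j ∈ range (m - 1 - 1), c ^ j
          ≤ ε * ((m:ℝ) - 1 - 1) * (((m:ℝ) - 2) * (2 ^ (m-2) * S)) := by
            refine mul_le_mul_of_nonneg_left ?_ hnn
            rw [← hcast2]; exact h2
      _ = (ε * 2 ^ (m-2) * (((m:ℝ) - 2) ^ 2)) * S := by ring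
      _ ≤ ((m:ℝ) - 1) * S := mul_le_mul_of_nonneg_right e5 hS0.le
    have h5 : ∑ j ∈ range (m-1), c ^ j - ∑ j ∈ range (m-1), b ^ j
        = ∑ j ∈ range (m-1), (c ^ j - b ^ j) := (Finset.sum_sub_distrib _ _).symm
    have := h1.trans h4
    linarith
  -- the key bound for a perturbation η with |η| ≤ ε
  have key : ∀ η : ℝ, |η| ≤ ε →
      |(∑ i, (a i : ℝ) * (α + η) ^ (i : ℕ)) - G| < |G| := by
    intro η hη
    have hQlt : ε * (((m:ℝ) - 1) * ((m:ℝ) * S * (H * R))) < 1 := by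
      have hQd : ((m:ℝ) - 1) * ((m:ℝ) * S * (H * R)) < d := by
        have e1 : (m:ℝ) * S * (H * R) ≤ X := by
          rw [hX, hR, mul_pow, ← hHpow]
          have e2 : (m:ℝ) * M ^ (m-1) ≤ P := hPm
          have e3 : S ≤ S ^ 2 := by
            calc S = S * 1 := by ring
            _ ≤ S * S := mul_le_mul_of_nonneg_left hS1 hS0.le
            _ = S ^ 2 := (sq S).symm
          have e4 : (0:ℝ) ≤ H ^ (m-1) * H := by positivity
          calc (m:ℝ) * S * (H * (H ^ (m-1) * M ^ (m-1)))
              = (H ^ (m-1) * H) * ((m:ℝ) * M ^ (m-1)) * S := by ring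
          _ ≤ (H ^ (m-1) * H) * P * S ^ 2 := by
              refine mul_le_mul (mul_le_mul_of_nonneg_left e2 e4) e3 (by linarith) (by positivity)
          _ = H ^ (m-1) * H * P * S ^ 2 := by ring
        calc ((m:ℝ) - 1) * ((m:ℝ) * S * (H * R)) ≤ ((m:ℝ) - 1) * X :=
              mul_le_mul_of_nonneg_left e1 (by linarith)
        _ < ((m:ℝ) - 1) * (1 + X) :=
              mul_lt_mul_of_pos_left (by linarith) (by linarith)
        _ ≤ d := hdX
      have h0 : (0:ℝ) ≤ ((m:ℝ) - 1) * ((m:ℝ) * S * (H * R)) := by positivity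
      calc ε * (((m:ℝ) - 1) * ((m:ℝ) * S * (H * R))) < ε * d := by
            exact mul_lt_mul_of_pos_left hQd hε
      _ ≤ 1 := hεd'
    calc |(∑ i, (a i : ℝ) * (α + η) ^ (i : ℕ)) - G|
        = |∑ i : Fin m, ((a i : ℝ) * (α + η) ^ (i:ℕ) - (a i : ℝ) * α ^ (i:ℕ))| := by
          rw [hG, ← Finset.sum_sub_distrib]
    _ ≤ ∑ i : Fin m, |(a i : ℝ) * (α + η) ^ (i:ℕ) - (a i : ℝ) * α ^ (i:ℕ)| :=
          Finset.abs_sum_le_sum_abs _ _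
    _ ≤ ∑ i : Fin m, H * (c ^ (i:ℕ) - b ^ (i:ℕ)) := by
          refine Finset.sum_le_sum fun i _ => ?_
          have h1 : (a i : ℝ) * (α + η) ^ (i:ℕ) - (a i : ℝ) * α ^ (i:ℕ)
              = (a i : ℝ) * ((α + η) ^ (i:ℕ) - α ^ (i:ℕ)) := by ring
          rw [h1, abs_mul]
          have h2 := absPowSub α η ε hη (i:ℕ)
          exact mul_le_mul (hHa i) h2 (abs_nonneg _) hH0
    _ = H * ∑ i ∈ range m, (c ^ i - b ^ i) := by
          rw [← Finset.mul_sum, Fin.sum_univ_eq_sum_range (fun i => c ^ i - b ^ i) m]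
    _ ≤ H * (ε * ((m:ℝ) - 1) * ∑ j ∈ range (m-1), c ^ j) := by
          refine mul_le_mul_of_nonneg_left ?_ hH0
          have := sumDiffLe b ε hb0 hε.le m
          exact this
    _ ≤ H * (ε * ((m:ℝ) - 1) * ((m:ℝ) * S)) := by
          refine mul_le_mul_of_nonneg_left (mul_le_mul_of_nonneg_left hT ?_) hH0
          have : (0:ℝ) ≤ (m:ℝ) - 1 := by linarith
          positivity
    _ < 1 / R := by
          rw [lt_div_iff₀ hR0]
          calc H * (ε * ((m:ℝ) - 1) * ((m:ℝ) * S)) * R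
              = ε * (((m:ℝ) - 1) * ((m:ℝ) * S * (H * R))) := by ring
          _ < 1 := hQlt
    _ ≤ |G| := hGlow
  constructor
  · exact key ε (by rw [abs_of_pos hε])
  · have h := key (-ε) (by rw [abs_neg, abs_of_pos hε])
    have hsub : α - ε = α + (-ε) := by ring
    rw [hsub]
    exact h
end

section
/- Let a ∈ ℤ[α] have coefficient vector (a_0, a_1, …, a_{m−1}) and let s be a positive integer. Let b := a − s·⌊a/s⌋ (where ⌊·⌋ denotes the floor of the real number a/s), so that b ∈ ℤ[α] has coefficient vector (a_0 − s⌊a/s⌋, a_1, …, a_{m−1}). Then opc(b) ≤ max(opc(a), s)·S_α, where S_α := 1 + |α| + ⋯ + |α|^{m−1}. The same bound holds for a − s·⌈a/s⌉. -/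
open Polynomial Finset

theorem stmt_8 (m : ℕ) (hm : 0 < m) (f : Polynomial ℤ)
    (hmonic : f.Monic) (hdeg : f.natDegree = m)
    (hirr : Irreducible (f.map (Int.castRingHom ℚ)))
    (α : ℝ) (hroot : Polynomial.aeval α f = 0)
    (a : Fin m → ℤ) (s : ℤ) (hs : 0 < s) :
    ∀ r : ℤ,
      (r = ⌊(∑ i, (a i : ℝ) * α ^ (i : ℕ)) / (s : ℝ)⌋ ∨
        r = ⌈(∑ i, (a i : ℝ) * α ^ (i : ℕ)) / (s : ℝ)⌉) →
      ((opc (Function.update a ⟨0, hm⟩ (a ⟨0, hm⟩ - s * r)) : ℤ) : ℝ) ≤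
        ((max (opc a) s : ℤ) : ℝ) * Salpha m α := by
  intro r hr
  haveI : NeZero m := ⟨hm.ne'⟩
  set i0 : Fin m := ⟨0, hm⟩ with hi0
  set A : ℝ := ∑ i, (a i : ℝ) * α ^ (i : ℕ) with hA
  set M : ℤ := max (opc a) s with hM
  set T : ℝ := ∑ i ∈ Finset.univ.erase i0, (a i : ℝ) * α ^ (i : ℕ) with hT
  have hsR : (0:ℝ) < (s:ℝ) := by exact_mod_cast hs
  have hMs : (s:ℝ) ≤ (M:ℝ) := by exact_mod_cast le_max_right (opc a) s
  have hM0 : (0:ℝ) ≤ (M:ℝ) := le_trans hsR.le hMs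
  have hai : ∀ i : Fin m, |((a i : ℤ) : ℝ)| ≤ (M:ℝ) := by
    intro i
    have h1 : (a i).natAbs ≤ Finset.univ.sup fun i => (a i).natAbs :=
      Finset.le_sup (f := fun i => (a i).natAbs) (Finset.mem_univ i)
    have h2 : |a i| ≤ opc a := by
      rw [Int.abs_eq_natAbs, opc]; exact_mod_cast h1
    have h3 : |a i| ≤ M := h2.trans (le_max_left _ _)
    calc |((a i : ℤ) : ℝ)| = ((|a i| : ℤ) : ℝ) := by push_cast; ring
      _ ≤ (M:ℝ) := by exact_mod_cast h3
  have hS1 : (1:ℝ) ≤ Salpha m α := by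
    have := Finset.single_le_sum (f := fun k => |α| ^ k)
      (fun k _ => by positivity) (Finset.mem_range.mpr hm)
    simpa [Salpha] using this
  have hfin : (∑ i : Fin m, |α| ^ (i:ℕ)) = |α| ^ (i0:ℕ)
      + ∑ i ∈ Finset.univ.erase i0, |α| ^ (i:ℕ) :=
    (Finset.add_sum_erase _ _ (Finset.mem_univ i0)).symm
  have hSal : Salpha m α = 1 + ∑ i ∈ Finset.univ.erase i0, |α| ^ (i:ℕ) := by
    rw [Salpha, ← Fin.sum_univ_eq_sum_range (fun k => |α| ^ k) m, hfin]
    norm_num [hi0]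
  have hA0T : A = (a i0 : ℝ) + T := by
    rw [hA, hT, ← Finset.add_sum_erase _ _ (Finset.mem_univ i0)]
    norm_num [hi0]
  have hTb : |T| ≤ (M:ℝ) * (Salpha m α - 1) := by
    calc |T| ≤ ∑ i ∈ Finset.univ.erase i0, |(a i : ℝ) * α ^ (i:ℕ)| :=
          Finset.abs_sum_le_sum_abs _ _
      _ ≤ ∑ i ∈ Finset.univ.erase i0, (M:ℝ) * |α| ^ (i:ℕ) := by
          refine Finset.sum_le_sum fun i _ => ?_
          rw [abs_mul, abs_pow]
          exact mul_le_mul_of_nonneg_right (hai i) (pow_nonneg (abs_nonneg α) _)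
      _ = (M:ℝ) * (Salpha m α - 1) := by rw [← Finset.mul_sum, hSal]; ring
  have hAr : |A - (s:ℝ) * r| ≤ (s:ℝ) := by
    rcases hr with h | h <;> subst h
    · have h1 : ((⌊A / s⌋ : ℤ) : ℝ) ≤ A / s := Int.floor_le _
      have h2 : A / s - 1 < ((⌊A / s⌋ : ℤ) : ℝ) := Int.sub_one_lt_floor _
      have h1' : (s:ℝ) * (⌊A / s⌋ : ℤ) ≤ A := by
        rw [mul_comm]; exact (le_div_iff₀ hsR).mp h1
      have h2' : A < ((⌊A / s⌋ : ℤ) + 1) * s :=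
        (div_lt_iff₀ hsR).mp (by linarith)
      rw [abs_le]; constructor <;> nlinarith
    · have h1 : A / s ≤ ((⌈A / s⌉ : ℤ) : ℝ) := Int.le_ceil _
      have h2 : ((⌈A / s⌉ : ℤ) : ℝ) < A / s + 1 := Int.ceil_lt_add_one _
      have h1' : A ≤ (s:ℝ) * (⌈A / s⌉ : ℤ) := by
        rw [mul_comm]; exact (div_le_iff₀ hsR).mp h1
      have h2' : ((⌈A / s⌉ : ℤ) - 1) * s < A :=
        (lt_div_iff₀ hsR).mp (by linarith)
      rw [abs_le]; constructor <;> nlinarith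
  have ha0 : |((a i0 - s * r : ℤ) : ℝ)| ≤ (M:ℝ) * Salpha m α := by
    have heq : ((a i0 - s * r : ℤ) : ℝ) = (A - (s:ℝ) * r) - T := by
      push_cast; rw [hA0T]; ring
    rw [heq]
    have h4 : |(A - (s:ℝ) * r) - T| ≤ |A - (s:ℝ) * r| + |T| := abs_sub _ _
    have : (M:ℝ) * Salpha m α = (M:ℝ) + (M:ℝ) * (Salpha m α - 1) := by ring
    rw [this]
    linarith
  obtain ⟨j, -, hj⟩ := Finset.exists_mem_eq_sup Finset.univ Finset.univ_nonempty
    (fun i => ((Function.update a i0 (a i0 - s * r)) i).natAbs)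
  have hopc : ((opc (Function.update a i0 (a i0 - s * r)) : ℤ) : ℝ)
      = |((Function.update a i0 (a i0 - s * r) j : ℤ) : ℝ)| := by
    rw [opc, hj]; push_cast [Nat.cast_natAbs]; ring
  rw [hopc]
  rcases eq_or_ne j i0 with hje | hjne
  · subst hje; rw [Function.update_self]; exact ha0
  · rw [Function.update_of_ne hjne]
    have h5 := hai j
    nlinarith
end

section
/- Let a = g(α) ∈ ℤ[α], where g(x) = a_0 + a_1 x + ⋯ + a_{m−1}x^{m−1} has integer coefficients, let s be a positive integer with a/s ∉ ℤ, and let d be a positive real number with d ≥ (m−1)(1 + max(opc(a), s)^m·P_α·S_α^{m+1}). Then for every ε with 0 < ε ≤ 1/d, both |g(α±ε) − g(α)| < |a − s⌊a/s⌋| and |g(α±ε) − g(α)| < |a − s⌈a/s⌉| hold (for both choices of sign). -/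
set_option maxHeartbeats 1000000

open Polynomial Finset

lemma aux_pow_diff (x y c : ℝ) (hx : |x| ≤ c) (hy : |y| ≤ c) (n : ℕ) :
    |x ^ n - y ^ n| ≤ (n : ℝ) * |x - y| * c ^ (n - 1) := by
  have hc0 : 0 ≤ c := le_trans (abs_nonneg _) hx
  have hfac : (∑ i ∈ Finset.range n, x ^ i * y ^ (n - 1 - i)) * (x - y) = x ^ n - y ^ n :=
    geom_sum₂_mul x y n
  calc |x ^ n - y ^ n| = |∑ i ∈ Finset.range n, x ^ i * y ^ (n - 1 - i)| * |x - y| := by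
        rw [← hfac, abs_mul]
    _ ≤ ((n : ℝ) * c ^ (n - 1)) * |x - y| := by
        apply mul_le_mul_of_nonneg_right _ (abs_nonneg _)
        calc |∑ i ∈ Finset.range n, x ^ i * y ^ (n - 1 - i)|
            ≤ ∑ i ∈ Finset.range n, |x ^ i * y ^ (n - 1 - i)| :=
              Finset.abs_sum_le_sum_abs _ _
          _ ≤ ∑ i ∈ Finset.range n, c ^ (n - 1) := by
              apply Finset.sum_le_sum
              intro i hi
              rw [abs_mul, abs_pow, abs_pow]
              calc |x| ^ i * |y| ^ (n - 1 - i) ≤ c ^ i * c ^ (n - 1 - i) :=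
                    mul_le_mul (pow_le_pow_left₀ (abs_nonneg _) hx _)
                      (pow_le_pow_left₀ (abs_nonneg _) hy _) (by positivity) (by positivity)
                _ = c ^ (n - 1) := by
                    rw [← pow_add]
                    congr 1
                    have := Finset.mem_range.mp hi
                    omega
          _ = (n : ℝ) * c ^ (n - 1) := by
              rw [Finset.sum_const, Finset.card_range, nsmul_eq_mul]
    _ = (n : ℝ) * |x - y| * c ^ (n - 1) := by ring

lemma aux_comb (m : ℕ) (hm : 2 ≤ m) (ε : ℝ) (hε : 0 ≤ ε) (hε2 : ε ≤ 1 / ((m : ℝ) - 1)) :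
    (1 + ε) ^ (m - 2) ≤ Real.sqrt 2 ^ (m - 1) := by
  have hsqrt1 : (1 : ℝ) ≤ Real.sqrt 2 := by
    have := Real.sqrt_le_sqrt (show (1:ℝ) ≤ 2 by norm_num)
    simpa using this
  have hsqrt43 : (4:ℝ)/3 ≤ Real.sqrt 2 := by
    rw [show (4:ℝ)/3 = Real.sqrt ((4/3)^2) by rw [Real.sqrt_sq (by norm_num)]]
    apply Real.sqrt_le_sqrt; norm_num
  rcases Nat.lt_or_ge m 4 with h4 | h4
  · interval_cases m
    · simpa using hsqrt1
    · have hε3 : ε ≤ 1/2 := by norm_num at hε2; linarith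
      have h2 : Real.sqrt 2 ^ (3-1) = 2 := Real.sq_sqrt (by norm_num)
      rw [h2]
      simpa using by linarith
  · have hm3 : (3:ℝ) ≤ (m:ℝ) - 1 := by
      have : (4:ℝ) ≤ (m:ℝ) := by exact_mod_cast h4
      linarith
    have hε3 : ε ≤ 1/3 := le_trans hε2 (by rw [div_le_div_iff₀ (by linarith) (by norm_num)]; linarith)
    have hbase : 1 + ε ≤ Real.sqrt 2 := by linarith
    calc (1+ε)^(m-2) ≤ Real.sqrt 2 ^ (m-2) :=
          pow_le_pow_left₀ (by linarith) hbase _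
      _ ≤ Real.sqrt 2 ^ (m-1) := pow_le_pow_right₀ hsqrt1 (by omega)

lemma aux_coeff_zero_ne (m : ℕ) (hm : 2 ≤ m) (f : Polynomial ℤ) (hmonic : f.Monic)
    (hdeg : f.natDegree = m) (hirr : Irreducible (f.map (Int.castRingHom ℚ))) :
    f.coeff 0 ≠ 0 := by
  intro h0
  set fQ := f.map (Int.castRingHom ℚ) with hfQ
  have hX : (X : ℚ[X]) ∣ fQ := by
    rw [Polynomial.X_dvd_iff, hfQ, Polynomial.coeff_map, h0, map_zero]
  obtain ⟨c, hc⟩ := hX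
  rcases hirr.isUnit_or_isUnit hc with h | h
  · exact Polynomial.not_isUnit_X h
  · have hfQ0 : fQ ≠ 0 := (hmonic.map (Int.castRingHom ℚ)).ne_zero
    have hc0 : c ≠ 0 := by rintro rfl; simp at hc; exact hfQ0 hc
    have hdeg' : fQ.natDegree = m := by
      rw [hfQ, hmonic.natDegree_map, hdeg]
    rw [hc, Polynomial.natDegree_mul Polynomial.X_ne_zero hc0, Polynomial.natDegree_X,
      Polynomial.natDegree_eq_zero_of_isUnit h] at hdeg'
    omega

lemma aux_normTwo (m : ℕ) (hm : 2 ≤ m) (f : Polynomial ℤ) (hmonic : f.Monic)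
    (hdeg : f.natDegree = m) (h0 : f.coeff 0 ≠ 0) :
    Real.sqrt 2 ≤ normTwo (m + 1) f := by
  rw [normTwo]
  apply Real.sqrt_le_sqrt
  have hlc : f.coeff m = 1 := by
    have := hmonic.leadingCoeff
    rwa [Polynomial.leadingCoeff, hdeg] at this
  have h1 : (1:ℝ) ≤ |(f.coeff 0 : ℝ)| := by
    exact_mod_cast Int.one_le_abs h0
  have h2 : (1:ℝ) ≤ ((f.coeff 0 : ℝ))^2 := by
    rw [← sq_abs]; nlinarith
  have hsubset : ({0, m} : Finset ℕ) ⊆ Finset.range (m+1) := by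
    intro x hx
    simp only [Finset.mem_insert, Finset.mem_singleton] at hx
    rcases hx with rfl | rfl <;> simp [Finset.mem_range] <;> omega
  calc (2:ℝ) ≤ ∑ i ∈ ({0, m} : Finset ℕ), ((f.coeff i : ℝ))^2 := by
        rw [Finset.sum_pair (show 0 ≠ m by omega), hlc]
        push_cast
        nlinarith
    _ ≤ ∑ i ∈ Finset.range (m+1), ((f.coeff i : ℝ))^2 :=
        Finset.sum_le_sum_of_subset_of_nonneg hsubset (fun _ _ _ => sq_nonneg _)

lemma aux_root_bound {m : ℕ} (hm : 1 ≤ m) (f : Polynomial ℤ)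
    (hmonic : f.Monic) (hdeg : f.natDegree = m) (B : ℝ)
    (hB : ∀ i < m, |(f.coeff i : ℝ)| ≤ B)
    (z : ℂ) (hz : Polynomial.aeval z f = 0) : ‖z‖ ≤ 1 + B := by
  by_contra hcon
  push_neg at hcon
  set r := ‖z‖ with hr
  have hB0 : 0 ≤ B := le_trans (abs_nonneg _) (hB 0 (by omega))
  have hr1 : (1:ℝ) < r := by linarith
  have hsum : (z:ℂ)^m = - ∑ i ∈ Finset.range m, (f.coeff i : ℂ) * z ^ i := by
    have h0 := hz
    rw [Polynomial.aeval_eq_sum_range, hdeg, Finset.sum_range_succ] at h0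
    have hlc : f.coeff m = 1 := by
      have := hmonic.leadingCoeff
      rwa [Polynomial.leadingCoeff, hdeg] at this
    rw [hlc] at h0
    simp only [zsmul_eq_mul, Int.cast_one, one_mul] at h0
    linear_combination h0
  have habs : r ^ m ≤ B * ∑ i ∈ Finset.range m, r ^ i := by
    calc r ^ m = ‖z ^ m‖ := by rw [norm_pow]
    _ = ‖∑ i ∈ Finset.range m, (f.coeff i : ℂ) * z ^ i‖ := by
        rw [hsum, norm_neg]
    _ ≤ ∑ i ∈ Finset.range m, ‖(f.coeff i : ℂ) * z ^ i‖ := by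
        exact (norm_sum_le _ _)
    _ ≤ ∑ i ∈ Finset.range m, B * r ^ i := by
        apply Finset.sum_le_sum
        intro i hi
        rw [norm_mul, norm_pow]
        have : ‖(f.coeff i : ℂ)‖ = |(f.coeff i : ℝ)| := by
          rw [Complex.norm_intCast]
        rw [this]
        exact mul_le_mul_of_nonneg_right (hB i (Finset.mem_range.mp hi)) (by positivity)
    _ = B * ∑ i ∈ Finset.range m, r ^ i := by rw [Finset.mul_sum]
  have hgeom : (∑ i ∈ Finset.range m, r ^ i) * (r - 1) = r ^ m - 1 := geom_sum_mul r m
  have hpos : 0 < ∑ i ∈ Finset.range m, r ^ i := by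
    apply Finset.sum_pos
    · intro i _; positivity
    · exact Finset.nonempty_range_iff.mpr (by omega)
  nlinarith [mul_lt_mul_of_pos_left (show B < r - 1 by linarith) hpos]

lemma aux_upper (m : ℕ) (hm : 2 ≤ m) (α δ ε : ℝ) (hε : 0 ≤ ε) (hδ : |δ| ≤ ε)
    (a : Fin m → ℤ) (Ma : ℝ) (hMa0 : 0 ≤ Ma) (hMa : ∀ i, |(a i : ℝ)| ≤ Ma) :
    |(∑ i, (a i : ℝ) * (α + δ) ^ (i : ℕ)) - ∑ i, (a i : ℝ) * α ^ (i : ℕ)|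
      ≤ ε * (Ma * ((m : ℝ) * ((m : ℝ) - 1)) * ((1 + ε) * max 1 |α|) ^ (m - 2)) := by
  set u := max 1 |α| with hu
  have hu1 : (1:ℝ) ≤ u := le_max_left _ _
  have hcu : (1:ℝ) ≤ (1 + ε) * u := by nlinarith
  have hαu : |α| ≤ (1 + ε) * u := by
    have : |α| ≤ u := le_max_right _ _
    nlinarith
  have hαδu : |α + δ| ≤ (1 + ε) * u := by
    have h1 : |α + δ| ≤ |α| + ε := (abs_add_le _ _).trans (by linarith)
    have : |α| ≤ u := le_max_right _ _
    nlinarith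
  have hm1R : (0:ℝ) ≤ (m:ℝ) - 1 := by
    have : (2:ℝ) ≤ (m:ℝ) := by exact_mod_cast hm
    linarith
  calc |(∑ i, (a i : ℝ) * (α + δ) ^ (i : ℕ)) - ∑ i, (a i : ℝ) * α ^ (i : ℕ)|
      = |∑ i : Fin m, (a i : ℝ) * ((α + δ) ^ (i:ℕ) - α ^ (i:ℕ))| := by
        rw [← Finset.sum_sub_distrib]
        congr 1
        exact Finset.sum_congr rfl fun i _ => (mul_sub _ _ _).symm
    _ ≤ ∑ i : Fin m, |(a i : ℝ) * ((α + δ) ^ (i:ℕ) - α ^ (i:ℕ))| :=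
        Finset.abs_sum_le_sum_abs _ _
    _ ≤ ∑ _i : Fin m, Ma * (((m:ℝ) - 1) * ε * ((1 + ε) * u) ^ (m - 2)) := by
        apply Finset.sum_le_sum
        intro i _
        rw [abs_mul]
        have hdiff : |(α + δ) ^ (i:ℕ) - α ^ (i:ℕ)|
            ≤ ((i:ℕ) : ℝ) * |δ| * ((1 + ε) * u) ^ ((i:ℕ) - 1) := by
          have := aux_pow_diff (α + δ) α ((1 + ε) * u) hαδu hαu (i:ℕ)
          simpa using this
        have hstep : ((i:ℕ) : ℝ) * |δ| * ((1 + ε) * u) ^ ((i:ℕ) - 1)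
            ≤ ((m:ℝ) - 1) * ε * ((1 + ε) * u) ^ (m - 2) := by
          have hi : ((i:ℕ) : ℝ) ≤ (m:ℝ) - 1 := by
            have h1 := i.isLt
            have : ((i:ℕ):ℝ) + 1 ≤ (m:ℝ) := by exact_mod_cast h1
            linarith
          have hp : ((1 + ε) * u) ^ ((i:ℕ) - 1) ≤ ((1 + ε) * u) ^ (m - 2) :=
            pow_le_pow_right₀ hcu (by have := i.isLt; omega)
          have h1 : ((i:ℕ) : ℝ) * |δ| ≤ ((m:ℝ) - 1) * ε :=
            mul_le_mul hi hδ (abs_nonneg _) hm1R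
          exact mul_le_mul h1 hp (by positivity) (by positivity)
        calc |(a i : ℝ)| * |(α + δ) ^ (i:ℕ) - α ^ (i:ℕ)|
            ≤ Ma * (((i:ℕ) : ℝ) * |δ| * ((1 + ε) * u) ^ ((i:ℕ) - 1)) :=
              mul_le_mul (hMa i) hdiff (abs_nonneg _) hMa0
          _ ≤ Ma * (((m:ℝ) - 1) * ε * ((1 + ε) * u) ^ (m - 2)) :=
              mul_le_mul_of_nonneg_left hstep hMa0
    _ = ε * (Ma * ((m : ℝ) * ((m : ℝ) - 1)) * ((1 + ε) * u) ^ (m - 2)) := by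
        rw [Finset.sum_const, Finset.card_univ, Fintype.card_fin, nsmul_eq_mul]
        ring

open IntermediateField Module in
lemma aux_lower_bound (m : ℕ) (hm : 2 ≤ m) (f : Polynomial ℤ)
    (hmonic : f.Monic) (hdeg : f.natDegree = m)
    (hirr : Irreducible (f.map (Int.castRingHom ℚ)))
    (α : ℝ) (hroot : Polynomial.aeval α f = 0)
    (h : Fin m → ℤ) (H : ℝ) (hH0 : 0 < H) (hH : ∀ i, |(h i : ℝ)| ≤ H)
    (hne : (∑ i, (h i : ℝ) * α ^ (i:ℕ)) ≠ 0) :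
    1 / (H * Malpha m f) ^ (m-1) ≤ |∑ i, (h i : ℝ) * α ^ (i:ℕ)| := by
  classical
  set B : ℝ := ((fninf m f : ℤ) : ℝ) with hBdef
  have hB0 : 0 ≤ B := by rw [hBdef, fninf]; positivity
  have hBcoeff : ∀ i < m, |(f.coeff i : ℝ)| ≤ B := by
    intro i hi
    rw [hBdef]
    have : (f.coeff i).natAbs ≤ (Finset.univ.sup fun i : Fin m => (f.coeff (i : ℕ)).natAbs) :=
      Finset.le_sup (f := fun i : Fin m => (f.coeff (i : ℕ)).natAbs) (Finset.mem_univ (⟨i, hi⟩ : Fin m))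
    have h2 : (((f.coeff i).natAbs : ℕ) : ℝ) ≤ B := by
      rw [hBdef, fninf]; push_cast; exact_mod_cast this
    rw [Nat.cast_natAbs] at h2
    push_cast at h2
    exact h2
  have hMα : Malpha m f = (m:ℝ) * (1+B)^(m-1) := rfl
  have hMαpos : 0 < Malpha m f := by rw [hMα]; positivity
  -- the rational polynomial
  set fQ := f.map (Int.castRingHom ℚ) with hfQ
  have hfQmonic : fQ.Monic := hmonic.map _
  have hrootQ : Polynomial.aeval α fQ = 0 := by
    rw [hfQ, show Int.castRingHom ℚ = algebraMap ℤ ℚ from rfl, Polynomial.aeval_map_algebraMap]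
    exact hroot
  have hintα : IsIntegral ℚ α := ⟨fQ, hfQmonic, by rwa [Polynomial.aeval_def] at hrootQ⟩
  haveI : FiniteDimensional ℚ ℚ⟮α⟯ := adjoin.finiteDimensional hintα
  have hminpoly : minpoly ℚ α = fQ :=
    (minpoly.eq_of_irreducible_of_monic hirr hrootQ hfQmonic).symm
  have hfinrank : finrank ℚ ℚ⟮α⟯ = m := by
    rw [adjoin.finrank hintα, hminpoly, hfQ, hmonic.natDegree_map, hdeg]
  set αK : ℚ⟮α⟯ := AdjoinSimple.gen ℚ α with hαK
  have hαKval : algebraMap ℚ⟮α⟯ ℝ αK = α := rfl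
  have hαKroot : Polynomial.eval₂ (algebraMap ℤ ℚ⟮α⟯) αK f = 0 := by
    apply (algebraMap ℚ⟮α⟯ ℝ).injective
    rw [Polynomial.hom_eval₂, map_zero]
    have : (algebraMap ℚ⟮α⟯ ℝ).comp (algebraMap ℤ ℚ⟮α⟯) = algebraMap ℤ ℝ := by
      ext n; simp
    rw [this, hαKval, ← Polynomial.aeval_def]
    exact hroot
  have hαKint : IsIntegral ℤ αK := ⟨f, hmonic, hαKroot⟩
  set βK : ℚ⟮α⟯ := ∑ i : Fin m, (h i : ℚ⟮α⟯) * αK ^ (i:ℕ) with hβKdef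
  have hβKval : algebraMap ℚ⟮α⟯ ℝ βK = ∑ i, (h i : ℝ) * α ^ (i:ℕ) := by
    rw [hβKdef, map_sum]
    refine Finset.sum_congr rfl fun i _ => ?_
    rw [map_mul, map_pow, hαKval, map_intCast]
  have hβKint : IsIntegral ℤ βK := by
    apply IsIntegral.sum
    intro i _
    exact (isIntegral_algebraMap (x := h i)).mul (hαKint.pow _)
  have hβK0 : βK ≠ 0 := by
    intro hcon
    apply hne
    rw [← hβKval, hcon, map_zero]
  set n : ℚ := Algebra.norm ℚ βK with hn
  have hnint : IsIntegral ℤ n := Algebra.isIntegral_norm ℚ hβKint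
  obtain ⟨N, hN⟩ := IsIntegrallyClosed.isIntegral_iff.mp hnint
  have hn0 : n ≠ 0 := by
    rw [hn]
    exact Algebra.norm_ne_zero_iff.mpr hβK0
  have hN0 : N ≠ 0 := by rintro rfl; simp at hN; exact hn0 hN.symm
  have hN1 : (1:ℝ) ≤ |(N:ℝ)| := by exact_mod_cast Int.one_le_abs (by exact_mod_cast hN0)
  -- product over embeddings
  have hprod : |(N:ℝ)| = ∏ σ : ℚ⟮α⟯ →ₐ[ℚ] ℂ, ‖σ βK‖ := by
    have h1 : algebraMap ℚ ℂ n = ∏ σ : ℚ⟮α⟯ →ₐ[ℚ] ℂ, σ βK :=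
      Algebra.norm_eq_prod_embeddings ℚ ℂ βK
    have h2 : ‖algebraMap ℚ ℂ n‖ = ∏ σ : ℚ⟮α⟯ →ₐ[ℚ] ℂ, ‖σ βK‖ := by
      rw [h1, norm_prod]
    rw [← h2, ← hN]
    have h3 : (algebraMap ℚ ℂ) ((algebraMap ℤ ℚ) N) = (N : ℂ) := by push_cast; simp
    rw [h3, Complex.norm_intCast]
  -- the real embedding
  set σ₀ : ℚ⟮α⟯ →ₐ[ℚ] ℂ := (Complex.ofRealHom.comp (algebraMap ℚ⟮α⟯ ℝ)).toRatAlgHom with hσ₀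
  have hσ₀β : ‖σ₀ βK‖ = |∑ i, (h i : ℝ) * α ^ (i:ℕ)| := by
    have : σ₀ βK = Complex.ofRealHom (algebraMap ℚ⟮α⟯ ℝ βK) := rfl
    rw [this, hβKval, Complex.ofRealHom_eq_coe, Complex.norm_real, Real.norm_eq_abs]
  -- bound on each embedding
  have hbound : ∀ σ : ℚ⟮α⟯ →ₐ[ℚ] ℂ, ‖σ βK‖ ≤ H * Malpha m f := by
    intro σ
    have hσroot : Polynomial.aeval (σ αK) f = 0 := by
      have hcomp : (σ : ℚ⟮α⟯ →+* ℂ).comp (algebraMap ℤ ℚ⟮α⟯) = algebraMap ℤ ℂ := by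
        ext n; simp
      have h2 : (σ : ℚ⟮α⟯ →+* ℂ) (Polynomial.eval₂ (algebraMap ℤ ℚ⟮α⟯) αK f)
          = Polynomial.eval₂ (algebraMap ℤ ℂ) (σ αK) f := by
        rw [Polynomial.hom_eval₂, hcomp]; rfl
      rw [Polynomial.aeval_def, ← h2, hαKroot, map_zero]
    have hσα : ‖σ αK‖ ≤ 1 + B :=
      aux_root_bound (by omega) f hmonic hdeg B hBcoeff _ hσroot
    have hσβ : σ βK = ∑ i : Fin m, (h i : ℂ) * (σ αK) ^ (i:ℕ) := by
      rw [hβKdef, map_sum]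
      refine Finset.sum_congr rfl fun i _ => ?_
      rw [map_mul, map_pow, map_intCast]
    rw [hσβ]
    calc ‖∑ i : Fin m, (h i : ℂ) * (σ αK) ^ (i:ℕ)‖
        ≤ ∑ i : Fin m, ‖(h i : ℂ) * (σ αK) ^ (i:ℕ)‖ := norm_sum_le _ _
      _ ≤ ∑ i : Fin m, H * (1+B)^(m-1) := by
          apply Finset.sum_le_sum
          intro i _
          rw [norm_mul, norm_pow]
          have h1 : ‖(h i : ℂ)‖ ≤ H := by
            have : ‖(h i : ℂ)‖ = |(h i : ℝ)| := by
              rw [Complex.norm_intCast]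
            rw [this]; exact hH i
          have h2 : ‖σ αK‖ ^ (i:ℕ) ≤ (1+B)^(m-1) := by
            calc ‖σ αK‖ ^ (i:ℕ) ≤ (1+B)^(i:ℕ) :=
                pow_le_pow_left₀ (by positivity) hσα _
            _ ≤ (1+B)^(m-1) := pow_le_pow_right₀ (by linarith) (by have := i.isLt; omega)
          exact mul_le_mul h1 h2 (by positivity) (le_of_lt hH0)
      _ = H * Malpha m f := by
          rw [hMα, Finset.sum_const, Finset.card_univ, Fintype.card_fin, nsmul_eq_mul]
          ring
  -- cardinality of embeddings
  have hcard : Fintype.card (ℚ⟮α⟯ →ₐ[ℚ] ℂ) = m := by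
    rw [AlgHom.card ℚ ℚ⟮α⟯ ℂ]; exact hfinrank
  -- split product
  have hsplit : (∏ σ : ℚ⟮α⟯ →ₐ[ℚ] ℂ, ‖σ βK‖) =
      ‖σ₀ βK‖ * ∏ σ ∈ Finset.univ.erase σ₀, ‖σ βK‖ :=
    (Finset.mul_prod_erase Finset.univ _ (Finset.mem_univ σ₀)).symm
  have herase : ∏ σ ∈ Finset.univ.erase σ₀, ‖σ βK‖ ≤ (H * Malpha m f)^(m-1) := by
    have hc : (Finset.univ.erase σ₀).card = m - 1 := by
      rw [Finset.card_erase_of_mem (Finset.mem_univ _), Finset.card_univ, hcard]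
    calc ∏ σ ∈ Finset.univ.erase σ₀, ‖σ βK‖
        ≤ ∏ _σ ∈ Finset.univ.erase σ₀, (H * Malpha m f) :=
          Finset.prod_le_prod (fun _ _ => norm_nonneg _) (fun σ _ => hbound σ)
      _ = (H * Malpha m f) ^ (m-1) := by rw [Finset.prod_const, hc]
  have hfinal : (1:ℝ) ≤ |∑ i, (h i : ℝ) * α ^ (i:ℕ)| * (H * Malpha m f)^(m-1) := by
    calc (1:ℝ) ≤ |(N:ℝ)| := hN1
    _ = ‖σ₀ βK‖ * ∏ σ ∈ Finset.univ.erase σ₀, ‖σ βK‖ := by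
        rw [hprod, hsplit]
    _ ≤ |∑ i, (h i : ℝ) * α ^ (i:ℕ)| * (H * Malpha m f)^(m-1) := by
        rw [hσ₀β]
        apply mul_le_mul_of_nonneg_left herase (abs_nonneg _)
  rw [div_le_iff₀ (by positivity)]
  linarith

theorem stmt_9 (m : ℕ) (hm : 2 ≤ m) (f : Polynomial ℤ)
    (hmonic : f.Monic) (hdeg : f.natDegree = m)
    (hirr : Irreducible (f.map (Int.castRingHom ℚ)))
    (α : ℝ) (hroot : Polynomial.aeval α f = 0)
    (a : Fin m → ℤ) (s : ℤ) (hs : 0 < s)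
    (hnotint : ∀ z : ℤ, (∑ i, (a i : ℝ) * α ^ (i : ℕ)) / (s : ℝ) ≠ (z : ℝ))
    (d : ℝ) (hd0 : 0 < d)
    (hd : d ≥ ((m : ℝ) - 1) *
      (1 + ((max (opc a) s : ℤ) : ℝ) ^ m * Palpha m f * Salpha m α ^ (m + 1))) :
    ∀ ε : ℝ, 0 < ε → ε ≤ 1 / d →
      ∀ aε ∈ ({(∑ i, (a i : ℝ) * (α + ε) ^ (i : ℕ)),
          (∑ i, (a i : ℝ) * (α - ε) ^ (i : ℕ))} : Set ℝ),
        |aε - ∑ i, (a i : ℝ) * α ^ (i : ℕ)| <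
            |(∑ i, (a i : ℝ) * α ^ (i : ℕ)) -
              (s : ℝ) * (⌊(∑ i, (a i : ℝ) * α ^ (i : ℕ)) / (s : ℝ)⌋ : ℤ)| ∧
          |aε - ∑ i, (a i : ℝ) * α ^ (i : ℕ)| <
            |(∑ i, (a i : ℝ) * α ^ (i : ℕ)) -
              (s : ℝ) * (⌈(∑ i, (a i : ℝ) * α ^ (i : ℕ)) / (s : ℝ)⌉ : ℤ)| := by
  intro ε hε hεd aε haε
  classical
  set A := ∑ i, (a i : ℝ) * α ^ (i : ℕ) with hA
  set M : ℝ := ((max (opc a) s : ℤ) : ℝ) with hMdef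
  -- basic facts about M
  have hs0R : (0:ℝ) < (s:ℝ) := by exact_mod_cast hs
  have hs1 : (1:ℝ) ≤ (s:ℝ) := by exact_mod_cast hs
  have hsM : (s:ℝ) ≤ M := by rw [hMdef]; exact_mod_cast le_max_right _ _
  have hM1 : (1:ℝ) ≤ M := le_trans hs1 hsM
  have hM0 : (0:ℝ) ≤ M := by linarith
  have hMa : ∀ i, |(a i : ℝ)| ≤ M := by
    intro i
    have h1 : (a i).natAbs ≤ (Finset.univ.sup fun j => (a j).natAbs) :=
      Finset.le_sup (f := fun j => (a j).natAbs) (Finset.mem_univ i)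
    have h2 : ((((a i).natAbs : ℕ)) : ℝ) ≤ M := by
      rw [hMdef]
      have h3 : (opc a : ℝ) ≤ ((max (opc a) s : ℤ) : ℝ) := by exact_mod_cast le_max_left _ _
      refine le_trans ?_ h3
      rw [opc]; push_cast; exact_mod_cast h1
    rw [Nat.cast_natAbs] at h2
    push_cast at h2
    exact h2
  -- basic facts about S
  set S := Salpha m α with hSdef
  have hS1 : (1:ℝ) ≤ S := by
    rw [hSdef, Salpha]
    calc (1:ℝ) = |α|^0 := by simp
      _ ≤ ∑ k ∈ Finset.range m, |α|^k :=
        Finset.single_le_sum (f := fun k => |α|^k) (fun k _ => by positivity)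
          (Finset.mem_range.mpr (by omega))
  have hS0 : (0:ℝ) < S := by linarith
  set u := max 1 |α| with hu
  have hu1 : (1:ℝ) ≤ u := le_max_left _ _
  have huS : u ^ (m-1) ≤ S := by
    rcases max_cases (1:ℝ) |α| with ⟨h1, _⟩ | ⟨h1, _⟩
    · rw [hu, h1, one_pow]; exact hS1
    · rw [hu, h1, hSdef, Salpha]
      exact Finset.single_le_sum (f := fun k => |α|^k) (fun k _ => by positivity)
        (Finset.mem_range.mpr (by omega))
  -- Malpha, Palpha facts
  have hMα0 : (0:ℝ) < Malpha m f := by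
    rw [Malpha]
    have hm0 : (0:ℝ) < (m:ℝ) := by positivity
    have hf0 : (0:ℝ) ≤ (fninf m f : ℝ) := by
      rw [fninf]; positivity
    positivity
  have hN2 : Real.sqrt 2 ≤ normTwo (m+1) f :=
    aux_normTwo m hm f hmonic hdeg (aux_coeff_zero_ne m hm f hmonic hdeg hirr)
  have hN20 : (0:ℝ) ≤ normTwo (m+1) f := by rw [normTwo]; positivity
  have hsqm0 : (0:ℝ) ≤ Real.sqrt m := Real.sqrt_nonneg _
  have hP0 : (0:ℝ) ≤ Palpha m f := by
    rw [Palpha]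
    positivity
  -- d facts
  have hm2R : (2:ℝ) ≤ (m:ℝ) := by exact_mod_cast hm
  have hm1R : (1:ℝ) ≤ (m:ℝ) - 1 := by linarith
  have hX0 : (0:ℝ) ≤ M ^ m * Palpha m f * S ^ (m+1) := by positivity
  have hdm : (m:ℝ) - 1 ≤ d := le_trans (by nlinarith) hd
  have hεm : ε ≤ 1/((m:ℝ)-1) := hεd.trans (one_div_le_one_div_of_le (by linarith) hdm)
  -- A - s z is never zero
  have hAne : ∀ z : ℤ, A - (s:ℝ) * (z:ℝ) ≠ 0 := by
    intro z hzero
    apply hnotint z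
    rw [sub_eq_zero] at hzero
    rw [hzero]
    field_simp
  -- lower bound for near multiples
  have lower : ∀ z : ℤ, |A - (s:ℝ) * (z:ℝ)| ≤ (s:ℝ) →
      1 / ((M * S) * Malpha m f)^(m-1) ≤ |A - (s:ℝ) * (z:ℝ)| := by
    intro z hzs
    set i0 : Fin m := ⟨0, by omega⟩ with hi0
    obtain ⟨hc, hhc0, hhc1⟩ : ∃ hc : Fin m → ℤ, hc i0 = a i0 - s * z ∧ ∀ i, i ≠ i0 → hc i = a i :=
      ⟨fun i => if i = i0 then a i - s * z else a i, by simp, fun i hi => by simp [hi]⟩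
    have hrepr : ∑ i, (hc i : ℝ) * α^(i:ℕ) = A - (s:ℝ) * (z:ℝ) := by
      have hterm : ∀ i : Fin m, (hc i : ℝ) * α^(i:ℕ)
          = (a i : ℝ) * α^(i:ℕ) + (if i = i0 then -((s:ℝ)*(z:ℝ)) else 0) := by
        intro i
        by_cases h : i = i0
        · subst h
          rw [hhc0, if_pos rfl]
          have h4 : ((i0:ℕ)) = 0 := rfl
          rw [h4, pow_zero]
          push_cast
          ring
        · rw [hhc1 i h, if_neg h]
          ring
      rw [Finset.sum_congr rfl (fun i _ => hterm i), Finset.sum_add_distrib,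
        Finset.sum_ite_eq' Finset.univ i0 (fun _ => -((s:ℝ)*(z:ℝ))),
        if_pos (Finset.mem_univ _), hA]
      ring
    have herase : ∑ i ∈ Finset.univ.erase i0, |α|^(i:ℕ) = S - 1 := by
      have h1 : |α|^((i0:ℕ)) + ∑ i ∈ Finset.univ.erase i0, |α|^(i:ℕ)
          = ∑ i : Fin m, |α|^(i:ℕ) :=
        Finset.add_sum_erase Finset.univ (fun i : Fin m => |α|^(i:ℕ)) (Finset.mem_univ i0)
      have h2 : ∑ i : Fin m, |α|^(i:ℕ) = S := by
        rw [hSdef, Salpha, Fin.sum_univ_eq_sum_range (fun k => |α|^k)]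
      have h3 : ((i0:ℕ)) = 0 := rfl
      rw [h3, pow_zero] at h1
      linarith
    have hcb : ∀ i, |(hc i : ℝ)| ≤ M * S := by
      intro i
      by_cases h : i = i0
      · subst h
        have hval : (hc i0 : ℝ)
            = (A - (s:ℝ)*(z:ℝ)) - ∑ i ∈ Finset.univ.erase i0, (a i : ℝ) * α^(i:ℕ) := by
          have hsplit : (a i0 : ℝ) * α^((i0:ℕ))
              + ∑ i ∈ Finset.univ.erase i0, (a i : ℝ) * α^(i:ℕ) = A :=
            Finset.add_sum_erase Finset.univ (fun i : Fin m => (a i : ℝ) * α^(i:ℕ))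
              (Finset.mem_univ i0)
          have h3 : ((i0:ℕ)) = 0 := rfl
          rw [h3, pow_zero, mul_one] at hsplit
          have : (hc i0 : ℝ) = (a i0 : ℝ) - (s:ℝ)*(z:ℝ) := by
            rw [hhc0]; push_cast; ring
          rw [this]
          linarith
        have hsum2 : |∑ i ∈ Finset.univ.erase i0, (a i : ℝ) * α^(i:ℕ)| ≤ M * (S - 1) := by
          calc |∑ i ∈ Finset.univ.erase i0, (a i : ℝ) * α^(i:ℕ)|
              ≤ ∑ i ∈ Finset.univ.erase i0, |(a i : ℝ) * α^(i:ℕ)| :=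
                Finset.abs_sum_le_sum_abs _ _
            _ ≤ ∑ i ∈ Finset.univ.erase i0, M * |α|^(i:ℕ) := by
                apply Finset.sum_le_sum
                intro i _
                rw [abs_mul, abs_pow]
                exact mul_le_mul_of_nonneg_right (hMa i) (by positivity)
            _ = M * (S - 1) := by rw [← Finset.mul_sum, herase]
        calc |(hc i0 : ℝ)| ≤ |A - (s:ℝ)*(z:ℝ)|
              + |∑ i ∈ Finset.univ.erase i0, (a i : ℝ) * α^(i:ℕ)| := by
              rw [hval]; exact abs_sub _ _
          _ ≤ (s:ℝ) + M * (S - 1) := add_le_add hzs hsum2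
          _ ≤ M * S := by nlinarith
      · have : (hc i : ℝ) = (a i : ℝ) := by rw [hhc1 i h]
        rw [this]
        calc |(a i : ℝ)| ≤ M := hMa i
          _ ≤ M * S := by nlinarith
    have hne' : ∑ i, (hc i : ℝ) * α^(i:ℕ) ≠ 0 := by rw [hrepr]; exact hAne z
    have hres := aux_lower_bound m hm f hmonic hdeg hirr α hroot hc (M*S)
      (by nlinarith) hcb hne'
    rwa [hrepr] at hres
  -- the main strict inequality
  have hRpos : (0:ℝ) < ((M * S) * Malpha m f)^(m-1) := by positivity
  have main : ε * (M * ((m:ℝ) * ((m:ℝ) - 1)) * ((1 + ε) * u) ^ (m - 2))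
      < 1 / ((M * S) * Malpha m f)^(m-1) := by
    rw [lt_div_iff₀ hRpos]
    set E := M * ((m:ℝ) * ((m:ℝ) - 1)) * ((1 + ε) * u) ^ (m - 2)
      * ((M * S) * Malpha m f)^(m-1) with hE
    have hE0 : (0:ℝ) ≤ E := by
      rw [hE]
      have h1 : (0:ℝ) ≤ (1+ε)*u := by nlinarith
      positivity
    have hEd : E < d := by
      obtain ⟨k, rfl⟩ : ∃ k, m = k + 2 := ⟨m - 2, by omega⟩
      have e1 : k + 2 - 1 = k + 1 := rfl
      have e2 : k + 2 - 2 = k := rfl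
      have e3 : k + 2 + 1 = k + 3 := rfl
      rw [e1, e2] at hE
      have hcomb : (1+ε)^k ≤ normTwo (k+2+1) f ^ (k+1) := by
        have hc1 := aux_comb (k+2) hm ε (le_of_lt hε) hεm
        rw [e1, e2] at hc1
        exact hc1.trans (pow_le_pow_left₀ (Real.sqrt_nonneg 2) hN2 _)
      have hc2 : u^k * S^(k+1) ≤ S^(k+3) := by
        have hu2 : u^k ≤ u^(k+1) := pow_le_pow_right₀ hu1 (by omega)
        have hu3 : u^(k+1) ≤ S := by
          have := huS
          rw [e1] at this
          exact this
        calc u^k * S^(k+1) ≤ S * S^(k+1) :=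
              mul_le_mul_of_nonneg_right (hu2.trans hu3) (by positivity)
          _ = S^(k+2) := by ring
          _ ≤ S^(k+3) := pow_le_pow_right₀ (by linarith) (by omega)
      have hc3 : (Malpha (k+2) f)^(k+1) ≤ (Malpha (k+2) f + Real.sqrt (k+2:ℕ))^(k+1) :=
        pow_le_pow_left₀ (le_of_lt hMα0) (by linarith) _
      have hcore : (1+ε)^k * (u^k * S^(k+1)) * (Malpha (k+2) f)^(k+1)
          ≤ normTwo (k+2+1) f ^ (k+1) * S^(k+3) * (Malpha (k+2) f + Real.sqrt (k+2:ℕ))^(k+1) := by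
        apply mul_le_mul _ hc3 (by positivity) (by positivity)
        apply mul_le_mul hcomb hc2 (by positivity) (by positivity)
      have hEle : E ≤ (((k+2:ℕ):ℝ) - 1) * (M ^ (k+2) * Palpha (k+2) f * S ^ (k+2+1)) := by
        have hexp : E = ((((k+2:ℕ):ℝ) - 1) * M^(k+2) * ((k+2:ℕ):ℝ))
            * ((1+ε)^k * (u^k * S^(k+1)) * (Malpha (k+2) f)^(k+1)) := by
          rw [hE, mul_pow, mul_pow]
          ring
        have hrhs : (((k+2:ℕ):ℝ) - 1) * (M ^ (k+2) * Palpha (k+2) f * S ^ (k+2+1))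
            = ((((k+2:ℕ):ℝ) - 1) * M^(k+2) * ((k+2:ℕ):ℝ))
            * (normTwo (k+2+1) f ^ (k+1) * S^(k+3) * (Malpha (k+2) f + Real.sqrt (k+2:ℕ))^(k+1)) := by
          rw [Palpha, e1, e3]
          ring
        rw [hexp, hrhs]
        apply mul_le_mul_of_nonneg_left hcore
        have : (0:ℝ) ≤ (((k+2:ℕ):ℝ) - 1) := by linarith
        positivity
      calc E ≤ (((k+2:ℕ):ℝ) - 1) * (M ^ (k+2) * Palpha (k+2) f * S ^ (k+2+1)) := hEle
        _ < (((k+2:ℕ):ℝ) - 1) * (1 + M ^ (k+2) * Palpha (k+2) f * S ^ (k+2+1)) := by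
            have h1 : (0:ℝ) < (((k+2:ℕ):ℝ) - 1) := by linarith
            nlinarith
        _ ≤ d := hd
    calc ε * (M * ((m:ℝ) * ((m:ℝ) - 1)) * ((1 + ε) * u) ^ (m - 2))
        * ((M * S) * Malpha m f)^(m-1) = ε * E := by rw [hE]; ring
      _ ≤ (1/d) * E := mul_le_mul_of_nonneg_right hεd hE0
      _ = E / d := by ring
      _ < 1 := (div_lt_one hd0).mpr hEd
  -- closeness of floor and ceil multiples
  have hfloor : |A - (s:ℝ) * ((⌊A / (s:ℝ)⌋ : ℤ) : ℝ)| ≤ (s:ℝ) := by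
    have h1 : ((⌊A / (s:ℝ)⌋ : ℤ) : ℝ) ≤ A / (s:ℝ) := Int.floor_le _
    have h2 : A / (s:ℝ) < ((⌊A / (s:ℝ)⌋ : ℤ) : ℝ) + 1 := Int.lt_floor_add_one _
    rw [le_div_iff₀ hs0R] at h1
    rw [div_lt_iff₀ hs0R] at h2
    rw [abs_of_nonneg (by nlinarith)]
    nlinarith
  have hceil : |A - (s:ℝ) * ((⌈A / (s:ℝ)⌉ : ℤ) : ℝ)| ≤ (s:ℝ) := by
    have h1 : A / (s:ℝ) ≤ ((⌈A / (s:ℝ)⌉ : ℤ) : ℝ) := Int.le_ceil _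
    have h2 : ((⌈A / (s:ℝ)⌉ : ℤ) : ℝ) < A / (s:ℝ) + 1 := Int.ceil_lt_add_one _
    rw [div_le_iff₀ hs0R] at h1
    have h2' : ((⌈A / (s:ℝ)⌉ : ℤ) : ℝ) * (s:ℝ) < (A / (s:ℝ) + 1) * (s:ℝ) :=
      mul_lt_mul_of_pos_right h2 hs0R
    rw [add_mul, div_mul_cancel₀ _ (ne_of_gt hs0R)] at h2'
    rw [abs_of_nonpos (by nlinarith)]
    nlinarith
  -- the upper bound applied to aε
  have hup : |aε - A| ≤ ε * (M * ((m:ℝ) * ((m:ℝ) - 1)) * ((1 + ε) * u) ^ (m - 2)) := by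
    simp only [Set.mem_insert_iff, Set.mem_singleton_iff] at haε
    rcases haε with rfl | rfl
    · exact aux_upper m hm α ε ε (le_of_lt hε) (by rw [abs_of_nonneg (le_of_lt hε)]) a M hM0 hMa
    · have := aux_upper m hm α (-ε) ε (le_of_lt hε)
        (by rw [abs_neg, abs_of_nonneg (le_of_lt hε)]) a M hM0 hMa
      simpa only [← sub_eq_add_neg] using this
  constructor
  · calc |aε - A| ≤ ε * (M * ((m:ℝ) * ((m:ℝ) - 1)) * ((1 + ε) * u) ^ (m - 2)) := hup
      _ < 1 / ((M * S) * Malpha m f)^(m-1) := main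
      _ ≤ |A - (s:ℝ) * ((⌊A / (s:ℝ)⌋ : ℤ) : ℝ)| := lower _ hfloor
  · calc |aε - A| ≤ ε * (M * ((m:ℝ) * ((m:ℝ) - 1)) * ((1 + ε) * u) ^ (m - 2)) := hup
      _ < 1 / ((M * S) * Malpha m f)^(m-1) := main
      _ ≤ |A - (s:ℝ) * ((⌈A / (s:ℝ)⌉ : ℤ) : ℝ)| := lower _ hceil
end

section
/- Let A be an n×n matrix (n ≥ 1) whose entries lie in ℤ[α], and suppose every entry a_{ij} satisfies opc(a_{ij}) ≤ L. Then the determinant of A, as an element of ℤ[α], satisfies opc(det A) ≤ n!·M_α^{n−1}·L^n, where M_α := m(1+‖f‖_∞)^{m−1}. In particular, every k×k minor of A (k ≤ n) satisfies the same bound. -/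
open Polynomial Finset

lemma mod_bound (f : Polynomial ℤ) (hmonic : f.Monic) (m : ℕ) (hm : 1 ≤ m)
    (hdeg : f.natDegree = m) (F : ℤ) (hF0 : 0 ≤ F) (hF : ∀ k, k < m → |f.coeff k| ≤ F) :
    ∀ (j : ℕ) (B : ℤ), 0 ≤ B → ∀ p : Polynomial ℤ,
      (∀ k, |p.coeff k| ≤ B) → (∀ k, m + j ≤ k → p.coeff k = 0) →
      ∀ k, |(p %ₘ f).coeff k| ≤ B * (1 + F) ^ j := by
  have hdegf : f.degree = (m : ℕ) := by
    rw [Polynomial.degree_eq_natDegree hmonic.ne_zero, hdeg]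
  intro j
  induction j with
  | zero =>
    intro B hB p hpB hp0 k
    have hself : p %ₘ f = p := by
      rw [Polynomial.modByMonic_eq_self_iff hmonic, hdegf,
        Polynomial.degree_lt_iff_coeff_zero]
      intro t ht
      exact hp0 t (by exact_mod_cast ht)
    rw [hself]
    simpa using hpB k
  | succ j ih =>
    intro B hB p hpB hp0 k
    set c : ℤ := p.coeff (m + j) with hc
    set q : Polynomial ℤ := f * C c * X ^ j with hqdef
    have hq : ∀ t, q.coeff t = if j ≤ t then f.coeff (t - j) * c else 0 := by
      intro t
      rw [hqdef, Polynomial.coeff_mul_X_pow', Polynomial.coeff_mul_C]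
    have hcB : |c| ≤ B := hpB _
    have hmod : (p - q) %ₘ f = p %ₘ f := by
      rw [Polynomial.sub_modByMonic,
        (Polynomial.modByMonic_eq_zero_iff_dvd hmonic).2
          (Dvd.dvd.mul_right (dvd_mul_right f (C c)) _), sub_zero]
    have hfm : f.coeff m = 1 := by
      have := hmonic.coeff_natDegree
      rwa [hdeg] at this
    have hzero : ∀ t, m + j ≤ t → (p - q).coeff t = 0 := by
      intro t ht
      rw [Polynomial.coeff_sub, hq]
      rcases eq_or_lt_of_le ht with h | h
      · rw [if_pos (by omega), ← h]
        simp only [show m + j - j = m by omega, hfm, ← hc.symm]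
        omega
      · rw [if_pos (by omega)]
        have h1 : p.coeff t = 0 := hp0 t (by omega)
        have h2 : f.coeff (t - j) = 0 :=
          Polynomial.coeff_eq_zero_of_natDegree_lt (by omega)
        rw [h1, h2, zero_mul, sub_zero]
    have hbnd : ∀ t, |(p - q).coeff t| ≤ B * (1 + F) := by
      intro t
      rw [Polynomial.coeff_sub, hq]
      by_cases hjt : j ≤ t
      · rw [if_pos hjt]
        rcases lt_trichotomy (t - j) m with h | h | h
        · have h1 : |p.coeff t| ≤ B := hpB t
          have h2 : |f.coeff (t - j)| ≤ F := hF _ h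
          calc |p.coeff t - f.coeff (t - j) * c| ≤ |p.coeff t| + |f.coeff (t - j) * c| :=
                abs_sub _ _
            _ ≤ B + F * B := by
                refine add_le_add h1 ?_
                rw [abs_mul]
                exact mul_le_mul h2 hcB (abs_nonneg _) hF0
            _ = B * (1 + F) := by ring
        · have ht : t = m + j := by omega
          rw [ht, show m + j - j = m by omega, hfm, one_mul, ← hc, sub_self, abs_zero]
          positivity
        · have h1 : p.coeff t = 0 := hp0 t (by omega)
          have h2 : f.coeff (t - j) = 0 :=
            Polynomial.coeff_eq_zero_of_natDegree_lt (by omega)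
          rw [h1, h2, zero_mul, sub_zero, abs_zero]
          positivity
      · rw [if_neg hjt, sub_zero]
        calc |p.coeff t| ≤ B := hpB t
          _ ≤ B * (1 + F) := by nlinarith
    have := ih (B * (1 + F)) (by positivity) (p - q) hbnd hzero k
    rw [hmod] at this
    calc |(p %ₘ f).coeff k| ≤ B * (1 + F) * (1 + F) ^ j := this
      _ = B * (1 + F) ^ (j + 1) := by ring

lemma mul_coeff_bound (m : ℕ) (a b : Polynomial ℤ) (Ab Bb : ℤ) (hA0 : 0 ≤ Ab) (hB0 : 0 ≤ Bb)
    (ha : ∀ k, |a.coeff k| ≤ Ab) (ha0 : ∀ k, m ≤ k → a.coeff k = 0)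
    (hb : ∀ k, |b.coeff k| ≤ Bb) :
    ∀ k, |(a * b).coeff k| ≤ (m : ℤ) * Ab * Bb := by
  intro k
  rw [Polynomial.coeff_mul]
  calc |∑ x ∈ Finset.HasAntidiagonal.antidiagonal k, a.coeff x.1 * b.coeff x.2|
      ≤ ∑ x ∈ Finset.HasAntidiagonal.antidiagonal k, |a.coeff x.1 * b.coeff x.2| :=
        Finset.abs_sum_le_sum_abs _ _
    _ ≤ ∑ x ∈ Finset.HasAntidiagonal.antidiagonal k, (if x.1 < m then Ab * Bb else 0) := by
        refine Finset.sum_le_sum fun x _ => ?_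
        by_cases hx : x.1 < m
        · rw [if_pos hx, abs_mul]
          exact mul_le_mul (ha _) (hb _) (abs_nonneg _) hA0
        · rw [if_neg hx, ha0 _ (by omega), zero_mul, abs_zero]
    _ = ((Finset.HasAntidiagonal.antidiagonal k).filter (fun x => x.1 < m)).card • (Ab * Bb) := by
        rw [← Finset.sum_filter, Finset.sum_const]
    _ ≤ (m : ℤ) * Ab * Bb := by
        rw [nsmul_eq_mul]
        have hcard : ((Finset.HasAntidiagonal.antidiagonal k).filter (fun x => x.1 < m)).card ≤ m := by
          have h := Finset.card_le_card_of_injOn (f := fun x : ℕ × ℕ => x.1)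
            (s := (Finset.HasAntidiagonal.antidiagonal k).filter (fun x => x.1 < m)) (t := Finset.range m)
            (fun x hx => Finset.mem_range.2 (Finset.mem_filter.mp hx).2)
            ?_
          · simpa using h
          · intro x hx y hy hxy
            simp only [Finset.coe_filter, Set.mem_setOf_eq, Finset.HasAntidiagonal.mem_antidiagonal] at hx hy
            have h1 : x.1 = y.1 := hxy
            have h2 : x.2 = y.2 := by omega
            exact Prod.ext h1 h2
        have h1 : (((Finset.HasAntidiagonal.antidiagonal k).filter (fun x => x.1 < m)).card : ℤ) ≤ (m : ℤ) :=
          by exact_mod_cast hcard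
        calc (((Finset.HasAntidiagonal.antidiagonal k).filter (fun x => x.1 < m)).card : ℤ) * (Ab * Bb)
            ≤ (m : ℤ) * (Ab * Bb) := mul_le_mul_of_nonneg_right h1 (by positivity)
          _ = (m : ℤ) * Ab * Bb := by ring

lemma mul_coeff_zero (m : ℕ) (a b : Polynomial ℤ)
    (ha0 : ∀ k, m ≤ k → a.coeff k = 0) (hb0 : ∀ k, m ≤ k → b.coeff k = 0) :
    ∀ k, m + (m - 1) ≤ k → (a * b).coeff k = 0 := by
  intro k hk
  rw [Polynomial.coeff_mul]
  refine Finset.sum_eq_zero fun x hx => ?_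
  rw [Finset.HasAntidiagonal.mem_antidiagonal] at hx
  rcases le_or_gt m x.1 with h | h
  · rw [ha0 _ h, zero_mul]
  · rw [hb0 _ (by omega), mul_zero]

lemma redprod (f : Polynomial ℤ) (hmonic : f.Monic) (m : ℕ) (hm : 1 ≤ m)
    (hdeg : f.natDegree = m) (F : ℤ) (hF0 : 0 ≤ F) (hF : ∀ k, k < m → |f.coeff k| ≤ F)
    {ι : Type*} [DecidableEq ι] (s : Finset ι) (hs : s.Nonempty) (p : ι → Polynomial ℤ)
    (L : ℤ) (hL0 : 0 ≤ L)
    (hpb : ∀ i ∈ s, ∀ k, |(p i).coeff k| ≤ L)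
    (hp0 : ∀ i ∈ s, ∀ k, m ≤ k → (p i).coeff k = 0) :
    ∀ k, |((∏ i ∈ s, p i) %ₘ f).coeff k| ≤
      ((m : ℤ) * (1 + F) ^ (m - 1)) ^ (s.card - 1) * L ^ s.card := by
  have hdegf : f.degree = (m : ℕ) := by
    rw [Polynomial.degree_eq_natDegree hmonic.ne_zero, hdeg]
  induction hs using Finset.Nonempty.cons_induction with
  | singleton a =>
    intro k
    rw [Finset.prod_singleton, Polynomial.modByMonic_eq_self_iff hmonic |>.2]
    · simpa using hpb a (Finset.mem_singleton_self a) k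
    · rw [hdegf, Polynomial.degree_lt_iff_coeff_zero]
      intro t ht
      exact hp0 a (Finset.mem_singleton_self a) t (by exact_mod_cast ht)
  | cons a s ha hs ih =>
    intro k
    have hmem : ∀ i ∈ s, i ∈ Finset.cons a s ha := fun i hi => Finset.mem_cons_of_mem hi
    have hamem : a ∈ Finset.cons a s ha := by simp
    set r : Polynomial ℤ := (∏ i ∈ s, p i) %ₘ f with hrdef
    have ihr : ∀ k, |r.coeff k| ≤ ((m : ℤ) * (1 + F) ^ (m - 1)) ^ (s.card - 1) * L ^ s.card :=
      ih (fun i hi => hpb i (hmem i hi)) (fun i hi => hp0 i (hmem i hi))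
    have hr0 : ∀ k, m ≤ k → r.coeff k = 0 := by
      have hdr : r.degree < (m : ℕ) := hdegf ▸ Polynomial.degree_modByMonic_lt _ hmonic
      intro k hk
      exact (Polynomial.degree_lt_iff_coeff_zero _ _).1 hdr k (by exact_mod_cast hk)
    have hmodeq : (∏ i ∈ Finset.cons a s ha, p i) %ₘ f = (p a * r) %ₘ f := by
      conv_lhs => rw [Finset.prod_cons, ← Polynomial.modByMonic_add_div (∏ i ∈ s, p i) f]
      rw [mul_add, ← mul_assoc, mul_comm (p a) f, mul_assoc, Polynomial.add_modByMonic,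
        (Polynomial.modByMonic_eq_zero_iff_dvd hmonic).2 (dvd_mul_right f _), add_zero]
    rw [hmodeq]
    set B1 : ℤ := ((m : ℤ) * (1 + F) ^ (m - 1)) ^ (s.card - 1) * L ^ s.card with hB1
    have hB10 : 0 ≤ B1 := by positivity
    have hprodb : ∀ t, |(p a * r).coeff t| ≤ (m : ℤ) * L * B1 :=
      mul_coeff_bound m (p a) r L B1 hL0 hB10 (hpb a hamem) (hp0 a hamem) ihr
    have hprod0 : ∀ t, m + (m - 1) ≤ t → (p a * r).coeff t = 0 :=
      mul_coeff_zero m (p a) r (hp0 a hamem) hr0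
    have := mod_bound f hmonic m hm hdeg F hF0 hF (m - 1) ((m : ℤ) * L * B1)
      (by positivity) (p a * r) hprodb hprod0 k
    refine this.trans (le_of_eq ?_)
    obtain ⟨c, hc⟩ : ∃ c, s.card = c + 1 :=
      ⟨s.card - 1, (Nat.succ_pred_eq_of_pos (Finset.card_pos.2 hs)).symm⟩
    rw [Finset.card_cons, hB1, hc]
    simp only [Nat.add_sub_cancel]
    rw [pow_succ, pow_succ]
    ring
lemma det_key (f : Polynomial ℤ) (hmonic : f.Monic) (m : ℕ) (hm : 1 ≤ m)
    (hdeg : f.natDegree = m) (F : ℤ) (hF0 : 0 ≤ F) (hF : ∀ k, k < m → |f.coeff k| ≤ F)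
    (α : ℝ) (hroot : Polynomial.aeval α f = 0)
    (k : ℕ) (hk : 1 ≤ k) (P : Matrix (Fin k) (Fin k) (Polynomial ℤ)) (L : ℤ) (hL0 : 0 ≤ L)
    (hPb : ∀ i j t, |(P i j).coeff t| ≤ L) (hP0 : ∀ i j t, m ≤ t → (P i j).coeff t = 0) :
    ∃ D : Polynomial ℤ, (∀ t, m ≤ t → D.coeff t = 0) ∧
      Polynomial.aeval α D = (Matrix.of fun i j => Polynomial.aeval α (P i j)).det ∧
      ∀ t, |D.coeff t| ≤
        (k.factorial : ℤ) * ((m : ℤ) * (1 + F) ^ (m - 1)) ^ (k - 1) * L ^ k := by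
  have hdegf : f.degree = (m : ℕ) := by
    rw [Polynomial.degree_eq_natDegree hmonic.ne_zero, hdeg]
  have hne : Nonempty (Fin k) := ⟨⟨0, hk⟩⟩
  set M : ℤ := (m : ℤ) * (1 + F) ^ (m - 1) with hM
  set r : Equiv.Perm (Fin k) → Polynomial ℤ :=
    fun σ => (∏ i, P (σ i) i) %ₘ f with hr
  have hr0 : ∀ σ t, m ≤ t → (r σ).coeff t = 0 := by
    intro σ t ht
    have hdr : (r σ).degree < (m : ℕ) := hdegf ▸ Polynomial.degree_modByMonic_lt _ hmonic
    exact (Polynomial.degree_lt_iff_coeff_zero _ _).1 hdr t (by exact_mod_cast ht)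
  have hrb : ∀ σ t, |(r σ).coeff t| ≤ M ^ (k - 1) * L ^ k := by
    intro σ t
    have := redprod f hmonic m hm hdeg F hF0 hF (Finset.univ : Finset (Fin k))
      Finset.univ_nonempty (fun i => P (σ i) i) L hL0
      (fun i _ => hPb _ _) (fun i _ => hP0 _ _) t
    simpa [Finset.card_univ] using this
  have heval : ∀ σ, Polynomial.aeval α (r σ) = ∏ i, Polynomial.aeval α (P (σ i) i) := by
    intro σ
    have h1 : (r σ) + f * ((∏ i, P (σ i) i) /ₘ f) = ∏ i, P (σ i) i :=
      Polynomial.modByMonic_add_div _ f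
    have := congrArg (Polynomial.aeval α) h1
    simp only [map_add, map_mul, hroot, zero_mul, add_zero, map_prod] at this
    exact this
  refine ⟨∑ σ : Equiv.Perm (Fin k), (Equiv.Perm.sign σ : ℤ) • r σ, ?_, ?_, ?_⟩
  · intro t ht
    rw [Polynomial.finset_sum_coeff]
    exact Finset.sum_eq_zero fun σ _ => by
      rw [Polynomial.coeff_smul, hr0 σ t ht, smul_zero]
  · rw [map_sum, Matrix.det_apply']
    refine Finset.sum_congr rfl fun σ _ => ?_
    rw [map_zsmul, heval σ, zsmul_eq_mul]
    simp [Matrix.of_apply]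
  · intro t
    rw [Polynomial.finset_sum_coeff]
    calc |∑ σ : Equiv.Perm (Fin k), ((Equiv.Perm.sign σ : ℤ) • r σ).coeff t|
        ≤ ∑ σ : Equiv.Perm (Fin k), |((Equiv.Perm.sign σ : ℤ) • r σ).coeff t| :=
          Finset.abs_sum_le_sum_abs _ _
      _ ≤ ∑ _σ : Equiv.Perm (Fin k), M ^ (k - 1) * L ^ k := by
          refine Finset.sum_le_sum fun σ _ => ?_
          rw [Polynomial.coeff_smul, smul_eq_mul, abs_mul]
          have hsign : |((Equiv.Perm.sign σ : ℤ))| = 1 := by rcases Int.units_eq_one_or (Equiv.Perm.sign σ) with h | h <;> simp [h]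
          rw [hsign, one_mul]
          exact hrb σ t
      _ = (k.factorial : ℤ) * (M ^ (k - 1) * L ^ k) := by
          rw [Finset.sum_const, Finset.card_univ, Fintype.card_perm, Fintype.card_fin,
            nsmul_eq_mul]
      _ = (k.factorial : ℤ) * M ^ (k - 1) * L ^ k := by ring

theorem stmt_10 (m : ℕ) (hm : 1 ≤ m) (f : Polynomial ℤ)
    (hmonic : f.Monic) (hdeg : f.natDegree = m)
    (hirr : Irreducible (f.map (Int.castRingHom ℚ)))
    (α : ℝ) (hroot : Polynomial.aeval α f = 0)
    (n : ℕ) (hn : 1 ≤ n)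
    (A : Matrix (Fin n) (Fin n) (Fin m → ℤ)) (L : ℤ)
    (hL : ∀ i j, ((Finset.univ.sup fun k => (A i j k).natAbs : ℕ) : ℤ) ≤ L) :
    (∃ c : Fin m → ℤ,
        (∑ k, (c k : ℝ) * α ^ (k : ℕ)) =
          (Matrix.of fun i j : Fin n => ∑ k, (A i j k : ℝ) * α ^ (k : ℕ)).det ∧
        ((Finset.univ.sup fun k => (c k).natAbs : ℕ) : ℤ) ≤
          (n.factorial : ℤ) * ((m : ℤ) * (1 + fninf m f) ^ (m - 1)) ^ (n - 1) * L ^ n) ∧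
      ∀ (k : ℕ), 1 ≤ k → ∀ (r c' : Fin k → Fin n),
        Function.Injective r → Function.Injective c' →
        ∃ cc : Fin m → ℤ,
          (∑ t, (cc t : ℝ) * α ^ (t : ℕ)) =
            ((Matrix.of fun i j : Fin n =>
              ∑ k', (A i j k' : ℝ) * α ^ (k' : ℕ)).submatrix r c').det ∧
          ((Finset.univ.sup fun t => (cc t).natAbs : ℕ) : ℤ) ≤
            (n.factorial : ℤ) * ((m : ℤ) * (1 + fninf m f) ^ (m - 1)) ^ (n - 1) * L ^ n := by
  classical
  set F : ℤ := fninf m f with hFdef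
  have hF0 : 0 ≤ F := Int.natCast_nonneg _
  have hF : ∀ k, k < m → |f.coeff k| ≤ F := by
    intro k hk
    rw [Int.abs_eq_natAbs]
    have h1 : (f.coeff k).natAbs ≤ Finset.univ.sup fun i : Fin m => (f.coeff (i : ℕ)).natAbs :=
      Finset.le_sup (f := fun i : Fin m => (f.coeff (i : ℕ)).natAbs)
        (Finset.mem_univ (⟨k, hk⟩ : Fin m))
    have h2 : F = ((Finset.univ.sup fun i : Fin m => (f.coeff (i : ℕ)).natAbs : ℕ) : ℤ) := rfl
    rw [h2]
    exact_mod_cast h1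
  set M : ℤ := (m : ℤ) * (1 + F) ^ (m - 1) with hM
  have hM0 : 0 ≤ M := by
    exact mul_nonneg (by exact_mod_cast Nat.zero_le m) (pow_nonneg (by linarith) _)
  have hM1 : (1 : ℤ) ≤ M := by
    have h1 : (1 : ℤ) ≤ (m : ℤ) := by exact_mod_cast hm
    have h2 : (1 : ℤ) ≤ (1 + F) ^ (m - 1) := by
      calc (1 : ℤ) = 1 ^ (m - 1) := (one_pow _).symm
        _ ≤ (1 + F) ^ (m - 1) := pow_le_pow_left₀ (by norm_num) (by linarith) _
    nlinarith
  have hL0 : (0 : ℤ) ≤ L :=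
    le_trans (Int.natCast_nonneg _) (hL ⟨0, hn⟩ ⟨0, hn⟩)
  have hLentry : ∀ i j t, |A i j t| ≤ L := by
    intro i j t
    rw [Int.abs_eq_natAbs]
    refine le_trans ?_ (hL i j)
    have h1 : (A i j t).natAbs ≤ Finset.univ.sup fun k => (A i j k).natAbs :=
      Finset.le_sup (f := fun k => (A i j k).natAbs) (Finset.mem_univ t)
    exact_mod_cast h1
  set P : Matrix (Fin n) (Fin n) (Polynomial ℤ) :=
    Matrix.of fun i j => ∑ t : Fin m, Polynomial.monomial (t : ℕ) (A i j t) with hP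
  have hPc : ∀ i j s, (P i j).coeff s = if h : s < m then A i j ⟨s, h⟩ else 0 := by
    intro i j s
    rw [show P i j = ∑ t : Fin m, Polynomial.monomial (t : ℕ) (A i j t) from rfl,
      Polynomial.finset_sum_coeff]
    simp only [Polynomial.coeff_monomial]
    by_cases h : s < m
    · rw [dif_pos h, Finset.sum_eq_single (⟨s, h⟩ : Fin m)]
      · rw [if_pos rfl]
      · intro b _ hb
        exact if_neg fun hc => hb (Fin.ext hc)
      · intro habs; exact absurd (Finset.mem_univ _) habs
    · rw [dif_neg h]
      refine Finset.sum_eq_zero fun t _ => ?_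
      rw [if_neg]
      intro hc
      have := t.isLt
      omega
  have hPb : ∀ (i j : Fin n) t, |(P i j).coeff t| ≤ L := by
    intro i j t
    rw [hPc]
    split_ifs with h
    · exact hLentry _ _ _
    · simpa using hL0
  have hP0 : ∀ (i j : Fin n) t, m ≤ t → (P i j).coeff t = 0 := by
    intro i j t ht
    rw [hPc, dif_neg (by omega)]
  have hPeval : ∀ i j, Polynomial.aeval α (P i j) = ∑ t : Fin m, (A i j t : ℝ) * α ^ (t : ℕ) := by
    intro i j
    rw [show P i j = ∑ t : Fin m, Polynomial.monomial (t : ℕ) (A i j t) from rfl, map_sum]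
    refine Finset.sum_congr rfl fun t _ => ?_
    rw [Polynomial.aeval_monomial]
    simp
  set N : ℤ := (n.factorial : ℤ) * M ^ (n - 1) * L ^ n with hN
  have hN0 : 0 ≤ N :=
    mul_nonneg (mul_nonneg (Int.natCast_nonneg _) (pow_nonneg hM0 _)) (pow_nonneg hL0 _)
  have key : ∀ (k : ℕ), 1 ≤ k → ∀ (r c' : Fin k → Fin n),
      Function.Injective r → Function.Injective c' →
      ∃ cc : Fin m → ℤ,
        (∑ t, (cc t : ℝ) * α ^ (t : ℕ)) =
          ((Matrix.of fun i j : Fin n =>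
            ∑ k', (A i j k' : ℝ) * α ^ (k' : ℕ)).submatrix r c').det ∧
        ((Finset.univ.sup fun t => (cc t).natAbs : ℕ) : ℤ) ≤ N := by
    intro k hk r c' hrinj hcinj
    have hkn : k ≤ n := by
      have := Fintype.card_le_of_injective r hrinj
      simpa using this
    obtain ⟨D, hD0, hDeval, hDb⟩ := det_key f hmonic m hm hdeg F hF0 hF α hroot k hk
      (Matrix.of fun i j => P (r i) (c' j)) L hL0
      (fun i j t => hPb _ _ t) (fun i j t ht => hP0 _ _ t ht)
    have hmono : (k.factorial : ℤ) * M ^ (k - 1) * L ^ k ≤ N := by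
      rcases eq_or_lt_of_le hL0 with hL0' | hL1
      · rw [hN, ← hL0', zero_pow (by omega), zero_pow (by omega), mul_zero, mul_zero]
      · have hL1 : (1 : ℤ) ≤ L := hL1
        have h1 : (k.factorial : ℤ) ≤ (n.factorial : ℤ) := by
          exact_mod_cast Nat.factorial_le hkn
        have h2 : M ^ (k - 1) ≤ M ^ (n - 1) := pow_le_pow_right₀ hM1 (by omega)
        have h3 : L ^ k ≤ L ^ n := pow_le_pow_right₀ hL1 hkn
        rw [hN]
        refine mul_le_mul (mul_le_mul h1 h2 (pow_nonneg hM0 _) (Int.natCast_nonneg _)) h3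
          (pow_nonneg hL0 _) ?_
        exact mul_nonneg (Int.natCast_nonneg _) (pow_nonneg hM0 _)
    have hDb' : ∀ t, |D.coeff t| ≤ N := fun t => (hDb t).trans hmono
    refine ⟨fun t : Fin m => D.coeff t, ?_, ?_⟩
    · have hnd : D.natDegree < m := by
        by_cases hD : D = 0
        · rw [hD, Polynomial.natDegree_zero]; omega
        · rw [Polynomial.natDegree_lt_iff_degree_lt hD]
          rw [Polynomial.degree_lt_iff_coeff_zero]
          intro t ht
          exact hD0 t (by exact_mod_cast ht)
      calc ∑ t : Fin m, (D.coeff (t : ℕ) : ℝ) * α ^ (t : ℕ)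
          = ∑ i ∈ Finset.range m, (D.coeff i : ℝ) * α ^ i :=
            Fin.sum_univ_eq_sum_range (fun i => (D.coeff i : ℝ) * α ^ i) m
        _ = Polynomial.aeval α D := by
            rw [Polynomial.aeval_eq_sum_range' hnd]
            exact Finset.sum_congr rfl fun i _ => (zsmul_eq_mul _ _).symm
        _ = (Matrix.of fun i j =>
              Polynomial.aeval α ((Matrix.of fun i j => P (r i) (c' j)) i j)).det := hDeval
        _ = ((Matrix.of fun i j : Fin n =>
              ∑ k', (A i j k' : ℝ) * α ^ (k' : ℕ)).submatrix r c').det := by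
            congr 1
            ext i j
            simp only [Matrix.of_apply, Matrix.submatrix_apply]
            exact hPeval _ _
    · have hsup : (Finset.univ.sup fun t : Fin m => (D.coeff (t : ℕ)).natAbs) ≤ N.toNat := by
        refine Finset.sup_le fun t _ => ?_
        have h2 : ((D.coeff (t : ℕ)).natAbs : ℤ) ≤ N := by
          rw [← Int.abs_eq_natAbs]; exact hDb' _
        omega
      calc ((Finset.univ.sup fun t : Fin m => (D.coeff (t : ℕ)).natAbs : ℕ) : ℤ)
          ≤ (N.toNat : ℤ) := by exact_mod_cast hsup
        _ = N := Int.toNat_of_nonneg hN0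
  refine ⟨?_, key⟩
  obtain ⟨c, hc1, hc2⟩ := key n hn id id Function.injective_id Function.injective_id
  refine ⟨c, ?_, hc2⟩
  rw [hc1, Matrix.submatrix_id_id]
end

section
/- Let b_1, …, b_n ∈ ℝ^n be linearly independent vectors with Gram–Schmidt orthogonalization b_1*, …, b_n* and Gram–Schmidt coefficients μ_{ij} = ⟨b_i, b_j*⟩/⟨b_j*, b_j*⟩. For 1 ≤ j < i ≤ n let d_j be the determinant of the j×j Gram matrix (⟨b_p, b_q⟩)_{1≤p,q≤j}, and let λ_{ij} be the determinant of the j×j matrix obtained from this Gram matrix by replacing its last column with the column (⟨b_1, b_i⟩, …, ⟨b_j, b_i⟩)ᵀ. Then μ_{ij} = λ_{ij}/d_j; equivalently, μ_{ij}·d_j = λ_{ij}. Consequently, if all coordinates of the b_i lie in a subring R of ℝ, then λ_{ij} ∈ R and d_j ∈ R. -/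
open Finset

theorem stmt_11 (n : ℕ) (b bstar : Fin n → (Fin n → ℝ)) (μ : Fin n → Fin n → ℝ)
    (hind : LinearIndependent ℝ b)
    (hGS : ∀ i, bstar i = b i - ∑ l ∈ Finset.Iio i, μ i l • bstar l)
    (hμ : ∀ i l : Fin n, l < i →
      μ i l = (∑ k, b i k * bstar l k) / (∑ k, bstar l k * bstar l k))
    (i j : Fin n) (hij : j < i) :
    μ i j * (Matrix.of fun p q : Fin ((j : ℕ) + 1) =>
        ∑ k, b (Fin.castLE j.isLt p) k * b (Fin.castLE j.isLt q) k).det =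
      (Matrix.of fun p q : Fin ((j : ℕ) + 1) =>
        if q = Fin.last (j : ℕ) then ∑ k, b (Fin.castLE j.isLt p) k * b i k
        else ∑ k, b (Fin.castLE j.isLt p) k * b (Fin.castLE j.isLt q) k).det ∧
    ∀ R : Subring ℝ, (∀ i' k, b i' k ∈ R) →
      (Matrix.of fun p q : Fin ((j : ℕ) + 1) =>
          if q = Fin.last (j : ℕ) then ∑ k, b (Fin.castLE j.isLt p) k * b i k
          else ∑ k, b (Fin.castLE j.isLt p) k * b (Fin.castLE j.isLt q) k).det ∈ R ∧
      (Matrix.of fun p q : Fin ((j : ℕ) + 1) =>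
          ∑ k, b (Fin.castLE j.isLt p) k * b (Fin.castLE j.isLt q) k).det ∈ R := by
  classical
  -- the μ relation without division
  have hmu' : ∀ i' l : Fin n, l < i' →
      μ i' l * (∑ k, bstar l k * bstar l k) = ∑ k, b i' k * bstar l k := by
    intro i' l h
    rcases eq_or_ne (∑ k, bstar l k * bstar l k) 0 with h0 | h0
    · have hz : ∀ k, bstar l k = 0 := by
        intro k
        have := (Finset.sum_eq_zero_iff_of_nonneg
          (fun k _ => mul_self_nonneg (bstar l k))).mp h0 k (Finset.mem_univ k)
        exact mul_self_eq_zero.mp this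
      rw [h0, mul_zero]
      exact (Finset.sum_eq_zero fun k _ => by rw [hz k, mul_zero]).symm
    · rw [hμ i' l h, div_mul_cancel₀ _ h0]
  -- pointwise form of hGS
  have hGSpt : ∀ p : Fin n, ∀ k, bstar p k = b p k - ∑ l ∈ Finset.Iio p, μ p l * bstar l k := by
    intro p k
    rw [hGS p]
    simp [Finset.sum_apply]
  -- expansion of an inner product against b p
  have hexp : ∀ (p : Fin n) (X : Fin n → ℝ),
      ∑ k, b p k * X k = (∑ k, bstar p k * X k) +
        ∑ l ∈ Finset.Iio p, μ p l * ∑ k, bstar l k * X k := by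
    intro p X
    have : ∀ k, b p k = bstar p k + ∑ l ∈ Finset.Iio p, μ p l * bstar l k := by
      intro k; rw [hGSpt p k]; ring
    calc ∑ k, b p k * X k
        = ∑ k, (bstar p k * X k + ∑ l ∈ Finset.Iio p, μ p l * (bstar l k * X k)) := by
          refine Finset.sum_congr rfl fun k _ => ?_
          rw [this k, add_mul, Finset.sum_mul]
          congr 1
          exact Finset.sum_congr rfl fun l _ => mul_assoc _ _ _
      _ = (∑ k, bstar p k * X k) +
          ∑ k : Fin n, ∑ l ∈ Finset.Iio p, μ p l * (bstar l k * X k) := by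
          rw [Finset.sum_add_distrib]
      _ = _ := by
          rw [Finset.sum_comm]
          congr 1
          exact Finset.sum_congr rfl fun l _ => (Finset.mul_sum _ _ _).symm
  -- orthogonality of the bstar family
  have horthN : ∀ N : ℕ, ∀ p q : Fin n, (p : ℕ) < N → q < p →
      ∑ k, bstar p k * bstar q k = 0 := by
    intro N
    induction N with
    | zero => intro p q hp; omega
    | succ N ih =>
      intro p q hp hq
      have hq' : (q : ℕ) < (p : ℕ) := hq
      have step : ∑ k, bstar p k * bstar q k
          = (∑ k, b p k * bstar q k) -
            ∑ l ∈ Finset.Iio p, μ p l * ∑ k, bstar l k * bstar q k := by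
        have := hexp p (bstar q)
        linarith [this]
      rw [step]
      have hsingle : ∑ l ∈ Finset.Iio p, μ p l * ∑ k, bstar l k * bstar q k
          = μ p q * ∑ k, bstar q k * bstar q k := by
        refine Finset.sum_eq_single q (fun l hl hlq => ?_)
          (fun h => absurd (Finset.mem_Iio.mpr hq) h)
        rw [Finset.mem_Iio] at hl
        have hl' : (l : ℕ) < (p : ℕ) := hl
        rcases lt_or_gt_of_ne hlq with h1 | h1
        · have hcomm : ∑ k, bstar l k * bstar q k = ∑ k, bstar q k * bstar l k :=
            Finset.sum_congr rfl fun k _ => mul_comm _ _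
          rw [hcomm, ih q l (by omega) h1, mul_zero]
        · rw [ih l q (by omega) h1, mul_zero]
      rw [hsingle, hmu' p q hq, sub_self]
  have horth : ∀ p q : Fin n, p ≠ q → ∑ k, bstar p k * bstar q k = 0 := by
    intro p q hpq
    rcases lt_or_gt_of_ne hpq with h | h
    · have hcomm : ∑ k, bstar p k * bstar q k = ∑ k, bstar q k * bstar p k :=
        Finset.sum_congr rfl fun k _ => mul_comm _ _
      rw [hcomm]
      exact horthN n q p q.isLt h
    · exact horthN n p q p.isLt h
  -- the projection of b i onto the span of b_0, ..., b_j
  set proj : Fin n → ℝ := fun k => ∑ l ∈ Finset.Iic j, μ i l * bstar l k with hprojdef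
  -- inner products with bstar p agree for p ≤ j
  have hA : ∀ p : Fin n, p ≤ j → ∑ k, bstar p k * b i k = ∑ k, bstar p k * proj k := by
    intro p hp
    have hpi : p < i := lt_of_le_of_lt hp hij
    have : ∑ k, bstar p k * proj k
        = ∑ l ∈ Finset.Iic j, μ i l * ∑ k, bstar p k * bstar l k := by
      simp only [Finset.mul_sum]
      rw [Finset.sum_comm]
      refine Finset.sum_congr rfl fun l _ => ?_
      rw [Finset.mul_sum]
      exact Finset.sum_congr rfl fun k _ => by ring
    rw [this]
    have hsingle : ∑ l ∈ Finset.Iic j, μ i l * ∑ k, bstar p k * bstar l k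
        = μ i p * ∑ k, bstar p k * bstar p k := by
      refine Finset.sum_eq_single p (fun l hl hlp => ?_)
        (fun h => absurd (Finset.mem_Iic.mpr hp) h)
      rw [horth p l (Ne.symm hlp), mul_zero]
    rw [hsingle, hmu' i p hpi]
    exact Finset.sum_congr rfl fun k _ => mul_comm _ _
  -- inner products with b p agree for p ≤ j
  have hB : ∀ p : Fin n, p ≤ j → ∑ k, b p k * b i k = ∑ k, b p k * proj k := by
    intro p hp
    rw [hexp p (b i), hexp p proj, hA p hp]
    congr 1
    refine Finset.sum_congr rfl fun l hl => ?_
    rw [Finset.mem_Iio] at hl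
    rw [hA l (le_of_lt (lt_of_lt_of_le hl hp))]
  -- bstar l lies in b l + span of earlier b's
  have hspanN : ∀ N : ℕ, ∀ l : Fin n, (l : ℕ) < N →
      bstar l - b l ∈ Submodule.span ℝ (b '' {m : Fin n | m < l}) := by
    intro N
    induction N with
    | zero => intro l hl; omega
    | succ N ih =>
      intro l hl
      have heq : bstar l - b l = -∑ m ∈ Finset.Iio l, μ l m • bstar m := by
        rw [hGS l]; abel
      rw [heq]
      refine Submodule.neg_mem _ (Submodule.sum_mem _ fun m hm => ?_)
      rw [Finset.mem_Iio] at hm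
      have hm' : (m : ℕ) < (l : ℕ) := hm
      refine Submodule.smul_mem _ _ ?_
      have hrw : bstar m = (bstar m - b m) + b m := by abel
      rw [hrw]
      refine Submodule.add_mem _ ?_ (Submodule.subset_span ⟨m, hm, rfl⟩)
      exact Submodule.span_mono (Set.image_mono fun x hx => lt_trans hx hm)
        (ih m (by omega))
  have hbstar_mem : ∀ l : Fin n, l < j →
      bstar l ∈ Submodule.span ℝ (b '' {m : Fin n | m < j}) := by
    intro l hl
    have hrw : bstar l = (bstar l - b l) + b l := by abel
    rw [hrw]
    refine Submodule.add_mem _ ?_ ?_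
    · exact Submodule.span_mono (Set.image_mono fun x hx => lt_trans hx hl)
        (hspanN n l l.isLt)
    · exact Submodule.subset_span ⟨l, hl, rfl⟩
  -- representation of proj in the b basis
  set v : Fin (j : ℕ) → Fin n → ℝ :=
    fun m => b ⟨(m : ℕ), lt_trans m.isLt j.isLt⟩ with hv
  have himg : b '' {m : Fin n | m < j} = Set.range v := by
    ext y
    constructor
    · rintro ⟨m, hm, rfl⟩
      have hm' : (m : ℕ) < (j : ℕ) := hm
      exact ⟨⟨(m : ℕ), hm'⟩, congrArg b (Fin.ext rfl)⟩
    · rintro ⟨m, rfl⟩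
      exact ⟨⟨(m : ℕ), lt_trans m.isLt j.isLt⟩, m.isLt, rfl⟩
  have hprojfun : proj = ∑ l ∈ Finset.Iic j, μ i l • bstar l := by
    funext k; simp [hprojdef, Finset.sum_apply]
  have hmem : proj - μ i j • b j ∈ Submodule.span ℝ (Set.range v) := by
    rw [← himg]
    have hsplit : proj - μ i j • b j
        = μ i j • (bstar j - b j) + ∑ l ∈ Finset.Iio j, μ i l • bstar l := by
      rw [hprojfun, ← Finset.Iio_insert j,
        Finset.sum_insert (by simp)]
      rw [smul_sub]; abel
    rw [hsplit]
    refine Submodule.add_mem _ (Submodule.smul_mem _ _ (hspanN n j j.isLt))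
      (Submodule.sum_mem _ fun l hl => ?_)
    rw [Finset.mem_Iio] at hl
    exact Submodule.smul_mem _ _ (hbstar_mem l hl)
  obtain ⟨c, hc⟩ := (Submodule.mem_span_range_iff_exists_fun ℝ).mp hmem
  set x : Fin ((j : ℕ) + 1) → ℝ :=
    fun q => if h : (q : ℕ) < (j : ℕ) then c ⟨(q : ℕ), h⟩ else μ i j with hx
  have hxlast : x (Fin.last (j : ℕ)) = μ i j := by simp [hx]
  have hfun : proj = ∑ q : Fin ((j : ℕ) + 1), x q • b (Fin.castLE j.isLt q) := by
    rw [Fin.sum_univ_castSucc]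
    have h2 : Fin.castLE j.isLt (Fin.last (j : ℕ)) = j := by
      apply Fin.ext; simp
    rw [hxlast, h2]
    have h3 : ∀ q : Fin (j : ℕ),
        x q.castSucc • b (Fin.castLE j.isLt q.castSucc) = c q • v q := by
      intro q
      have hxq : x q.castSucc = c q := by simp [hx, q.isLt]
      rw [hxq]
      congr 1
    rw [Finset.sum_congr rfl fun q _ => h3 q, hc]
    abel
  have hprojx : ∀ k, proj k = ∑ q : Fin ((j : ℕ) + 1), x q * b (Fin.castLE j.isLt q) k := by
    intro k
    have := congrFun hfun k
    simpa [Finset.sum_apply] using this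
  set G : Matrix (Fin ((j : ℕ) + 1)) (Fin ((j : ℕ) + 1)) ℝ :=
    Matrix.of fun p q => ∑ k, b (Fin.castLE j.isLt p) k * b (Fin.castLE j.isLt q) k with hG
  set cvec : Fin ((j : ℕ) + 1) → ℝ :=
    fun p => ∑ k, b (Fin.castLE j.isLt p) k * b i k with hcvec
  have hle : ∀ p : Fin ((j : ℕ) + 1), Fin.castLE j.isLt p ≤ j := by
    intro p
    have := p.isLt
    rw [Fin.le_def]
    simp
    omega
  have hmv : G.mulVec x = cvec := by
    funext p
    show ∑ q, G p q * x q = cvec p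
    have h1 : ∀ q, G p q * x q = ∑ k, b (Fin.castLE j.isLt p) k * (x q * b (Fin.castLE j.isLt q) k) := by
      intro q
      rw [hG]
      simp only [Matrix.of_apply]
      rw [Finset.sum_mul]
      exact Finset.sum_congr rfl fun k _ => by ring
    rw [Finset.sum_congr rfl fun q _ => h1 q, Finset.sum_comm]
    have h2 : ∀ k, (∑ q, b (Fin.castLE j.isLt p) k * (x q * b (Fin.castLE j.isLt q) k))
        = b (Fin.castLE j.isLt p) k * proj k := by
      intro k
      rw [← Finset.mul_sum, ← hprojx k]
    rw [Finset.sum_congr rfl fun k _ => h2 k]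
    exact (hB _ (hle p)).symm
  have hcramer : Matrix.cramer G cvec (Fin.last (j : ℕ)) = μ i j * G.det := by
    rw [← hmv]
    have hmv2 : G.mulVec x = ∑ q, x q • (fun p => G p q : Fin ((j : ℕ) + 1) → ℝ) := by
      funext p
      simp [Matrix.mulVec, dotProduct, Finset.sum_apply, mul_comm]
    rw [hmv2, map_sum]
    have h3 : ∀ q, Matrix.cramer G (x q • (fun p => G p q : Fin ((j : ℕ) + 1) → ℝ))
        = x q • (Pi.single q G.det : Fin ((j : ℕ) + 1) → ℝ) := by
      intro q
      rw [map_smul, Matrix.cramer_row_self G _ q fun p => rfl]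
    rw [Finset.sum_congr rfl fun q _ => h3 q]
    rw [Finset.sum_apply]
    simp only [Pi.smul_apply, Pi.single_apply, smul_eq_mul, mul_ite, mul_zero]
    rw [Finset.sum_ite_eq]
    simp [hxlast]
  have hgoalmat : (Matrix.of fun p q : Fin ((j : ℕ) + 1) =>
      if q = Fin.last (j : ℕ) then ∑ k, b (Fin.castLE j.isLt p) k * b i k
      else ∑ k, b (Fin.castLE j.isLt p) k * b (Fin.castLE j.isLt q) k)
      = G.updateCol (Fin.last (j : ℕ)) cvec := by
    ext p q
    by_cases h : q = Fin.last (j : ℕ) <;>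
      simp [Matrix.updateCol_apply, h, hG, hcvec]
  constructor
  · rw [hgoalmat, ← Matrix.cramer_apply, hcramer]
  · intro R hbR
    have hdetR : ∀ M : Matrix (Fin ((j : ℕ) + 1)) (Fin ((j : ℕ) + 1)) ℝ,
        (∀ p q, M p q ∈ R) → M.det ∈ R := by
      intro M hM
      have h1 : R.subtype (Matrix.of fun p q => (⟨M p q, hM p q⟩ : R)).det = M.det := by
        rw [RingHom.map_det]
        congr 1
      rw [← h1]
      exact SetLike.coe_mem _
    constructor
    · refine hdetR _ fun p q => ?_
      simp only [Matrix.of_apply]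
      split <;> exact Subring.sum_mem _ fun k _ => R.mul_mem (hbR _ _) (hbR _ _)
    · refine hdetR _ fun p q => ?_
      simp only [hG, Matrix.of_apply]
      exact Subring.sum_mem _ fun k _ => R.mul_mem (hbR _ _) (hbR _ _)
end

section
/- Let b_1, …, b_j ∈ ℝ^n be linearly independent vectors with Gram–Schmidt orthogonalization b_1*, …, b_j*, and let L > 0 be such that every nonzero vector x of the lattice Λ_j = {c_1 b_1 + ⋯ + c_j b_j : c_1, …, c_j ∈ ℤ} satisfies ‖x‖₂² ≥ L. Then d_j := ‖b_1*‖₂²·‖b_2*‖₂²⋯‖b_j*‖₂² ≥ (L/j)^j. -/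
open Finset

noncomputable def dotp {n : ℕ} (x y : Fin n → ℝ) : ℝ := ∑ k, x k * y k

lemma dotp_comm {n : ℕ} (x y : Fin n → ℝ) : dotp x y = dotp y x := by
  simp [dotp, mul_comm]

lemma dotp_sub_left {n : ℕ} (x y z : Fin n → ℝ) : dotp (x - y) z = dotp x z - dotp y z := by
  simp [dotp, sub_mul, Finset.sum_sub_distrib]

lemma dotp_sum_left {n : ℕ} {ι : Type*} (s : Finset ι) (f : ι → Fin n → ℝ) (z : Fin n → ℝ) :
    dotp (∑ i ∈ s, f i) z = ∑ i ∈ s, dotp (f i) z := by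
  simp [dotp, Finset.sum_mul]
  exact Finset.sum_comm

lemma dotp_smul_left {n : ℕ} (c : ℝ) (x y : Fin n → ℝ) : dotp (c • x) y = c * dotp x y := by
  simp [dotp, Finset.mul_sum, mul_assoc]

lemma dotp_zero_right {n : ℕ} (x : Fin n → ℝ) : dotp x 0 = 0 := by simp [dotp]

lemma dotp_self_nonneg {n : ℕ} (x : Fin n → ℝ) : 0 ≤ dotp x x :=
  Finset.sum_nonneg fun k _ => mul_self_nonneg _

lemma dotp_self_eq_zero {n : ℕ} {x : Fin n → ℝ} (h : dotp x x = 0) : x = 0 := by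
  funext k
  have := (Finset.sum_eq_zero_iff_of_nonneg (fun k _ => mul_self_nonneg (x k))).mp h k (by simp)
  exact mul_self_eq_zero.mp this

section GS
variable {n j : ℕ} {b bstar : Fin j → (Fin n → ℝ)} {μ : Fin j → Fin j → ℝ}

lemma gs_ortho (hGS : ∀ i, bstar i = b i - ∑ l ∈ Finset.Iio i, μ i l • bstar l)
    (hμ : ∀ i l : Fin j, l < i →
      μ i l = (∑ k, b i k * bstar l k) / (∑ k, bstar l k * bstar l k)) :
    ∀ i l : Fin j, l < i → dotp (bstar i) (bstar l) = 0 := by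
  have key : ∀ N : ℕ, ∀ i l : Fin j, (i : ℕ) = N → l < i → dotp (bstar i) (bstar l) = 0 := by
    intro N
    induction N using Nat.strong_induction_on with
    | _ N IH =>
      intro i l hiN hl
      have hsum : ∑ m ∈ Finset.Iio i, dotp (μ i m • bstar m) (bstar l)
          = μ i l * dotp (bstar l) (bstar l) := by
        rw [Finset.sum_eq_single l]
        · rw [dotp_smul_left]
        · intro m hm hml
          rw [dotp_smul_left]
          rcases lt_or_gt_of_ne hml with h | h
          · rw [dotp_comm, IH (l : ℕ) (hiN ▸ hl) l m rfl h, mul_zero]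
          · rw [IH (m : ℕ) (by rw [← hiN]; exact Fin.lt_iff_val_lt_val.mp (Finset.mem_Iio.mp hm)) m l rfl h, mul_zero]
        · intro h
          exact absurd (Finset.mem_Iio.mpr hl) h
      rw [hGS i, dotp_sub_left, dotp_sum_left, hsum]
      by_cases h0 : dotp (bstar l) (bstar l) = 0
      · rw [h0, mul_zero, dotp_self_eq_zero h0, dotp_zero_right, sub_zero]
      · rw [hμ i l hl]
        have : (∑ k, b i k * bstar l k) = dotp (b i) (bstar l) := rfl
        have h2 : (∑ k, bstar l k * bstar l k) = dotp (bstar l) (bstar l) := rfl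
        rw [this, h2, div_mul_cancel₀ _ h0, sub_self]
  exact fun i l hl => key i i l rfl hl

lemma gs_mem_span (hGS : ∀ i, bstar i = b i - ∑ l ∈ Finset.Iio i, μ i l • bstar l) :
    ∀ m : Fin j, bstar m ∈ Submodule.span ℝ (b '' Set.Iic m) := by
  have key : ∀ N : ℕ, ∀ m : Fin j, (m : ℕ) = N → bstar m ∈ Submodule.span ℝ (b '' Set.Iic m) := by
    intro N
    induction N using Nat.strong_induction_on with
    | _ N IH =>
      intro m hmN
      rw [hGS m]
      apply sub_mem
      · exact Submodule.subset_span ⟨m, Set.mem_Iic.mpr le_rfl, rfl⟩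
      · apply Submodule.sum_mem
        intro p hp
        have hpm : p < m := Finset.mem_Iio.mp hp
        apply Submodule.smul_mem
        have := IH (p : ℕ) (hmN ▸ hpm) p rfl
        exact Submodule.span_mono (Set.image_mono (Set.Iic_subset_Iic.mpr hpm.le)) this
  exact fun m => key m m rfl

lemma gs_ne_zero (hind : LinearIndependent ℝ b)
    (hGS : ∀ i, bstar i = b i - ∑ l ∈ Finset.Iio i, μ i l • bstar l) :
    ∀ l : Fin j, dotp (bstar l) (bstar l) ≠ 0 := by
  intro l h0
  have hz : bstar l = 0 := dotp_self_eq_zero h0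
  have hb : b l = ∑ m ∈ Finset.Iio l, μ l m • bstar m := by
    have := hGS l
    rw [hz] at this
    have h2 := sub_eq_zero.mp this.symm
    exact h2
  have hmem : b l ∈ Submodule.span ℝ (b '' Set.Iio l) := by
    rw [hb]
    apply Submodule.sum_mem
    intro p hp
    have hpl : p < l := Finset.mem_Iio.mp hp
    apply Submodule.smul_mem
    exact Submodule.span_mono (Set.image_mono (fun x hx => lt_of_le_of_lt hx hpl))
      (gs_mem_span hGS p)
  exact hind.notMem_span_image (by simp : l ∉ Set.Iio l) hmem

end GS

theorem stmt_12 (n j : ℕ) (b bstar : Fin j → (Fin n → ℝ)) (μ : Fin j → Fin j → ℝ)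
    (hind : LinearIndependent ℝ b)
    (hGS : ∀ i, bstar i = b i - ∑ l ∈ Finset.Iio i, μ i l • bstar l)
    (hμ : ∀ i l : Fin j, l < i →
      μ i l = (∑ k, b i k * bstar l k) / (∑ k, bstar l k * bstar l k))
    (L : ℝ) (hL : 0 < L)
    (hmin : ∀ c : Fin j → ℤ, (∑ i, (c i : ℝ) • b i) ≠ 0 →
      L ≤ ∑ k, (∑ i, (c i : ℝ) • b i) k ^ 2) :
    (L / (j : ℝ)) ^ j ≤ ∏ i, ∑ k, bstar i k ^ 2 := by
  rcases Nat.eq_zero_or_pos j with hj | hj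
  · subst hj; simp
  haveI : NeZero j := ⟨hj.ne'⟩
  have hjR : (0 : ℝ) < j := Nat.cast_pos.mpr hj
  -- basic GS facts
  set a : Fin j → ℝ := fun l => dotp (bstar l) (bstar l) with ha
  have ortho := gs_ortho hGS hμ
  have hane : ∀ l, a l ≠ 0 := gs_ne_zero hind hGS
  have hapos : ∀ l, 0 < a l := fun l => (dotp_self_nonneg (bstar l)).lt_of_ne' (hane l)
  have hgoal_eq : (∏ i, ∑ k, bstar i k ^ 2) = ∏ l, a l := by
    apply Finset.prod_congr rfl
    intro l _
    simp [ha, dotp, sq]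
  rw [hgoal_eq]
  -- ν coefficients
  set ν : Fin j → Fin j → ℝ := fun i l => if l < i then μ i l else if l = i then 1 else 0 with hν
  have hb_expand : ∀ i, b i = ∑ l, ν i l • bstar l := by
    intro i
    have h1 : b i = bstar i + ∑ l ∈ Finset.Iio i, μ i l • bstar l := by
      rw [hGS i]; ring
    rw [h1]
    rw [← Finset.sum_subset (Finset.subset_univ (insert i (Finset.Iio i)))]
    · rw [Finset.sum_insert (by simp)]
      have : ν i i = 1 := by simp [hν]
      rw [this, one_smul]
      congr 1
      apply Finset.sum_congr rfl
      intro l hl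
      have : ν i l = μ i l := by simp [hν, Finset.mem_Iio.mp hl]
      rw [this]
    · intro l _ hl
      simp only [Finset.mem_insert, Finset.mem_Iio] at hl
      push_neg at hl
      have : ν i l = 0 := by simp [hν, hl.2, hl.1]
      rw [this, zero_smul]
  -- key norm identity
  have hsum_expand : ∀ c : Fin j → ℝ,
      (∑ i, c i • b i) = ∑ l, (∑ i, c i * ν i l) • bstar l := by
    intro c
    calc ∑ i, c i • b i = ∑ i, ∑ l, (c i * ν i l) • bstar l := by
          simp_rw [hb_expand, Finset.smul_sum, smul_smul]
      _ = ∑ l, ∑ i, (c i * ν i l) • bstar l := Finset.sum_comm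
      _ = ∑ l, (∑ i, c i * ν i l) • bstar l := by
          simp_rw [Finset.sum_smul]
  have hnormsq : ∀ c : Fin j → ℝ,
      (∑ k, (∑ i, c i • b i) k ^ 2) = ∑ l, (∑ i, c i * ν i l) ^ 2 * a l := by
    intro c
    set t : Fin j → ℝ := fun l => ∑ i, c i * ν i l with ht
    have h1 : (∑ k, (∑ i, c i • b i) k ^ 2) = dotp (∑ i, c i • b i) (∑ i, c i • b i) := by
      simp [dotp, sq]
    rw [h1, hsum_expand c, dotp_sum_left]
    apply Finset.sum_congr rfl
    intro l _
    rw [dotp_smul_left]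
    have : dotp (bstar l) (∑ l', t l' • bstar l') = t l * a l := by
      rw [dotp_comm, dotp_sum_left, Finset.sum_eq_single l]
      · rw [dotp_smul_left]
      · intro m _ hml
        rw [dotp_smul_left]
        rcases lt_or_gt_of_ne hml with h | h
        · rw [dotp_comm, ortho l m h, mul_zero]
        · rw [ortho m l h, mul_zero]
      · simp
    rw [this]; ring
  -- Minkowski part
  by_contra hcon
  push_neg at hcon
  set r : ℝ := Real.sqrt (L / j) with hr
  have hrpos : 0 < r := Real.sqrt_pos.mpr (div_pos hL hjR)
  have hr2 : r ^ 2 = L / j := Real.sq_sqrt (div_pos hL hjR).le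
  set u : Fin j → (Fin j → ℝ) := fun i => fun l => ν i l * Real.sqrt (a l) with hu
  have hulin : LinearIndependent ℝ u := by
    rw [Fintype.linearIndependent_iff]
    intro g hg
    have ht0 : ∀ l, (∑ i, g i * ν i l) = 0 := by
      intro l
      have h1 := congrFun hg l
      simp only [Finset.sum_apply, Pi.smul_apply, smul_eq_mul, Pi.zero_apply, hu] at h1
      have h2 : (∑ i, g i * ν i l) * Real.sqrt (a l) = 0 := by
        rw [Finset.sum_mul, ← h1]
        exact Finset.sum_congr rfl fun i _ => by ring
      exact (mul_eq_zero.mp h2).resolve_right (Real.sqrt_ne_zero'.mpr (hapos l)).elim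
    have hb0 : ∑ i, g i • b i = 0 := by
      rw [hsum_expand g]
      exact Finset.sum_eq_zero fun l _ => by rw [ht0 l, zero_smul]
    exact fun i => (Fintype.linearIndependent_iff.mp hind) g hb0 i
  have hcard : Fintype.card (Fin j) = Module.finrank ℝ (Fin j → ℝ) := by simp
  set B : Module.Basis (Fin j) ℝ (Fin j → ℝ) := basisOfLinearIndependentOfCardEqFinrank hulin hcard
    with hBdef
  have hB : ⇑B = u := coe_basisOfLinearIndependentOfCardEqFinrank _ _
  have hdet : (Matrix.of ⇑B).det = ∏ i, Real.sqrt (a i) := by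
    rw [hB]
    rw [Matrix.det_of_lowerTriangular]
    · apply Finset.prod_congr rfl
      intro i _
      have : ν i i = 1 := by simp [hν]
      simp [Matrix.of_apply, hu, this]
    · intro i l hil
      have hil' : (i : Fin j) < l := hil
      have : ν i l = 0 := by
        simp [hν, hil'.ne, not_lt.mpr hil'.le]
        omega
      simp [Matrix.of_apply, hu, this]
  have hdetnn : 0 ≤ (Matrix.of ⇑B).det := by
    rw [hdet]; exact Finset.prod_nonneg fun i _ => Real.sqrt_nonneg _
  have hdetsq : ((Matrix.of ⇑B).det) ^ 2 = ∏ l, a l := by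
    rw [hdet, ← Finset.prod_pow]
    exact Finset.prod_congr rfl fun l _ => Real.sq_sqrt (hapos l).le
  have hdlt : (Matrix.of ⇑B).det < r ^ j := by
    apply lt_of_pow_lt_pow_left₀ 2 (pow_nonneg hrpos.le j)
    rw [hdetsq, ← pow_mul, mul_comm j 2, pow_mul, hr2]
    exact hcon
  set S : Set (Fin j → ℝ) := Set.univ.pi (fun _ => Set.Ioo (-r) r) with hS
  have hconv : Convex ℝ S := convex_pi fun i _ => convex_Ioo _ _
  have hsymm : ∀ x ∈ S, -x ∈ S := by
    intro x hx l hl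
    have h1 := hx l (Set.mem_univ l)
    simp only [Set.mem_Ioo, Pi.neg_apply] at h1 ⊢
    constructor <;> linarith [h1.1, h1.2]
  have hvolS : MeasureTheory.volume S = (ENNReal.ofReal (r - -r)) ^ j := by
    rw [hS, MeasureTheory.volume_pi_pi]
    simp [Real.volume_Ioo]
  have fund := ZSpan.isAddFundamentalDomain' B MeasureTheory.volume
  haveI : Countable ((Submodule.span ℤ (Set.range ⇑B)).toAddSubgroup) :=
    inferInstanceAs (Countable (Submodule.span ℤ (Set.range ⇑B)))
  have hmeas : MeasureTheory.volume (ZSpan.fundamentalDomain B) *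
      2 ^ Module.finrank ℝ (Fin j → ℝ) < MeasureTheory.volume S := by
    rw [ZSpan.volume_fundamentalDomain, hvolS]
    have hfr : Module.finrank ℝ (Fin j → ℝ) = j := by simp
    rw [hfr, abs_of_nonneg hdetnn]
    have h2 : (2 : ENNReal) ^ j = ENNReal.ofReal (2 ^ j) := by
      rw [ENNReal.ofReal_pow zero_le_two]; norm_num
    rw [h2, ← ENNReal.ofReal_mul hdetnn, ← ENNReal.ofReal_pow (by linarith : (0:ℝ) ≤ r - -r)]
    rw [ENNReal.ofReal_lt_ofReal_iff (pow_pos (by linarith : (0:ℝ) < r - -r) j)]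
    have hrr : (r - -r) ^ j = 2 ^ j * r ^ j := by
      rw [show r - -r = 2 * r by ring, mul_pow]
    rw [hrr]
    calc (Matrix.of ⇑B).det * 2 ^ j = 2 ^ j * (Matrix.of ⇑B).det := mul_comm _ _
      _ < 2 ^ j * r ^ j := mul_lt_mul_of_pos_left hdlt (by positivity)
  obtain ⟨x, hx0, hxS⟩ :=
    MeasureTheory.exists_ne_zero_mem_lattice_of_measure_mul_two_pow_lt_measure fund hsymm hconv
      hmeas
  have hxmem : (x : Fin j → ℝ) ∈ Submodule.span ℤ (Set.range ⇑B) := x.2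
  obtain ⟨c, hc⟩ := (Submodule.mem_span_range_iff_exists_fun ℤ).mp hxmem
  set t : Fin j → ℝ := fun l => ∑ i, (c i : ℝ) * ν i l with htdef
  have hxl : ∀ l, ((x : Fin j → ℝ)) l = t l * Real.sqrt (a l) := by
    intro l
    rw [← hc]
    simp only [Finset.sum_apply, Pi.smul_apply, hB, hu, zsmul_eq_mul, htdef, Finset.sum_mul]
    apply Finset.sum_congr rfl
    intro i _
    show (c i : ℝ) * (ν i l * Real.sqrt (a l)) = _
    ring
  have hxsq : ∀ l, ((x : Fin j → ℝ)) l ^ 2 = t l ^ 2 * a l := by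
    intro l
    rw [hxl l, mul_pow, Real.sq_sqrt (hapos l).le]
  have hbne : (∑ i, ((c i : ℝ)) • b i) ≠ 0 := by
    intro h0
    have h1 := hnormsq (fun i => (c i : ℝ))
    rw [h0] at h1
    simp only [Pi.zero_apply, ne_eq, OfNat.ofNat_ne_zero, not_false_eq_true, zero_pow,
      Finset.sum_const_zero] at h1
    have ht0 : ∀ l, t l = 0 := by
      intro l
      have hterm := (Finset.sum_eq_zero_iff_of_nonneg
        (fun l _ => mul_nonneg (sq_nonneg _) (hapos l).le)).mp h1.symm l (Finset.mem_univ l)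
      have := (mul_eq_zero.mp hterm).resolve_right (hane l)
      exact pow_eq_zero_iff (n := 2) (by norm_num) |>.mp this
    apply hx0
    have : (x : Fin j → ℝ) = 0 := by
      funext l
      rw [hxl l, ht0 l, zero_mul]; rfl
    exact Subtype.ext this
  have h1 := hmin c hbne
  have h2 : (∑ k, (∑ i, ((c i : ℝ)) • b i) k ^ 2) = ∑ l, ((x : Fin j → ℝ)) l ^ 2 := by
    rw [hnormsq (fun i => (c i : ℝ))]
    exact Finset.sum_congr rfl fun l _ => (hxsq l).symm
  have h3 : ∑ l, ((x : Fin j → ℝ)) l ^ 2 < ∑ _l : Fin j, (L / j) := by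
    apply Finset.sum_lt_sum_of_nonempty Finset.univ_nonempty
    intro l _
    have hx := hxS l (Set.mem_univ l)
    simp only [Set.mem_Ioo] at hx
    have : ((x : Fin j → ℝ)) l ^ 2 < r ^ 2 := sq_lt_sq' hx.1 hx.2
    rwa [hr2] at this
  have h4 : (∑ _l : Fin j, (L / j)) = L := by
    rw [Finset.sum_const, Finset.card_univ, Fintype.card_fin, nsmul_eq_mul]
    field_simp
  rw [h2] at h1
  rw [h4] at h3
  linarith
end

section
/- Let b_1, …, b_n ∈ ℝ^n be linearly independent vectors with Gram–Schmidt orthogonalization b_1*, …, b_n*. Then every nonzero vector x of the lattice Λ = {c_1 b_1 + ⋯ + c_n b_n : c_1, …, c_n ∈ ℤ} satisfies ‖x‖₂² ≥ min_{1≤i≤n} ‖b_i*‖₂². -/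
open Finset

namespace Stmt14Aux

variable {n : ℕ}

def ip (u v : Fin n → ℝ) : ℝ := ∑ k, u k * v k

lemma ip_comm (u v : Fin n → ℝ) : ip u v = ip v u := by
  unfold ip; exact Finset.sum_congr rfl fun k _ => mul_comm _ _

lemma ip_sub_left (u v w : Fin n → ℝ) : ip (u - v) w = ip u w - ip v w := by
  unfold ip
  rw [← Finset.sum_sub_distrib]
  exact Finset.sum_congr rfl fun k _ => by simp [sub_mul]

lemma ip_sum_left {ι : Type*} (s : Finset ι) (f : ι → (Fin n → ℝ)) (w : Fin n → ℝ) :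
    ip (∑ i ∈ s, f i) w = ∑ i ∈ s, ip (f i) w := by
  unfold ip
  rw [Finset.sum_comm]
  exact Finset.sum_congr rfl fun k _ => by simp [Finset.sum_mul]

lemma ip_smul_left (a : ℝ) (u w : Fin n → ℝ) : ip (a • u) w = a * ip u w := by
  unfold ip
  rw [Finset.mul_sum]
  exact Finset.sum_congr rfl fun k _ => by simp [mul_assoc]

lemma ip_self_nonneg (u : Fin n → ℝ) : 0 ≤ ip u u :=
  Finset.sum_nonneg fun k _ => mul_self_nonneg _

lemma eq_zero_of_ip_self (u : Fin n → ℝ) (h : ip u u = 0) : u = 0 := by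
  have := (Finset.sum_eq_zero_iff_of_nonneg (fun k _ => mul_self_nonneg (u k))).mp h
  funext k
  exact mul_self_eq_zero.mp (this k (Finset.mem_univ k))

lemma ip_zero_right (u : Fin n → ℝ) : ip u 0 = 0 := by simp [ip]

lemma orth (b bstar : Fin n → (Fin n → ℝ)) (μ : Fin n → Fin n → ℝ)
    (hGS : ∀ i, bstar i = b i - ∑ l ∈ Finset.Iio i, μ i l • bstar l)
    (hμ : ∀ i l : Fin n, l < i →
      μ i l = (∑ k, b i k * bstar l k) / (∑ k, bstar l k * bstar l k)) :
    ∀ i l : Fin n, l < i → ip (bstar i) (bstar l) = 0 := by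
  intro i
  induction i using WellFoundedLT.induction with
  | _ i IH =>
    intro l hl
    have hsum : ∑ m ∈ Finset.Iio i, μ i m * ip (bstar m) (bstar l)
        = μ i l * ip (bstar l) (bstar l) := by
      refine Finset.sum_eq_single l (fun m hm hne => ?_) (fun h => absurd (Finset.mem_Iio.mpr hl) h)
      have hmi : m < i := Finset.mem_Iio.mp hm
      rcases lt_or_gt_of_ne hne with hml | hlm
      · rw [ip_comm, IH l hl m hml]; ring
      · rw [IH m hmi l hlm]; ring
    have hexp : ip (bstar i) (bstar l)
        = ip (b i) (bstar l) - μ i l * ip (bstar l) (bstar l) := by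
      rw [hGS i, ip_sub_left, ip_sum_left]
      rw [show (∑ m ∈ Finset.Iio i, ip (μ i m • bstar m) (bstar l))
          = ∑ m ∈ Finset.Iio i, μ i m * ip (bstar m) (bstar l) from
          Finset.sum_congr rfl fun m _ => ip_smul_left _ _ _, hsum]
    by_cases hN : ip (bstar l) (bstar l) = 0
    · have hz : bstar l = 0 := eq_zero_of_ip_self _ hN
      rw [hexp, hz, ip_zero_right, ip_zero_right]; ring
    · rw [hexp, hμ i l hl]
      have : (∑ k, b i k * bstar l k) = ip (b i) (bstar l) := rfl
      have h2 : (∑ k, bstar l k * bstar l k) = ip (bstar l) (bstar l) := rfl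
      rw [this, h2, div_mul_cancel₀ _ hN, sub_self]

lemma span_aux (b bstar : Fin n → (Fin n → ℝ)) (μ : Fin n → Fin n → ℝ)
    (hGS : ∀ i, bstar i = b i - ∑ l ∈ Finset.Iio i, μ i l • bstar l) :
    ∀ i : Fin n, b i - bstar i ∈ Submodule.span ℝ (b '' {l | l < i}) := by
  intro i
  induction i using WellFoundedLT.induction with
  | _ i IH =>
    have h1 : b i - bstar i = ∑ l ∈ Finset.Iio i, μ i l • bstar l := by
      rw [hGS i]; abel
    rw [h1]
    refine Submodule.sum_mem _ fun l hl => ?_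
    have hli : l < i := Finset.mem_Iio.mp hl
    refine Submodule.smul_mem _ _ ?_
    have hbl : b l ∈ Submodule.span ℝ (b '' {m | m < i}) :=
      Submodule.subset_span ⟨l, hli, rfl⟩
    have hsub : Submodule.span ℝ (b '' {m | m < l}) ≤ Submodule.span ℝ (b '' {m | m < i}) :=
      Submodule.span_mono (Set.image_mono fun m hm => lt_trans hm hli)
    have : bstar l = b l - (b l - bstar l) := by abel
    rw [this]
    exact Submodule.sub_mem _ hbl (hsub (IH l hli))

end Stmt14Aux

open Stmt14Aux

theorem stmt_14 (n : ℕ) (hn : 0 < n) (b bstar : Fin n → (Fin n → ℝ))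
    (μ : Fin n → Fin n → ℝ)
    (hind : LinearIndependent ℝ b)
    (hGS : ∀ i, bstar i = b i - ∑ l ∈ Finset.Iio i, μ i l • bstar l)
    (hμ : ∀ i l : Fin n, l < i →
      μ i l = (∑ k, b i k * bstar l k) / (∑ k, bstar l k * bstar l k))
    (c : Fin n → ℤ) (hc : (∑ i, (c i : ℝ) • b i) ≠ 0) :
    Finset.univ.inf' ⟨⟨0, hn⟩, Finset.mem_univ _⟩ (fun i => ∑ k, bstar i k ^ 2) ≤
      ∑ k, (∑ i, (c i : ℝ) • b i) k ^ 2 := by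
  classical
  set x : Fin n → ℝ := ∑ i, (c i : ℝ) • b i with hxdef
  set S : Finset (Fin n) := Finset.univ.filter (fun i => c i ≠ 0) with hS
  have hSne : S.Nonempty := by
    have hex : ∃ i, c i ≠ 0 := by
      by_contra h
      push_neg at h
      exact hc (Finset.sum_eq_zero fun i _ => by simp [h i])
    obtain ⟨i, hi⟩ := hex
    exact ⟨i, Finset.mem_filter.mpr ⟨Finset.mem_univ i, hi⟩⟩
  set j : Fin n := S.max' hSne with hj
  have hcj : c j ≠ 0 := (Finset.mem_filter.mp (S.max'_mem hSne)).2
  have hjmax : ∀ i, j < i → c i = 0 := by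
    intro i hi
    by_contra hci
    exact absurd (S.le_max' i (Finset.mem_filter.mpr ⟨Finset.mem_univ i, hci⟩)) (not_le.mpr hi)
  have horth := orth b bstar μ hGS hμ
  set N : ℝ := ip (bstar j) (bstar j) with hN
  -- N > 0
  have hNpos : 0 < N := by
    rcases lt_or_eq_of_le (ip_self_nonneg (bstar j)) with h | h
    · exact h
    · exfalso
      have hz : bstar j = 0 := eq_zero_of_ip_self _ h.symm
      have : b j ∈ Submodule.span ℝ (b '' {l | l < j}) := by
        have := span_aux b bstar μ hGS j
        rwa [hz, sub_zero] at this
      exact hind.notMem_span_image (by simp) this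
  -- inner products with bstar j
  have hbi : ∀ i : Fin n, i ≤ j → ip (b i) (bstar j) = (if i = j then N else 0) := by
    intro i hij
    have hexp : ip (b i) (bstar j)
        = ip (bstar i) (bstar j) + ∑ l ∈ Finset.Iio i, μ i l * ip (bstar l) (bstar j) := by
      have : b i = bstar i + ∑ l ∈ Finset.Iio i, μ i l • bstar l := by rw [hGS i]; abel
      rw [this]
      have hadd : ip (bstar i + ∑ l ∈ Finset.Iio i, μ i l • bstar l) (bstar j)
          = ip (bstar i) (bstar j) + ip (∑ l ∈ Finset.Iio i, μ i l • bstar l) (bstar j) := by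
        have := ip_sub_left (bstar i + ∑ l ∈ Finset.Iio i, μ i l • bstar l)
          (∑ l ∈ Finset.Iio i, μ i l • bstar l) (bstar j)
        simp only [add_sub_cancel_right] at this
        linarith [this]
      rw [hadd, ip_sum_left]
      congr 1
      exact Finset.sum_congr rfl fun l _ => ip_smul_left _ _ _
    have hsum0 : ∑ l ∈ Finset.Iio i, μ i l * ip (bstar l) (bstar j) = 0 := by
      refine Finset.sum_eq_zero fun l hl => ?_
      have hl' : l < j := lt_of_lt_of_le (Finset.mem_Iio.mp hl) hij
      rw [ip_comm, horth j l hl']; ring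
    rcases lt_or_eq_of_le hij with h | h
    · rw [hexp, hsum0, ip_comm, horth j i h]
      simp [Fin.ne_of_lt h]
    · rw [hexp, hsum0, h]
      simp [hN]
  have hx : ip x (bstar j) = (c j : ℝ) * N := by
    rw [hxdef, ip_sum_left]
    rw [show (∑ i, ip ((c i : ℝ) • b i) (bstar j)) = ∑ i, (c i : ℝ) * ip (b i) (bstar j) from
      Finset.sum_congr rfl fun i _ => ip_smul_left _ _ _]
    rw [Finset.sum_eq_single j]
    · rw [hbi j le_rfl]; simp
    · intro i _ hne
      rcases lt_or_gt_of_ne hne with h | h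
      · rw [hbi i (le_of_lt h)]; simp [Fin.ne_of_lt h]
      · rw [hjmax i h]; simp
    · intro h; exact absurd (Finset.mem_univ j) h
  -- Cauchy-Schwarz
  have hCS : (ip x (bstar j)) ^ 2 ≤ (∑ k, x k ^ 2) * (∑ k, bstar j k ^ 2) := by
    have := Finset.sum_mul_sq_le_sq_mul_sq Finset.univ x (bstar j)
    simpa [ip] using this
  have hNeq : N = ∑ k, bstar j k ^ 2 := by
    rw [hN]; unfold ip; exact Finset.sum_congr rfl fun k _ => (sq (bstar j k)).symm
  have hcj1 : (1 : ℝ) ≤ (c j : ℝ) ^ 2 := by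
    have h1 : (1 : ℤ) ≤ (c j) ^ 2 := by
      have := Int.one_le_abs hcj
      nlinarith [sq_abs (c j)]
    exact_mod_cast h1
  have hfin : N ≤ ∑ k, x k ^ 2 := by
    rw [hx, ← hNeq] at hCS
    nlinarith [hCS, hNpos, mul_le_mul_of_nonneg_right hcj1 (sq_nonneg N)]
  calc Finset.univ.inf' ⟨⟨0, hn⟩, Finset.mem_univ _⟩ (fun i => ∑ k, bstar i k ^ 2)
      ≤ ∑ k, bstar j k ^ 2 := Finset.inf'_le _ (Finset.mem_univ j)
    _ = N := hNeq.symm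
    _ ≤ ∑ k, x k ^ 2 := hfin
end
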